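/- arXiv:1704.02816 — 8 statements merged into one kernel-verified Lean document; each statement's English description precedes it below -/
import Mathlib

section
/- If f : (a,b) → ℝ is convex and differentiable on (a,b), then for every x ∈ (a,b), the pointwise Hölder exponent of f' at x is at most h_f(x) - 1, i.e. h_{f'}(x) ≤ h_f(x) - 1, whenever h_f(x) ≥ 1. -/
open Filter Set
open scoped ENNReal NNReal


/-- The pointwise Hölder exponent of `f` at `x`, computed within the set `s`:
the supremum of all `h ≥ 0` such that there exist a polynomial `P` of degree
strictly less than `h` and a constant `C > 0` with
`|f y - P (y - x)| ≤ C * |y - x| ^ h` for `y` near `x` (within `s`). -/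
noncomputable def holderExpOn (f : ℝ → ℝ) (s : Set ℝ) (x : ℝ) : ℝ≥0∞ :=
  ⨆ (h : ℝ≥0) (_ : ∃ P : Polynomial ℝ, (P.natDegree : ℝ) < (h : ℝ) ∧
      ∃ C > (0:ℝ), ∀ᶠ y in nhdsWithin x s, |f y - P.eval (y - x)| ≤ C * |y - x| ^ (h : ℝ)),
    (h : ℝ≥0∞)


open Polynomial in
noncomputable def antider (P : ℝ[X]) : ℝ[X] :=
  ∑ n ∈ P.support, C (P.coeff n / (n+1)) * X^(n+1)

open Polynomial in
lemma antider_deriv (P : ℝ[X]) : derivative (antider P) = P := by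
  rw [antider, map_sum]
  conv_rhs => rw [P.as_sum_support]
  refine Finset.sum_congr rfl fun n hn => ?_
  rw [derivative_C_mul_X_pow]
  simp only [Nat.add_sub_cancel]
  push_cast
  rw [div_mul_cancel₀ _ (by positivity), C_mul_X_pow_eq_monomial]

open Polynomial in
lemma antider_eval_zero (P : ℝ[X]) : (antider P).eval 0 = 0 := by
  simp [antider, eval_finset_sum]

open Polynomial in
lemma antider_natDegree (P : ℝ[X]) : (antider P).natDegree ≤ P.natDegree + 1 := by
  refine Polynomial.natDegree_sum_le_of_forall_le _ _ fun n hn => ?_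
  calc (C (P.coeff n / (n+1)) * X^(n+1)).natDegree ≤ n + 1 := by
        apply (natDegree_C_mul_le _ _).trans; simp
    _ ≤ P.natDegree + 1 := by
        have := Polynomial.le_natDegree_of_mem_supp n hn; omega

open Polynomial in
lemma key_step (a b x : ℝ) (f : ℝ → ℝ)
    (hconv : ConvexOn ℝ (Set.Ioo a b) f)
    (hdiff : ∀ y ∈ Set.Ioo a b, DifferentiableAt ℝ f y)
    (hx : x ∈ Set.Ioo a b)
    (h : ℝ≥0) (P : ℝ[X]) (hdeg : (P.natDegree : ℝ) < (h : ℝ))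
    (C : ℝ) (hC : 0 < C)
    (hev : ∀ᶠ y in nhdsWithin x (Set.Ioo a b),
      |deriv f y - P.eval (y - x)| ≤ C * |y - x| ^ (h : ℝ)) :
    ∃ Q : ℝ[X], ((Q.natDegree : ℝ) < ((h + 1 : ℝ≥0) : ℝ)) ∧
      ∃ C' > (0:ℝ), ∀ᶠ y in nhdsWithin x (Set.Ioo a b),
        |f y - Q.eval (y - x)| ≤ C' * |y - x| ^ ((h + 1 : ℝ≥0) : ℝ) := by
  have hnw : nhdsWithin x (Set.Ioo a b) = nhds x :=
    nhdsWithin_eq_nhds.2 (isOpen_Ioo.mem_nhds hx)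
  set Q : ℝ[X] := Polynomial.C (f x) + antider P with hQ
  have hQ0 : Q.eval 0 = f x := by simp [hQ, antider_eval_zero]
  have hQd : derivative Q = P := by simp [hQ, antider_deriv]
  refine ⟨Q, ?_, C, hC, ?_⟩
  · push_cast
    have h1 : Q.natDegree ≤ P.natDegree + 1 :=
      (Polynomial.natDegree_add_le _ _).trans (by simp [antider_natDegree P])
    have : (Q.natDegree : ℝ) ≤ (P.natDegree : ℝ) + 1 := by exact_mod_cast h1
    linarith
  · rw [hnw] at hev ⊢
    have hev' := (isOpen_Ioo.eventually_mem hx).and hev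
    rw [Metric.eventually_nhds_iff] at hev' ⊢
    obtain ⟨ε, hε, hball⟩ := hev'
    refine ⟨ε, hε, fun y hy => ?_⟩
    rcases eq_or_ne y x with rfl | hyx
    · simp only [sub_self, hQ0, abs_zero]
      positivity
    -- membership and bounds on the segment
    have hseg : ∀ t ∈ Set.uIcc x y, dist t x < ε := fun t ht => by
      rw [Real.dist_eq]
      calc |t - x| ≤ |y - x| := abs_sub_left_of_mem_uIcc ht
        _ < ε := by rwa [Real.dist_eq] at hy
    have hderiv : ∀ t ∈ Set.uIcc x y,
        HasDerivAt (fun t => f t - Q.eval (t - x))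
          (deriv f t - P.eval (t - x)) t := by
      intro t ht
      have hmem : t ∈ Set.Ioo a b := (hball (hseg t ht)).1
      have h1 : HasDerivAt f (deriv f t) t := (hdiff t hmem).hasDerivAt
      have h2 : HasDerivAt (fun t => Q.eval (t - x))
          (Q.derivative.eval (t - x) * 1) t :=
        by have := (Q.hasDerivAt (t - x)).comp t ((hasDerivAt_id t).sub_const x); exact this
      rw [hQd, mul_one] at h2
      exact h1.sub h2
    have hint : IntervalIntegrable (fun t => deriv f t - P.eval (t - x)) MeasureTheory.volume x y := by
      refine IntervalIntegrable.sub ?_ ?_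
      · refine MonotoneOn.intervalIntegrable ?_
        refine (hconv.monotoneOn_deriv hdiff).mono fun t ht => (hball (hseg t ht)).1
      · exact (Continuous.intervalIntegrable (by fun_prop) _ _)
    have hftc := intervalIntegral.integral_eq_sub_of_hasDerivAt hderiv hint
    rw [sub_self x, hQ0, sub_self, sub_zero] at hftc
    have hbound : ‖∫ t in x..y, (deriv f t - P.eval (t - x))‖ ≤
        (C * |y - x| ^ (h : ℝ)) * |y - x| := by
      refine intervalIntegral.norm_integral_le_of_norm_le_const fun t ht => ?_
      have ht' : t ∈ Set.uIcc x y := uIoc_subset_uIcc ht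
      have hb := (hball (hseg t ht')).2
      rw [Real.norm_eq_abs]
      refine hb.trans ?_
      have h1 : |t - x| ≤ |y - x| := abs_sub_left_of_mem_uIcc ht'
      have h2 : |t - x| ^ (h : ℝ) ≤ |y - x| ^ (h : ℝ) :=
        Real.rpow_le_rpow (abs_nonneg _) h1 h.coe_nonneg
      nlinarith [abs_nonneg (t - x), Real.rpow_nonneg (abs_nonneg (t - x)) (h : ℝ)]
    rw [hftc, Real.norm_eq_abs] at hbound
    refine hbound.trans (le_of_eq ?_)
    push_cast
    rw [mul_assoc, ← Real.rpow_add_one (by simpa [sub_eq_zero] using hyx)]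

theorem deriv_holderExp_le_of_convex
    (a b x : ℝ) (f : ℝ → ℝ)
    (hconv : ConvexOn ℝ (Set.Ioo a b) f)
    (hdiff : ∀ y ∈ Set.Ioo a b, DifferentiableAt ℝ f y)
    (hx : x ∈ Set.Ioo a b)
    (hh : 1 ≤ holderExpOn f (Set.Ioo a b) x) :
    holderExpOn (deriv f) (Set.Ioo a b) x ≤ holderExpOn f (Set.Ioo a b) x - 1 := by
  refine iSup₂_le fun h hp => ?_
  obtain ⟨P, hdeg, C, hC, hev⟩ := hp
  obtain ⟨Q, hQdeg, C', hC', hev'⟩ := key_step a b x f hconv hdiff hx h P hdeg C hC hev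
  have hle : ((h + 1 : ℝ≥0) : ℝ≥0∞) ≤ holderExpOn f (Set.Ioo a b) x :=
    le_iSup₂ (f := fun (h' : ℝ≥0) (_ : ∃ P : Polynomial ℝ, (P.natDegree : ℝ) < (h' : ℝ) ∧
      ∃ C > (0:ℝ), ∀ᶠ y in nhdsWithin x (Set.Ioo a b),
        |f y - P.eval (y - x)| ≤ C * |y - x| ^ (h' : ℝ)) => ((h' : ℝ≥0∞)))
      (h + 1) ⟨Q, hQdeg, C', hC', hev'⟩
  refine (ENNReal.cancel_of_ne (by simp)).le_tsub_of_add_le_right ?_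
  simpa [ENNReal.coe_add] using hle
end

section
/- If f is convex and differentiable on an open interval (a,b) ⊂ ℝ and its pointwise Hölder exponent at some x ∈ (a,b) satisfies h_f(x) ∈ [1,2), then h_f(x) = h_{f'}(x) + 1. -/
open Filter Set
open scoped ENNReal NNReal
open scoped Topology

/-- Admissibility predicate for the Hölder exponent. -/
def HolderAdm (f : ℝ → ℝ) (s : Set ℝ) (x : ℝ) (h : ℝ≥0) : Prop :=
  ∃ P : Polynomial ℝ, (P.natDegree : ℝ) < (h : ℝ) ∧
      ∃ C > (0:ℝ), ∀ᶠ y in nhdsWithin x s, |f y - P.eval (y - x)| ≤ C * |y - x| ^ (h : ℝ)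

/-- Every polynomial has an antiderivative polynomial vanishing at 0. -/
lemma exists_polynomial_antideriv (P : Polynomial ℝ) :
    ∃ Q : Polynomial ℝ, Q.derivative = P ∧ Q.eval 0 = 0 ∧ Q.natDegree ≤ P.natDegree + 1 := by
  refine ⟨∑ n ∈ Finset.range (P.natDegree + 1),
      Polynomial.C (P.coeff n / (n + 1)) * Polynomial.X ^ (n + 1), ?_, ?_, ?_⟩
  · rw [map_sum]
    conv_rhs => rw [P.as_sum_range]
    refine Finset.sum_congr rfl fun n _ => ?_
    rw [Polynomial.derivative_C_mul, Polynomial.derivative_X_pow]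
    rw [← Polynomial.C_mul_X_pow_eq_monomial]
    simp only [Nat.add_sub_cancel, Nat.cast_add, Nat.cast_one]
    rw [← mul_assoc, ← Polynomial.C_mul]
    congr 2
    field_simp
  · simp [Polynomial.eval_finset_sum]
  · refine Polynomial.natDegree_sum_le_of_forall_le _ _ fun n hn => ?_
    exact (Polynomial.natDegree_C_mul_X_pow_le _ _).trans
      (Nat.add_le_add (Finset.mem_range_succ_iff.mp hn) le_rfl)

lemma abs_sub_le_of_mem_uIcc {x y t : ℝ} (ht : t ∈ Set.uIcc x y) : |t - x| ≤ |y - x| := by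
  rcases le_total x y with hxy | hxy
  · rw [Set.uIcc_of_le hxy] at ht
    rw [abs_of_nonneg (by linarith [ht.1]), abs_of_nonneg (by linarith)]
    linarith [ht.2]
  · rw [Set.uIcc_of_ge hxy] at ht
    rw [abs_of_nonpos (by linarith [ht.2]), abs_of_nonpos (by linarith)]
    linarith [ht.1]

/-- Upward direction: if `deriv f` is `C^{h'}` at `x` then `f` is `C^{h'+1}` at `x`. -/
lemma holderAdm_succ (a b x : ℝ) (f : ℝ → ℝ)
    (hconv : ConvexOn ℝ (Set.Ioo a b) f)
    (hdiff : ∀ y ∈ Set.Ioo a b, DifferentiableAt ℝ f y)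
    (hx : x ∈ Set.Ioo a b) (h' : ℝ≥0)
    (H : HolderAdm (deriv f) (Set.Ioo a b) x h') :
    HolderAdm f (Set.Ioo a b) x (h' + 1) := by
  obtain ⟨P, hdeg, C, hC, hev⟩ := H
  have hsmem : Set.Ioo a b ∈ 𝓝 x := isOpen_Ioo.mem_nhds hx
  rw [nhdsWithin_eq_nhds.mpr hsmem] at hev
  have mono : MonotoneOn (deriv f) (Set.Ioo a b) := hconv.monotoneOn_deriv hdiff
  have hmem : ∀ᶠ y in 𝓝 x, y ∈ Set.Ioo a b := isOpen_Ioo.eventually_mem hx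
  obtain ⟨δ, hδ, hball⟩ := Metric.eventually_nhds_iff.mp (hev.and hmem)
  simp only [Real.dist_eq] at hball
  obtain ⟨Q, hQd, hQ0, hQdeg⟩ := exists_polynomial_antideriv P
  refine ⟨Polynomial.C (f x) + Q, ?_, C, hC, ?_⟩
  · calc ((Polynomial.C (f x) + Q).natDegree : ℝ) ≤ (Q.natDegree : ℝ) := by
          have := Polynomial.natDegree_add_le (Polynomial.C (f x)) Q
          simp only [Polynomial.natDegree_C, Nat.max_eq_right (Nat.zero_le _)] at this
          exact_mod_cast this
      _ ≤ (P.natDegree : ℝ) + 1 := by exact_mod_cast hQdeg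
      _ < ((h' + 1 : ℝ≥0) : ℝ) := by push_cast; linarith
  · rw [nhdsWithin_eq_nhds.mpr hsmem, Metric.eventually_nhds_iff]
    refine ⟨δ, hδ, fun y hy => ?_⟩
    rw [Real.dist_eq] at hy
    rcases eq_or_ne y x with rfl | hyx
    · simp only [sub_self, Polynomial.eval_add, Polynomial.eval_C, hQ0, add_zero, abs_zero,
        abs_zero]
      positivity
    · have hsub : Set.uIcc x y ⊆ Set.Ioo a b := fun t ht =>
        (hball (lt_of_le_of_lt (abs_sub_le_of_mem_uIcc ht) hy)).2
      have hasderiv : ∀ t ∈ Set.uIcc x y,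
          HasDerivAt (fun t => f t - Q.eval (t - x)) (deriv f t - P.eval (t - x)) t := by
        intro t ht
        have hd1 := (hdiff t (hsub ht)).hasDerivAt
        have hd2 : HasDerivAt (fun t => Q.eval (t - x)) (P.eval (t - x)) t := by
          have := (Q.hasDerivAt (t - x)).comp t ((hasDerivAt_id t).sub_const x)
          simpa [hQd, Function.comp_def] using this
        exact hd1.sub hd2
      have hint : IntervalIntegrable (fun t => deriv f t - P.eval (t - x))
          MeasureTheory.volume x y := by
        refine ((mono.mono hsub).intervalIntegrable).sub ?_
        exact ((P.continuous).comp (continuous_id.sub continuous_const)).intervalIntegrable _ _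
      have key := intervalIntegral.integral_eq_sub_of_hasDerivAt hasderiv hint
      simp only [sub_self, hQ0, sub_zero] at key
      have normb : ‖∫ t in x..y, (deriv f t - P.eval (t - x))‖ ≤
          (C * |y - x| ^ (h' : ℝ)) * |y - x| := by
        refine intervalIntegral.norm_integral_le_of_norm_le_const fun t ht => ?_
        have ht' : t ∈ Set.uIcc x y := Set.uIoc_subset_uIcc ht
        have htx : |t - x| ≤ |y - x| := abs_sub_le_of_mem_uIcc ht'
        have hgood := (hball (lt_of_le_of_lt htx hy)).1
        rw [Real.norm_eq_abs]
        refine hgood.trans ?_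
        exact mul_le_mul_of_nonneg_left
          (Real.rpow_le_rpow (abs_nonneg _) htx h'.coe_nonneg) hC.le
      rw [key] at normb
      have heq : |f y - (Polynomial.C (f x) + Q).eval (y - x)| =
          ‖f y - Q.eval (y - x) - f x‖ := by
        rw [Real.norm_eq_abs, Polynomial.eval_add, Polynomial.eval_C]
        ring_nf
      rw [heq]
      refine normb.trans (le_of_eq ?_)
      have habs : |y - x| ≠ 0 := abs_ne_zero.mpr (sub_ne_zero.mpr hyx)
      rw [mul_assoc, ← Real.rpow_add_one habs]
      push_cast
      ring_nf

/-- Downward direction: if `f` is `C^h` at `x` with `1 < h < 2` then `deriv f`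
is `C^{h-1}` at `x`. -/
lemma holderAdm_pred (a b x : ℝ) (f : ℝ → ℝ)
    (hconv : ConvexOn ℝ (Set.Ioo a b) f)
    (hdiff : ∀ y ∈ Set.Ioo a b, DifferentiableAt ℝ f y)
    (hx : x ∈ Set.Ioo a b) (h : ℝ≥0)
    (hgt : 1 < (h : ℝ)) (hlt : (h : ℝ) < 2)
    (H : HolderAdm f (Set.Ioo a b) x h) :
    HolderAdm (deriv f) (Set.Ioo a b) x (h - 1) := by
  obtain ⟨P, hdeg, C, hC, hev⟩ := H
  have hsmem : Set.Ioo a b ∈ 𝓝 x := isOpen_Ioo.mem_nhds hx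
  rw [nhdsWithin_eq_nhds.mpr hsmem] at hev
  have hmem : ∀ᶠ y in 𝓝 x, y ∈ Set.Ioo a b := isOpen_Ioo.eventually_mem hx
  obtain ⟨δ, hδ, hball⟩ := Metric.eventually_nhds_iff.mp (hev.and hmem)
  simp only [Real.dist_eq] at hball
  have hdeg2 : P.natDegree < 2 := by exact_mod_cast hdeg.trans hlt
  set p0 := P.coeff 0 with hp0def
  set p1 := P.coeff 1 with hp1def
  have evalP : ∀ t : ℝ, P.eval t = p0 + p1 * t := by
    intro t
    rw [Polynomial.eval_eq_sum_range' hdeg2]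
    simp [Finset.sum_range_succ, hp0def, hp1def]
  have hp0 : p0 = f x := by
    have h0 := (hball (show |x - x| < δ by simpa using hδ)).1
    rw [evalP] at h0
    simp only [sub_self, mul_zero, add_zero, abs_zero] at h0
    rw [Real.zero_rpow (show (h:ℝ) ≠ 0 by positivity), mul_zero] at h0
    have := abs_eq_zero.mp (le_antisymm h0 (abs_nonneg _))
    linarith
  have hbound : ∀ y : ℝ, |y - x| < δ → |f y - f x - p1 * (y - x)| ≤ C * |y - x| ^ (h:ℝ) := by
    intro y hy
    have hb := (hball hy).1
    rw [evalP, hp0] at hb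
    convert hb using 2
    ring
  have hderivx : HasDerivAt f p1 x := by
    rw [hasDerivAt_iff_isLittleO, Asymptotics.isLittleO_iff]
    intro c hc
    have htend : Filter.Tendsto (fun y => C * |y - x| ^ ((h:ℝ) - 1)) (𝓝 x) (𝓝 0) := by
      have ht1 : Filter.Tendsto (fun y : ℝ => |y - x|) (𝓝 x) (𝓝 0) := by
        have : Filter.Tendsto (fun y : ℝ => y - x) (𝓝 x) (𝓝 0) := by
          simpa using (continuous_sub_right x).tendsto x
        simpa using this.abs
      have ht2 : Filter.Tendsto (fun z : ℝ => z ^ ((h:ℝ) - 1)) (𝓝 0) (𝓝 0) := by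
        have := (Real.continuousAt_rpow_const 0 ((h:ℝ) - 1) (Or.inr (by linarith))).tendsto
        simpa [Real.zero_rpow (show (h:ℝ) - 1 ≠ 0 by linarith)] using this
      simpa using ((ht2.comp ht1).const_mul C)
    have hev2 : ∀ᶠ y in 𝓝 x, C * |y - x| ^ ((h:ℝ) - 1) < c := htend.eventually_lt_const hc
    have hev3 : ∀ᶠ y in 𝓝 x, dist y x < δ := Metric.eventually_nhds_iff.mpr ⟨δ, hδ, fun y hy => hy⟩
    filter_upwards [hev2, hev3] with y hy2 hy3
    rw [Real.dist_eq] at hy3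
    rw [Real.norm_eq_abs, smul_eq_mul, Real.norm_eq_abs]
    rcases eq_or_ne y x with rfl | hyx
    · simp
    · have habs : |y - x| ≠ 0 := abs_ne_zero.mpr (sub_ne_zero.mpr hyx)
      have hb := hbound y hy3
      have heq : |f y - f x - (y - x) * p1| = |f y - f x - p1 * (y - x)| := by rw [mul_comm]
      rw [heq]
      refine hb.trans ?_
      have : |y - x| ^ (h:ℝ) = |y - x| ^ ((h:ℝ) - 1) * |y - x| := by
        rw [← Real.rpow_add_one habs]; norm_num
      rw [this, ← mul_assoc]
      exact mul_le_mul_of_nonneg_right hy2.le (abs_nonneg _)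
  have hp1 : deriv f x = p1 := hderivx.deriv
  have hcoe : ((h - 1 : ℝ≥0) : ℝ) = (h:ℝ) - 1 := by
    rw [NNReal.coe_sub (by exact_mod_cast hgt.le)]; simp
  have h2pos : (0:ℝ) < 2 ^ (h:ℝ) := by positivity
  refine ⟨Polynomial.C p1, ?_, C * (2 ^ (h:ℝ) + 1), by positivity, ?_⟩
  · simp only [Polynomial.natDegree_C, Nat.cast_zero]
    rw [hcoe]; linarith
  · rw [nhdsWithin_eq_nhds.mpr hsmem, Metric.eventually_nhds_iff]
    refine ⟨δ / 2, by linarith, fun y hy => ?_⟩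
    rw [Real.dist_eq] at hy
    rw [Polynomial.eval_C, hcoe]
    rcases lt_trichotomy y x with hlt' | heq | hgt'
    · -- y < x
      have ht : (0:ℝ) < x - y := by linarith
      have habs : |y - x| = x - y := by
        rw [abs_of_neg (show y - x < 0 by linarith)]; ring
      have hyδ : |y - x| < δ := by linarith
      have habs2 : |2 * y - x - x| = 2 * (x - y) := by
        rw [show (2 * y - x - x : ℝ) = -(2 * (x - y)) by ring, abs_neg,
          abs_of_pos (by linarith)]
      have huδ : |2 * y - x - x| < δ := by rw [habs2]; rw [habs] at hy; linarith
      have hyI : y ∈ Set.Ioo a b := (hball hyδ).2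
      have huI : (2 * y - x) ∈ Set.Ioo a b := (hball huδ).2
      have hd := hdiff y hyI
      have hu := hconv.deriv_le_slope hyI hx (by linarith) hd
      have hl := hconv.slope_le_deriv huI hyI (by linarith) hd
      rw [slope_def_field] at hu hl
      rw [show x - y = x - y from rfl] at hu
      have hu' : deriv f y * (x - y) ≤ f x - f y := (le_div_iff₀ ht).mp hu
      have hl' : f y - f (2 * y - x) ≤ deriv f y * (x - y) := by
        rw [show y - (2 * y - x) = x - y by ring] at hl
        exact (div_le_iff₀ ht).mp hl
      have hby := hbound y hyδ
      have hbu := hbound (2 * y - x) huδ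
      rw [habs] at hby
      rw [habs2] at hbu
      have hE : (x - y) ^ (h:ℝ) = (x - y) ^ ((h:ℝ) - 1) * (x - y) := by
        rw [← Real.rpow_add_one (ne_of_gt ht)]; norm_num
      have h2t : (2 * (x - y)) ^ (h:ℝ) = 2 ^ (h:ℝ) * (x - y) ^ (h:ℝ) :=
        Real.mul_rpow (by norm_num) ht.le
      rw [h2t, hE] at hbu
      rw [hE] at hby
      set E := (x - y) ^ ((h:ℝ) - 1) with hEdef
      have hEpos : 0 ≤ E := Real.rpow_nonneg (by linarith) _
      rw [abs_le] at hby hbu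
      rw [habs, abs_le]
      constructor
      · have h3 : (p1 - C * (2 ^ (h:ℝ) + 1) * E) * (x - y) ≤ deriv f y * (x - y) := by
          linarith [hl', hby.1, hbu.2]
        have := le_of_mul_le_mul_right h3 ht
        linarith
      · have h3 : deriv f y * (x - y) ≤ (p1 + C * (2 ^ (h:ℝ) + 1) * E) * (x - y) := by
          linarith [hu', hby.1]
        have := le_of_mul_le_mul_right h3 ht
        linarith
    · -- y = x
      rw [heq]
      simp only [sub_self, hp1, abs_zero]
      positivity
    · -- x < y
      have ht : (0:ℝ) < y - x := by linarith
      have habs : |y - x| = y - x := abs_of_pos ht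
      have hyδ : |y - x| < δ := by linarith
      have habs2 : |2 * y - x - x| = 2 * (y - x) := by
        rw [show (2 * y - x - x : ℝ) = 2 * (y - x) by ring, abs_of_pos (by linarith)]
      have hvδ : |2 * y - x - x| < δ := by rw [habs2]; rw [habs] at hy; linarith
      have hyI : y ∈ Set.Ioo a b := (hball hyδ).2
      have hvI : (2 * y - x) ∈ Set.Ioo a b := (hball hvδ).2
      have hd := hdiff y hyI
      have hu := hconv.deriv_le_slope hyI hvI (by linarith) hd
      have hl := hconv.slope_le_deriv hx hyI (by linarith) hd
      rw [slope_def_field] at hu hl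
      have hu' : deriv f y * (y - x) ≤ f (2 * y - x) - f y := by
        rw [show 2 * y - x - y = y - x by ring] at hu
        exact (le_div_iff₀ ht).mp hu
      have hl' : f y - f x ≤ deriv f y * (y - x) := (div_le_iff₀ ht).mp hl
      have hby := hbound y hyδ
      have hbv := hbound (2 * y - x) hvδ
      rw [habs] at hby
      rw [habs2] at hbv
      have hE : (y - x) ^ (h:ℝ) = (y - x) ^ ((h:ℝ) - 1) * (y - x) := by
        rw [← Real.rpow_add_one (ne_of_gt ht)]; norm_num
      have h2t : (2 * (y - x)) ^ (h:ℝ) = 2 ^ (h:ℝ) * (y - x) ^ (h:ℝ) :=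
        Real.mul_rpow (by norm_num) ht.le
      rw [h2t, hE] at hbv
      rw [hE] at hby
      set E := (y - x) ^ ((h:ℝ) - 1) with hEdef
      have hEpos : 0 ≤ E := Real.rpow_nonneg (by linarith) _
      rw [abs_le] at hby hbv
      rw [habs, abs_le]
      constructor
      · have h3 : (p1 - C * (2 ^ (h:ℝ) + 1) * E) * (y - x) ≤ deriv f y * (y - x) := by
          linarith [hl', hby.1]
        have := le_of_mul_le_mul_right h3 ht
        linarith
      · have h3 : deriv f y * (y - x) ≤ (p1 + C * (2 ^ (h:ℝ) + 1) * E) * (y - x) := by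
          linarith [hu', hby.1, hbv.2]
        have := le_of_mul_le_mul_right h3 ht
        linarith

lemma holderExpOn_eq (f : ℝ → ℝ) (s : Set ℝ) (x : ℝ) :
    holderExpOn f s x = ⨆ (h : ℝ≥0) (_ : HolderAdm f s x h), (h : ℝ≥0∞) := rfl

theorem holderExp_eq_deriv_add_one_of_convex
    (a b x : ℝ) (f : ℝ → ℝ)
    (hconv : ConvexOn ℝ (Set.Ioo a b) f)
    (hdiff : ∀ y ∈ Set.Ioo a b, DifferentiableAt ℝ f y)
    (hx : x ∈ Set.Ioo a b)
    (h1 : 1 ≤ holderExpOn f (Set.Ioo a b) x)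
    (h2 : holderExpOn f (Set.Ioo a b) x < 2) :
    holderExpOn f (Set.Ioo a b) x = holderExpOn (deriv f) (Set.Ioo a b) x + 1 := by
  rw [holderExpOn_eq] at *
  rw [holderExpOn_eq (deriv f)]
  apply le_antisymm
  · refine iSup₂_le fun h hadm => ?_
    have hleE : (h : ℝ≥0∞) ≤ ⨆ (h : ℝ≥0) (_ : HolderAdm f (Set.Ioo a b) x h), (h : ℝ≥0∞) :=
      le_iSup₂ (f := fun (h : ℝ≥0) (_ : HolderAdm f (Set.Ioo a b) x h) => (h : ℝ≥0∞)) h hadm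
    have hlt2 : (h : ℝ) < 2 := by
      have : (h : ℝ≥0∞) < 2 := lt_of_le_of_lt hleE h2
      exact_mod_cast this
    by_cases hle1 : (h : ℝ) ≤ 1
    · have : (h : ℝ≥0∞) ≤ 1 := by exact_mod_cast hle1
      exact this.trans le_add_self
    · have hgt : 1 < (h : ℝ) := lt_of_not_ge hle1
      have hadm' := holderAdm_pred a b x f hconv hdiff hx h hgt hlt2 hadm
      have : ((h - 1 : ℝ≥0) : ℝ≥0∞) ≤
          ⨆ (h : ℝ≥0) (_ : HolderAdm (deriv f) (Set.Ioo a b) x h), (h : ℝ≥0∞) :=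
        le_iSup₂ (f := fun (h : ℝ≥0) (_ : HolderAdm (deriv f) (Set.Ioo a b) x h) => (h : ℝ≥0∞))
          (h - 1) hadm'
      have hh : (h : ℝ≥0∞) = ((h - 1 : ℝ≥0) : ℝ≥0∞) + 1 := by
        have h1h : (1 : ℝ≥0) ≤ h := by exact_mod_cast hgt.le
        rw [← ENNReal.coe_one, ← ENNReal.coe_add, tsub_add_cancel_of_le h1h]
      rw [hh]
      exact add_le_add_left this 1
  · by_cases hne : ∃ h' : ℝ≥0, HolderAdm (deriv f) (Set.Ioo a b) x h'
    · rw [ENNReal.biSup_add' hne]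
      refine iSup₂_le fun h' hadm => ?_
      have hadm' := holderAdm_succ a b x f hconv hdiff hx h' hadm
      have : ((h' + 1 : ℝ≥0) : ℝ≥0∞) ≤
          ⨆ (h : ℝ≥0) (_ : HolderAdm f (Set.Ioo a b) x h), (h : ℝ≥0∞) :=
        le_iSup₂ (f := fun (h : ℝ≥0) (_ : HolderAdm f (Set.Ioo a b) x h) => (h : ℝ≥0∞))
          (h' + 1) hadm'
      simpa using this
    · have hz : (⨆ (h : ℝ≥0) (_ : HolderAdm (deriv f) (Set.Ioo a b) x h), (h : ℝ≥0∞)) = 0 := by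
        simp only [ENNReal.iSup_eq_zero]
        intro h'
        intro hadm
        exact absurd ⟨h', hadm⟩ hne
      rw [hz, zero_add]
      exact h1
end

section
/- Let f be convex and differentiable on (a,b) with h_f(x) ∈ [1,2) at some x ∈ (a,b), and set h = h_{f'}(x) < 1. Then for every n there exists x_n with x_n → x such that |f'(x_n) − f'(x)| > |x_n − x|^{h + 1/n}; moreover if x_n > x and x_n' = x + 2(x_n − x), then f(x_n') ≥ f(x) + f'(x)(x_n' − x) + 2^{−(h+1+1/n)}(x_n' − x)^{h+1+1/n}. -/
open Filter Set
open scoped ENNReal NNReal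

lemma le_holderExpOn (g : ℝ → ℝ) (s : Set ℝ) (x : ℝ) (e : ℝ≥0)
    (hprop : ∃ P : Polynomial ℝ, (P.natDegree : ℝ) < (e : ℝ) ∧
      ∃ C > (0:ℝ), ∀ᶠ y in nhdsWithin x s, |g y - P.eval (y - x)| ≤ C * |y - x| ^ (e : ℝ)) :
    (e : ℝ≥0∞) ≤ holderExpOn g s x :=
  le_iSup₂ (f := fun (h : ℝ≥0) (_ : _) => (h : ℝ≥0∞)) e hprop

theorem exists_sequence_of_deriv_holderExp_lt_one
    (a b x h : ℝ) (f : ℝ → ℝ)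
    (hconv : ConvexOn ℝ (Set.Ioo a b) f)
    (hdiff : ∀ y ∈ Set.Ioo a b, DifferentiableAt ℝ f y)
    (hx : x ∈ Set.Ioo a b)
    (hf1 : 1 ≤ holderExpOn f (Set.Ioo a b) x)
    (hf2 : holderExpOn f (Set.Ioo a b) x < 2)
    (hh0 : 0 ≤ h) (hh1 : h < 1)
    (hder : holderExpOn (deriv f) (Set.Ioo a b) x = ENNReal.ofReal h) :
    ∃ xs : ℕ → ℝ, (∀ n, xs n ∈ Set.Ioo a b) ∧
      Filter.Tendsto xs Filter.atTop (nhds x) ∧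
      ∀ n : ℕ, 0 < n →
        |deriv f (xs n) - deriv f x| > |xs n - x| ^ (h + 1 / (n : ℝ)) ∧
        (x < xs n →
          f (x + 2 * (xs n - x)) ≥
            f x + deriv f x * (2 * (xs n - x)) +
              (2:ℝ) ^ (-(h + 1 + 1 / (n : ℝ))) * (2 * (xs n - x)) ^ (h + 1 + 1 / (n : ℝ))) := by
  obtain ⟨hax, hxb⟩ := hx
  have hxIoo : x ∈ Set.Ioo a b := ⟨hax, hxb⟩
  set r : ℕ → ℝ := fun n => min (1 / ((n : ℝ) + 1)) (min ((b - x) / 2) ((x - a) / 2)) with hr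
  have hrpos : ∀ n, 0 < r n := by
    intro n
    refine lt_min (by positivity) (lt_min (by linarith) (by linarith))
  -- Step 1: for each n > 0, frequently |f' y - f' x| > |y - x| ^ (h + 1/n)
  have key : ∀ n : ℕ, 0 < n →
      ∃ᶠ y in nhdsWithin x (Set.Ioo a b),
        |deriv f y - deriv f x| > |y - x| ^ (h + 1 / (n : ℝ)) := by
    intro n hn
    by_contra hc
    rw [Filter.not_frequently] at hc
    have hn' : (0:ℝ) < 1 / (n : ℝ) := by positivity
    have he : (0:ℝ) < h + 1 / (n : ℝ) := by linarith
    set e : ℝ≥0 := ⟨h + 1 / (n : ℝ), le_of_lt he⟩ with hedef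
    have hprop : ∃ P : Polynomial ℝ, (P.natDegree : ℝ) < (e : ℝ) ∧
        ∃ C > (0:ℝ), ∀ᶠ y in nhdsWithin x (Set.Ioo a b),
          |deriv f y - P.eval (y - x)| ≤ C * |y - x| ^ (e : ℝ) := by
      refine ⟨Polynomial.C (deriv f x), ?_, 1, one_pos, ?_⟩
      · simp only [Polynomial.natDegree_C, Nat.cast_zero]
        exact he
      filter_upwards [hc] with y hy
      simp only [Polynomial.eval_C, one_mul]
      exact not_lt.mp hy
    have := le_holderExpOn (deriv f) (Set.Ioo a b) x e hprop
    rw [hder] at this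
    have h1 : (e : ℝ≥0∞) = ENNReal.ofReal (h + 1 / (n : ℝ)) := by
      rw [ENNReal.ofReal, Real.toNNReal_of_nonneg (le_of_lt he)]
      rfl
    rw [h1] at this
    have h2 : ENNReal.ofReal (h + 1 / (n : ℝ)) ≤ ENNReal.ofReal h := this
    rw [ENNReal.ofReal_le_ofReal_iff hh0] at h2
    linarith
  -- Step 2: pick the points
  have pick : ∀ n : ℕ, ∃ y : ℝ, y ∈ Set.Ioo a b ∧ |y - x| < r n ∧
      (0 < n → |deriv f y - deriv f x| > |y - x| ^ (h + 1 / (n : ℝ))) := by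
    intro n
    rcases Nat.eq_zero_or_pos n with rfl | hn
    · exact ⟨x, hxIoo, by simpa using hrpos 0, fun h0 => absurd h0 (lt_irrefl 0)⟩
    · have hball : Metric.ball x (r n) ∈ nhdsWithin x (Set.Ioo a b) :=
        nhdsWithin_le_nhds (Metric.ball_mem_nhds x (hrpos n))
      have hb1 : ∀ᶠ y in nhdsWithin x (Set.Ioo a b), y ∈ Metric.ball x (r n) :=
        Filter.eventually_mem_set.mpr hball
      have hb2 : ∀ᶠ y in nhdsWithin x (Set.Ioo a b), y ∈ Set.Ioo a b :=
        Filter.eventually_mem_set.mpr self_mem_nhdsWithin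
      have hmem := hb1.and hb2
      obtain ⟨y, hy1, ⟨hy2, hy3⟩⟩ := ((key n hn).and_eventually hmem).exists
      exact ⟨y, hy3, by simpa [Real.dist_eq] using hy2, fun _ => hy1⟩
  choose xs hxs1 hxs2 hxs3 using pick
  refine ⟨xs, hxs1, ?_, ?_⟩
  · -- tendsto
    rw [tendsto_iff_dist_tendsto_zero]
    have hle : ∀ n, dist (xs n) x ≤ 1 / ((n : ℝ) + 1) := by
      intro n
      rw [Real.dist_eq]
      exact le_of_lt (lt_of_lt_of_le (hxs2 n) (min_le_left _ _))
    exact squeeze_zero (fun n => dist_nonneg) hle tendsto_one_div_add_atTop_nhds_zero_nat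
  · intro n hn
    refine ⟨hxs3 n hn, ?_⟩
    intro hlt
    set y := xs n with hy
    set e : ℝ := h + 1 / (n : ℝ) with he
    have hepos : (0:ℝ) < e := by
      have : (0:ℝ) < 1 / (n : ℝ) := by positivity
      simp only [he]; linarith
    have hyx : 0 < y - x := sub_pos.mpr hlt
    -- y' := x + 2(y-x) is in Ioo a b
    have hy2b : y - x < (b - x) / 2 := by
      have := lt_of_lt_of_le (hxs2 n) (le_trans (min_le_right _ _) (min_le_left _ _))
      calc y - x ≤ |y - x| := le_abs_self _
        _ < (b - x)/2 := this
    set y' : ℝ := x + 2 * (y - x) with hy'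
    have hy'mem : y' ∈ Set.Ioo a b := by
      constructor
      · simp only [hy']; nlinarith
      · simp only [hy']; nlinarith
    have hymem : y ∈ Set.Ioo a b := hxs1 n
    have hyy' : y < y' := by simp only [hy']; linarith
    -- deriv monotone: deriv f y ≥ deriv f x
    have hmono := hconv.monotoneOn_deriv hdiff hxIoo hymem (le_of_lt hlt)
    have hkey : deriv f y - deriv f x > (y - x) ^ e := by
      have := hxs3 n hn
      rwa [abs_of_pos hyx, abs_of_nonneg (by linarith : (0:ℝ) ≤ deriv f y - deriv f x)] at this
    -- tangent line at x: f y ≥ f x + f' x (y - x)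
    have ht1 : deriv f x ≤ slope f x y := hconv.deriv_le_slope hxIoo hymem hlt (hdiff x hxIoo)
    have ht2 : deriv f y ≤ slope f y y' := hconv.deriv_le_slope hymem hy'mem hyy' (hdiff y hymem)
    rw [slope_def_field] at ht1 ht2
    have hf_y : f y ≥ f x + deriv f x * (y - x) := by
      have h1 : deriv f x * (y - x) ≤ (f y - f x) := by
        have := mul_le_mul_of_nonneg_right ht1 (le_of_lt hyx)
        calc deriv f x * (y - x) ≤ (f y - f x) / (y - x) * (y - x) := this
          _ = f y - f x := div_mul_cancel₀ _ (ne_of_gt hyx)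
      linarith
    have hy'y : y' - y = y - x := by simp only [hy']; ring
    have hf_y' : f y' ≥ f y + deriv f y * (y - x) := by
      have h1 : deriv f y * (y' - y) ≤ f y' - f y := by
        have h2 := mul_le_mul_of_nonneg_right ht2 (by linarith : (0:ℝ) ≤ y' - y)
        calc deriv f y * (y' - y) ≤ (f y' - f y) / (y' - y) * (y' - y) := h2
          _ = f y' - f y := div_mul_cancel₀ _ (by rw [hy'y]; exact ne_of_gt hyx)
      rw [hy'y] at h1; linarith
    -- rpow arithmetic: 2^(-(e+1)) * (2(y-x))^(e+1) = (y-x)^(e+1)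
    have hrpow : (2:ℝ) ^ (-(h + 1 + 1 / (n : ℝ))) * (2 * (y - x)) ^ (h + 1 + 1 / (n : ℝ))
        = (y - x) ^ (e + 1) := by
      have he1 : h + 1 + 1 / (n : ℝ) = e + 1 := by simp only [he]; ring
      rw [he1, Real.mul_rpow (by norm_num) (le_of_lt hyx),
        Real.rpow_neg (by norm_num : (0:ℝ) ≤ 2)]
      have h2 : ((2:ℝ) ^ (e + 1))⁻¹ * ((2:ℝ) ^ (e + 1) * (y - x) ^ (e + 1))
          = (y - x) ^ (e + 1) := by
        rw [← mul_assoc, inv_mul_cancel₀ (ne_of_gt (Real.rpow_pos_of_pos two_pos _)), one_mul]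
      exact h2
    have hpe : (y - x) ^ (e + 1) = (y - x) ^ e * (y - x) := by
      rw [Real.rpow_add hyx, Real.rpow_one]
    have hfinal : (deriv f y - deriv f x) * (y - x) ≥ (y - x) ^ e * (y - x) :=
      mul_le_mul_of_nonneg_right (le_of_lt hkey) (le_of_lt hyx)
    calc f (x + 2 * (y - x)) = f y' := by rw [hy']
      _ ≥ f y + deriv f y * (y - x) := hf_y'
      _ ≥ f x + deriv f x * (y - x) + deriv f y * (y - x) := by linarith
      _ = f x + deriv f x * (2 * (y - x)) + (deriv f y - deriv f x) * (y - x) := by ring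
      _ ≥ f x + deriv f x * (2 * (y - x)) + (y - x) ^ e * (y - x) := by linarith
      _ = f x + deriv f x * (2 * (y - x)) + (y - x) ^ (e + 1) := by rw [hpe]
      _ = f x + deriv f x * (2 * (y - x)) +
          (2:ℝ) ^ (-(h + 1 + 1 / (n : ℝ))) * (2 * (y - x)) ^ (h + 1 + 1 / (n : ℝ)) := by
          rw [hrpow]
end

section
/- If f is convex on an open interval (a,b) ⊂ ℝ and h_f(x) ∈ [1,2) for some x ∈ (a,b), then min(h_{f'_+}(x), h_{f'_-}(x)) ≤ h_f(x) − 1, where f'_+ and f'_- denote the right and left derivatives of f. -/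
open Filter Set
open scoped ENNReal NNReal

/-- The right derivative of `f` at `x`. -/
noncomputable def rightDeriv' (f : ℝ → ℝ) (x : ℝ) : ℝ := derivWithin f (Set.Ioi x) x

/-- The left derivative of `f` at `x`. -/
noncomputable def leftDeriv' (f : ℝ → ℝ) (x : ℝ) : ℝ := derivWithin f (Set.Iio x) x

/-- A convex function on an open interval has a right derivative at every interior point,
and the slope tends to it from the right. -/
lemma convexOn_right_tendsto {a b x : ℝ} {f : ℝ → ℝ}
    (hconv : ConvexOn ℝ (Set.Ioo a b) f) (hx : x ∈ Set.Ioo a b) :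
    DifferentiableWithinAt ℝ f (Set.Ioi x) x ∧
      Tendsto (slope f x) (nhdsWithin x (Set.Ioi x)) (nhds (derivWithin f (Set.Ioi x) x)) := by
  obtain ⟨hax, hxb⟩ := hx
  have hsm := hconv.slope_mono (⟨hax, hxb⟩ : x ∈ Set.Ioo a b)
  have hmono : MonotoneOn (slope f x) (Set.Ioo x b) := by
    intro u hu v hv huv
    exact hsm ⟨⟨hax.trans hu.1, hu.2⟩, ne_of_gt hu.1⟩ ⟨⟨hax.trans hv.1, hv.2⟩, ne_of_gt hv.1⟩ huv
  have hne : (Set.Ioo x b).Nonempty := nonempty_Ioo.mpr hxb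
  have hw : (a + x) / 2 ∈ Set.Ioo a b := ⟨by linarith, by linarith⟩
  have hwx : (a + x) / 2 < x := by linarith
  have hbdd : BddBelow (slope f x '' Set.Ioo x b) := by
    refine ⟨slope f x ((a + x) / 2), ?_⟩
    rintro _ ⟨z, hz, rfl⟩
    exact hsm ⟨hw, ne_of_lt hwx⟩ ⟨⟨hax.trans hz.1, hz.2⟩, ne_of_gt hz.1⟩ (hwx.le.trans hz.1.le)
  have T := hmono.tendsto_nhdsWithin_Ioo_right hne hbdd
  have hd : HasDerivWithinAt f (sInf (slope f x '' Set.Ioo x b)) (Set.Ioi x) x := by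
    rw [hasDerivWithinAt_iff_tendsto_slope' (by simp : x ∉ Set.Ioi x)]
    exact T
  refine ⟨hd.differentiableWithinAt, ?_⟩
  rwa [hd.derivWithin (uniqueDiffWithinAt_Ioi x)]

/-- A convex function on an open interval has a left derivative at every interior point,
and the slope tends to it from the left. -/
lemma convexOn_left_tendsto {a b x : ℝ} {f : ℝ → ℝ}
    (hconv : ConvexOn ℝ (Set.Ioo a b) f) (hx : x ∈ Set.Ioo a b) :
    DifferentiableWithinAt ℝ f (Set.Iio x) x ∧
      Tendsto (slope f x) (nhdsWithin x (Set.Iio x)) (nhds (derivWithin f (Set.Iio x) x)) := by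
  obtain ⟨hax, hxb⟩ := hx
  have hsm := hconv.slope_mono (⟨hax, hxb⟩ : x ∈ Set.Ioo a b)
  have hmono : MonotoneOn (slope f x) (Set.Ioo a x) := by
    intro u hu v hv huv
    exact hsm ⟨⟨hu.1, hu.2.trans hxb⟩, ne_of_lt hu.2⟩ ⟨⟨hv.1, hv.2.trans hxb⟩, ne_of_lt hv.2⟩ huv
  have hne : (Set.Ioo a x).Nonempty := nonempty_Ioo.mpr hax
  have hw : (x + b) / 2 ∈ Set.Ioo a b := ⟨by linarith, by linarith⟩
  have hwx : x < (x + b) / 2 := by linarith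
  have hbdd : BddAbove (slope f x '' Set.Ioo a x) := by
    refine ⟨slope f x ((x + b) / 2), ?_⟩
    rintro _ ⟨z, hz, rfl⟩
    exact hsm ⟨⟨hz.1, hz.2.trans hxb⟩, ne_of_lt hz.2⟩ ⟨hw, ne_of_gt hwx⟩ (hz.2.le.trans hwx.le)
  have T := hmono.tendsto_nhdsWithin_Ioo_left hne hbdd
  have hd : HasDerivWithinAt f (sSup (slope f x '' Set.Ioo a x)) (Set.Iio x) x := by
    rw [hasDerivWithinAt_iff_tendsto_slope' (by simp : x ∉ Set.Iio x)]
    exact T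
  refine ⟨hd.differentiableWithinAt, ?_⟩
  rwa [hd.derivWithin (uniqueDiffWithinAt_Iio x)]

/-- Truncation of a Hölder condition: a Hölder condition of exponent `hh` with a polynomial
implies a Hölder condition of smaller exponent `h' ≤ min hh 1` with the constant `g x`. -/
lemma holder_trunc {g : ℝ → ℝ} {s : Set ℝ} {x : ℝ} (hxs : x ∈ s) {hh : ℝ≥0}
    {P : Polynomial ℝ} {C : ℝ} (hC : 0 < C)
    (hev : ∀ᶠ y in nhdsWithin x s, |g y - P.eval (y - x)| ≤ C * |y - x| ^ (hh : ℝ))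
    {h' : ℝ} (h'0 : 0 < h') (h'le : h' ≤ (hh : ℝ)) (h'1 : h' ≤ 1) :
    ∃ D > (0:ℝ), ∀ᶠ y in nhdsWithin x s, |g y - g x| ≤ D * |y - x| ^ h' := by
  have hhpos : (0:ℝ) < (hh : ℝ) := lt_of_lt_of_le h'0 h'le
  have hx0 : g x = P.eval 0 := by
    have h0 := hev.self_of_nhdsWithin hxs
    simp only [sub_self, abs_zero] at h0
    rw [Real.zero_rpow hhpos.ne'] at h0
    have h0' : |g x - P.eval 0| = 0 := le_antisymm (by linarith) (abs_nonneg _)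
    rwa [abs_eq_zero, sub_eq_zero] at h0'
  obtain ⟨r, hr⟩ : Polynomial.X ∣ (P - Polynomial.C (P.eval 0)) := by
    rw [Polynomial.X_dvd_iff]
    simp [Polynomial.coeff_zero_eq_eval_zero]
  have hM : (0:ℝ) < |r.eval 0| + 1 := by positivity
  have hcont : Tendsto (fun y : ℝ => |r.eval (y - x)|) (nhds x) (nhds |r.eval 0|) := by
    have hc : Continuous fun y : ℝ => |Polynomial.eval (y - x) r| :=
      (r.continuous.comp (continuous_id.sub continuous_const)).abs
    simpa using hc.tendsto x
  have hev1 : ∀ᶠ y in nhds x, |r.eval (y - x)| ≤ |r.eval 0| + 1 :=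
    (hcont.eventually_lt_const (lt_add_one _)).mono fun y hy => hy.le
  have hev2 : ∀ᶠ y in nhds x, |y - x| ≤ 1 := by
    filter_upwards [Metric.ball_mem_nhds x one_pos] with y hy
    rw [Metric.mem_ball, Real.dist_eq] at hy; exact hy.le
  refine ⟨C + (|r.eval 0| + 1), by positivity, ?_⟩
  filter_upwards [hev, ((hev1.and hev2).filter_mono nhdsWithin_le_nhds)] with y hy hy12
  obtain ⟨hy1, hy2⟩ := hy12
  rcases eq_or_ne y x with rfl | hyx
  · simp [Real.zero_rpow h'0.ne']
  · have hu : 0 < |y - x| := abs_pos.mpr (sub_ne_zero.mpr hyx)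
    have e1 : |y - x| ^ (hh : ℝ) ≤ |y - x| ^ h' :=
      Real.rpow_le_rpow_of_exponent_ge hu hy2 h'le
    have e2 : |y - x| ≤ |y - x| ^ h' := by
      nth_rewrite 1 [← Real.rpow_one |y - x|]
      exact Real.rpow_le_rpow_of_exponent_ge hu hy2 h'1
    have hkey : |P.eval (y - x) - P.eval 0| ≤ (|r.eval 0| + 1) * |y - x| := by
      have heq : P.eval (y - x) - P.eval 0 = (y - x) * r.eval (y - x) := by
        have := congrArg (Polynomial.eval (y - x)) hr
        simpa [Polynomial.eval_sub, Polynomial.eval_mul] using this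
      rw [heq, abs_mul, mul_comm]
      exact mul_le_mul_of_nonneg_right hy1 (abs_nonneg _)
    calc |g y - g x| ≤ |g y - P.eval (y - x)| + |P.eval (y - x) - P.eval 0| := by
          rw [hx0]; exact abs_sub_le _ _ _
      _ ≤ C * |y - x| ^ (hh : ℝ) + (|r.eval 0| + 1) * |y - x| := add_le_add hy hkey
      _ ≤ C * |y - x| ^ h' + (|r.eval 0| + 1) * |y - x| ^ h' :=
          add_le_add (mul_le_mul_of_nonneg_left e1 hC.le)
            (mul_le_mul_of_nonneg_left e2 hM.le)
      _ = (C + (|r.eval 0| + 1)) * |y - x| ^ h' := (add_mul _ _ _).symm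

set_option maxHeartbeats 2000000 in
theorem min_oneSided_holderExp_le_of_convex
    (a b x : ℝ) (f : ℝ → ℝ)
    (hconv : ConvexOn ℝ (Set.Ioo a b) f)
    (hx : x ∈ Set.Ioo a b)
    (h1 : 1 ≤ holderExpOn f (Set.Ioo a b) x)
    (h2 : holderExpOn f (Set.Ioo a b) x < 2) :
    min (holderExpOn (rightDeriv' f) (Set.Ioo a b) x)
        (holderExpOn (leftDeriv' f) (Set.Ioo a b) x)
      ≤ holderExpOn f (Set.Ioo a b) x - 1 := by
  obtain ⟨hax, hxb⟩ := hx
  have hx : x ∈ Set.Ioo a b := ⟨hax, hxb⟩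
  by_contra hcon
  push_neg at hcon
  rw [lt_min_iff] at hcon
  obtain ⟨hcR, hcL⟩ := hcon
  set H := holderExpOn f (Set.Ioo a b) x with hHdef
  have HneTop : H ≠ ⊤ := h2.ne_top
  have Ht_ne : H - 1 ≠ ⊤ := ne_top_of_le_ne_top HneTop tsub_le_self
  -- extract admissible exponents above H - 1 for the one-sided derivatives
  have extract : ∀ g : ℝ → ℝ, H - 1 < holderExpOn g (Set.Ioo a b) x →
      ∃ h : ℝ≥0, H - 1 < (h : ℝ≥0∞) ∧
        ∃ P : Polynomial ℝ, (P.natDegree : ℝ) < (h : ℝ) ∧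
          ∃ C > (0:ℝ), ∀ᶠ y in nhdsWithin x (Set.Ioo a b),
            |g y - P.eval (y - x)| ≤ C * |y - x| ^ (h : ℝ) := by
    intro g hg
    rw [holderExpOn, lt_iSup_iff] at hg
    obtain ⟨h, hh⟩ := hg
    by_cases hc : ∃ P : Polynomial ℝ, (P.natDegree : ℝ) < (h : ℝ) ∧
        ∃ C > (0:ℝ), ∀ᶠ y in nhdsWithin x (Set.Ioo a b),
          |g y - P.eval (y - x)| ≤ C * |y - x| ^ (h : ℝ)
    · rw [iSup_pos hc] at hh
      exact ⟨h, hh, hc⟩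
    · rw [iSup_neg hc] at hh
      exact absurd hh (by simp)
  obtain ⟨hp, hpgt, Pp, hPpdeg, Cp0, hCp0, hevp0⟩ := extract _ hcR
  obtain ⟨hm, hmgt, Pm, hPmdeg, Cm0, hCm0, hevm0⟩ := extract _ hcL
  -- real versions
  have htr : (H - 1).toReal = H.toReal - 1 := by
    rw [ENNReal.toReal_sub_of_le h1 HneTop]; simp
  have hHr1 : (1:ℝ) ≤ H.toReal := by
    have := ENNReal.toReal_mono HneTop h1
    simpa using this
  have hHr2 : H.toReal < 2 := by
    have := (ENNReal.toReal_lt_toReal HneTop (by norm_num : (2:ℝ≥0∞) ≠ ⊤)).mpr h2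
    simpa using this
  have htrhp : (H - 1).toReal < (hp : ℝ) := by
    have := (ENNReal.toReal_lt_toReal Ht_ne ENNReal.coe_ne_top).mpr hpgt
    simpa using this
  have htrhm : (H - 1).toReal < (hm : ℝ) := by
    have := (ENNReal.toReal_lt_toReal Ht_ne ENNReal.coe_ne_top).mpr hmgt
    simpa using this
  have htr1 : (H - 1).toReal < 1 := by rw [htr]; linarith
  set h' : ℝ := min (min (hp : ℝ) (hm : ℝ)) 1 with hh'def
  have hh'tr : (H - 1).toReal < h' := lt_min (lt_min htrhp htrhm) htr1
  have hh'0 : 0 < h' := lt_of_le_of_lt ENNReal.toReal_nonneg hh'tr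
  have hh'p : h' ≤ (hp : ℝ) := le_trans (min_le_left _ _) (min_le_left _ _)
  have hh'm : h' ≤ (hm : ℝ) := le_trans (min_le_left _ _) (min_le_right _ _)
  have hh'1 : h' ≤ 1 := min_le_right _ _
  -- truncated Hölder conditions for the one-sided derivatives
  obtain ⟨Cp, hCp, hevp⟩ := holder_trunc hx hCp0 hevp0 hh'0 hh'p hh'1
  obtain ⟨Cm, hCm, hevm⟩ := holder_trunc hx hCm0 hevm0 hh'0 hh'm hh'1
  -- one-sided differentiability everywhere
  have hdiffR : ∀ y ∈ Set.Ioo a b, DifferentiableWithinAt ℝ f (Set.Ioi y) y :=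
    fun y hy => (convexOn_right_tendsto hconv hy).1
  have hdiffL : ∀ y ∈ Set.Ioo a b, DifferentiableWithinAt ℝ f (Set.Iio y) y :=
    fun y hy => (convexOn_left_tendsto hconv hy).1
  have hTR := (convexOn_right_tendsto hconv hx).2
  have hTL := (convexOn_left_tendsto hconv hx).2
  have hsm := hconv.slope_mono hx
  -- leftDeriv ≤ rightDeriv
  have hLR : leftDeriv' f x ≤ rightDeriv' f x := by
    have step : ∀ z ∈ Set.Ioo x b, leftDeriv' f x ≤ slope f x z := by
      intro z hz
      refine le_of_tendsto hTL ?_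
      filter_upwards [Ioo_mem_nhdsLT hax] with w hw
      exact hsm ⟨⟨hw.1, hw.2.trans hxb⟩, ne_of_lt hw.2⟩
        ⟨⟨hax.trans hz.1, hz.2⟩, ne_of_gt hz.1⟩ (hw.2.le.trans hz.1.le)
    refine ge_of_tendsto hTR ?_
    filter_upwards [Ioo_mem_nhdsGT hxb] with z hz
    exact step z hz
  -- rightDeriv ≤ leftDeriv (using the Hölder condition for rightDeriv')
  have hevp' : ∀ᶠ y in nhdsWithin x (Set.Iio x),
      |rightDeriv' f y - rightDeriv' f x| ≤ Cp * |y - x| ^ h' := by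
    rw [← nhdsWithin_Ioo_eq_nhdsLT hax]
    exact hevp.filter_mono (nhdsWithin_mono x (Ioo_subset_Ioo_right hxb.le))
  have htend0 : Tendsto (fun y : ℝ => Cp * |y - x| ^ h') (nhdsWithin x (Set.Iio x)) (nhds 0) := by
    have hc : ContinuousAt (fun u : ℝ => u ^ h') 0 :=
      Real.continuousAt_rpow_const 0 h' (Or.inr hh'0.le)
    have habs : Tendsto (fun y : ℝ => |y - x|) (nhds x) (nhds 0) := by
      have hca : Continuous fun y : ℝ => |y - x| := (continuous_id.sub continuous_const).abs
      simpa using hca.tendsto x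
    have := (hc.tendsto.comp habs).const_mul Cp
    simp only [Function.comp, Real.zero_rpow hh'0.ne', mul_zero] at this
    exact this.mono_left nhdsWithin_le_nhds
  have hRL : rightDeriv' f x ≤ leftDeriv' f x := by
    have hev3 : ∀ᶠ y in nhdsWithin x (Set.Iio x),
        rightDeriv' f x - leftDeriv' f x ≤ Cp * |y - x| ^ h' := by
      filter_upwards [hevp', Ioo_mem_nhdsLT hax] with y hy hymem
      have hys : y ∈ Set.Ioo a b := ⟨hymem.1, hymem.2.trans hxb⟩
      have s1 : rightDeriv' f y ≤ slope f y x :=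
        hconv.rightDeriv_le_slope hys hx hymem.2 (hdiffR y hys)
      have s2 : slope f y x ≤ leftDeriv' f x :=
        hconv.slope_le_leftDeriv hys hx hymem.2 (hdiffL x hx)
      have s3 : rightDeriv' f x - Cp * |y - x| ^ h' ≤ rightDeriv' f y := by
        have := abs_le.mp hy
        linarith [this.1]
      linarith
    have := ge_of_tendsto htend0 hev3
    linarith
  have hc_eq : leftDeriv' f x = rightDeriv' f x := le_antisymm hLR hRL
  set c : ℝ := rightDeriv' f x with hcdef
  -- admissibility of exponent 1 + h' for f
  set P : Polynomial ℝ := Polynomial.C c * Polynomial.X + Polynomial.C (f x) with hPdef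
  have hPeval : ∀ u : ℝ, P.eval u = c * u + f x := by intro u; simp [hPdef]
  have hfinal : ∀ᶠ y in nhdsWithin x (Set.Ioo a b),
      |f y - P.eval (y - x)| ≤ (Cp + Cm) * |y - x| ^ (1 + h') := by
    filter_upwards [hevp, hevm, self_mem_nhdsWithin] with y hyp hym hys
    rcases lt_trichotomy y x with hlt | heq | hgt
    · -- y < x : use right derivative bounds
      have hu : 0 < |y - x| := abs_pos.mpr (sub_ne_zero.mpr hlt.ne)
      have s1 : rightDeriv' f y ≤ slope f y x :=
        hconv.rightDeriv_le_slope hys hx hlt (hdiffR y hys)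
      have s2 : slope f y x ≤ leftDeriv' f x :=
        hconv.slope_le_leftDeriv hys hx hlt (hdiffL x hx)
      have s3 : c - Cp * |y - x| ^ h' ≤ rightDeriv' f y := by
        have := (abs_le.mp hyp).1; linarith
      rw [slope_def_field] at s1 s2
      have hxy : 0 < x - y := by linarith
      have hne : x - y ≠ 0 := ne_of_gt hxy
      have d1 : (c - Cp * |y - x| ^ h') * (x - y) ≤ f x - f y := by
        calc (c - Cp * |y - x| ^ h') * (x - y)
            ≤ (f x - f y) / (x - y) * (x - y) :=
              mul_le_mul_of_nonneg_right (le_trans s3 s1) hxy.le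
          _ = f x - f y := by field_simp
      have d2 : f x - f y ≤ c * (x - y) := by
        rw [hc_eq] at s2
        calc f x - f y = (f x - f y) / (x - y) * (x - y) := by field_simp
          _ ≤ c * (x - y) := mul_le_mul_of_nonneg_right s2 hxy.le
      have habs : |y - x| = x - y := by rw [abs_sub_comm]; exact abs_of_pos hxy
      have hrpow : |y - x| ^ (1 + h') = |y - x| * |y - x| ^ h' := by
        rw [Real.rpow_add hu, Real.rpow_one]
      have hB : (0:ℝ) ≤ |y - x| ^ (1 + h') := Real.rpow_nonneg (abs_nonneg _) _
      have hEq : Cp * |y - x| ^ h' * (x - y) = Cp * |y - x| ^ (1 + h') := by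
        rw [hrpow, ← habs]; ring
      rw [hPeval]
      refine abs_le.mpr ⟨?_, ?_⟩
      · have h7 : 0 ≤ f y - (c * (y - x) + f x) := by nlinarith [d2]
        nlinarith [hCm.le, hCp.le, hB]
      · have h5 : f y - (c * (y - x) + f x) ≤ Cp * |y - x| ^ h' * (x - y) := by
          nlinarith [d1]
        rw [hEq] at h5
        nlinarith [hCm.le, hB]
    · subst heq
      simp [hPeval, Real.zero_rpow (by positivity : (1:ℝ) + h' ≠ 0)]
    · -- x < y : use left derivative bounds
      have hu : 0 < |y - x| := abs_pos.mpr (sub_ne_zero.mpr hgt.ne')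
      have s1 : rightDeriv' f x ≤ slope f x y :=
        hconv.rightDeriv_le_slope hx hys hgt (hdiffR x hx)
      have s2 : slope f x y ≤ leftDeriv' f y :=
        hconv.slope_le_leftDeriv hx hys hgt (hdiffL y hys)
      have s3 : leftDeriv' f y ≤ c + Cm * |y - x| ^ h' := by
        have := (abs_le.mp hym).2; rw [hc_eq] at this; linarith
      rw [slope_def_field] at s1 s2
      have hxy : 0 < y - x := by linarith
      have hne : y - x ≠ 0 := ne_of_gt hxy
      have d1 : c * (y - x) ≤ f y - f x := by
        calc c * (y - x) ≤ (f y - f x) / (y - x) * (y - x) :=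
              mul_le_mul_of_nonneg_right s1 hxy.le
          _ = f y - f x := by field_simp
      have d2 : f y - f x ≤ (c + Cm * |y - x| ^ h') * (y - x) := by
        calc f y - f x = (f y - f x) / (y - x) * (y - x) := by field_simp
          _ ≤ (c + Cm * |y - x| ^ h') * (y - x) :=
              mul_le_mul_of_nonneg_right (le_trans s2 s3) hxy.le
      have habs : |y - x| = y - x := abs_of_pos hxy
      have hrpow : |y - x| ^ (1 + h') = |y - x| * |y - x| ^ h' := by
        rw [Real.rpow_add hu, Real.rpow_one]
      have hB : (0:ℝ) ≤ |y - x| ^ (1 + h') := Real.rpow_nonneg (abs_nonneg _) _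
      have hEq : Cm * |y - x| ^ h' * (y - x) = Cm * |y - x| ^ (1 + h') := by
        rw [hrpow, habs]; ring
      rw [hPeval]
      refine abs_le.mpr ⟨?_, ?_⟩
      · have h7 : 0 ≤ f y - (c * (y - x) + f x) := by nlinarith [d1]
        nlinarith [hCm.le, hCp.le, hB]
      · have h5 : f y - (c * (y - x) + f x) ≤ Cm * |y - x| ^ h' * (y - x) := by
          nlinarith [d2]
        rw [hEq] at h5
        nlinarith [hCp.le, hB]
  -- conclude admissibility and contradiction
  set q : ℝ≥0 := ⟨1 + h', by positivity⟩ with hqdef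
  have hqcoe : ((q : ℝ≥0) : ℝ) = 1 + h' := rfl
  have hadm : ∃ P : Polynomial ℝ, (P.natDegree : ℝ) < (q : ℝ) ∧
      ∃ C > (0:ℝ), ∀ᶠ y in nhdsWithin x (Set.Ioo a b),
        |f y - P.eval (y - x)| ≤ C * |y - x| ^ (q : ℝ) := by
    refine ⟨P, ?_, Cp + Cm, by positivity, by rw [hqcoe]; exact hfinal⟩
    rw [hqcoe]
    have : P.natDegree ≤ 1 := Polynomial.natDegree_linear_le
    calc (P.natDegree : ℝ) ≤ 1 := by exact_mod_cast this
      _ < 1 + h' := by linarith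
  have hle : ((q : ℝ≥0∞)) ≤ H := by
    rw [hHdef, holderExpOn]
    exact le_iSup₂ (f := fun (h : ℝ≥0)
      (_ : ∃ P : Polynomial ℝ, (P.natDegree : ℝ) < (h : ℝ) ∧
        ∃ C > (0:ℝ), ∀ᶠ y in nhdsWithin x (Set.Ioo a b),
          |f y - P.eval (y - x)| ≤ C * |y - x| ^ (h : ℝ)) => (h : ℝ≥0∞)) q hadm
  have : (1 : ℝ) + h' ≤ H.toReal := by
    have := ENNReal.toReal_mono HneTop hle
    rwa [ENNReal.coe_toReal, hqcoe] at this
  rw [htr] at hh'tr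
  linarith
end

section
/- Let g : [0,1] → ℝ be a monotone function and 0 ≤ h ≤ 1. Then the Hausdorff dimension of the set E_g^≤(h) = {x ∈ [0,1] : h_g(x) ≤ h} is at most h. -/
open Filter Set
open scoped ENNReal NNReal

open Metric MeasureTheory
open scoped Topology

lemma frostman_cover {μ : Measure ℝ} {α : ℝ} {A : Set ℝ}
    (hA : ∀ x ∈ A, ∀ ε > (0:ℝ), ∃ r, 0 < r ∧ r ≤ ε ∧
      ENNReal.ofReal (r ^ α) ≤ μ (closedBall x r)) :
    ∀ δ > (0:ℝ), ∃ (u : Set ℝ) (rad : ℝ → ℝ), u.Countable ∧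
      (∀ b ∈ u, 0 < rad b ∧ rad b ≤ δ ∧ ENNReal.ofReal (rad b ^ α) ≤ μ (closedBall b (rad b))) ∧
      (A ⊆ ⋃ b ∈ u, closedBall b (4 * rad b)) ∧
      (u.PairwiseDisjoint fun b => closedBall b (rad b)) := by
  intro δ hδ
  have hch : ∀ a : ℝ, ∃ r, a ∈ A → (0 < r ∧ r ≤ δ ∧
      ENNReal.ofReal (r ^ α) ≤ μ (closedBall a r)) := by
    intro a
    by_cases ha : a ∈ A
    · obtain ⟨r, h1, h2, h3⟩ := hA a ha δ hδ
      exact ⟨r, fun _ => ⟨h1, h2, h3⟩⟩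
    · exact ⟨δ, fun h => absurd h ha⟩
  choose rad hrad using hch
  obtain ⟨u, huA, hdisj, hcov⟩ :=
    Vitali.exists_disjoint_subfamily_covering_enlargement_closedBall A id rad δ
      (fun a ha => (hrad a ha).2.1) 4 (by norm_num)
  have hradu : ∀ b ∈ u, 0 < rad b ∧ rad b ≤ δ ∧
      ENNReal.ofReal (rad b ^ α) ≤ μ (closedBall b (rad b)) := fun b hb => hrad b (huA hb)
  have hcount : u.Countable := by
    have hq : ∀ b : u, ∃ q : ℚ, (q : ℝ) ∈ closedBall (b : ℝ) (rad b) := by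
      intro b
      obtain ⟨q, hq1, hq2⟩ := exists_rat_btwn (sub_lt_self (b : ℝ) (hradu b b.2).1)
      refine ⟨q, by rw [mem_closedBall, Real.dist_eq]; rw [abs_sub_le_iff]; constructor <;> linarith⟩
    choose q hq using hq
    have hinj : Function.Injective q := by
      intro i j hij
      by_contra hne
      have hne' : (i : ℝ) ≠ (j : ℝ) := Subtype.coe_injective.ne hne
      exact (Set.disjoint_left.1 (hdisj i.2 j.2 hne')) (hq i) (hij ▸ hq j)
    exact Set.countable_coe_iff.mp hinj.countable
  refine ⟨u, rad, hcount, hradu, fun a ha => ?_, hdisj⟩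
  obtain ⟨b, hb, hsub⟩ := hcov a ha
  exact Set.mem_biUnion hb (hsub (mem_closedBall_self (hrad a ha).1.le))

lemma frostman {μ : Measure ℝ} {α : ℝ} (hα : 0 < α) {A : Set ℝ}
    (hA : ∀ x ∈ A, ∀ ε > (0:ℝ), ∃ r, 0 < r ∧ r ≤ ε ∧
      ENNReal.ofReal (r ^ α) ≤ μ (closedBall x r)) :
    μH[α] A ≤ ENNReal.ofReal (8 ^ α) * μ univ := by
  have cov := frostman_cover hA
  have hc : ∀ n : ℕ, ∃ (u : Set ℝ) (rad : ℝ → ℝ), u.Countable ∧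
      (∀ b ∈ u, 0 < rad b ∧ rad b ≤ 1/(n+1) ∧
        ENNReal.ofReal (rad b ^ α) ≤ μ (closedBall b (rad b))) ∧
      (A ⊆ ⋃ b ∈ u, closedBall b (4 * rad b)) ∧
      (u.PairwiseDisjoint fun b => closedBall b (rad b)) :=
    fun n => cov _ (by positivity)
  choose u rad hcount hrad hcov hdisj using hc
  haveI : ∀ n, Countable ↥(u n) := fun n => (hcount n).to_subtype
  have key := MeasureTheory.Measure.hausdorffMeasure_le_liminf_tsum (X := ℝ) α A (l := atTop)
      (fun n : ℕ => ENNReal.ofReal (8 * (1/(n+1))))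
      (by
        have h0 : Tendsto (fun n : ℕ => 8 * (1/((n:ℝ)+1))) atTop (𝓝 (8 * 0)) :=
          tendsto_one_div_add_atTop_nhds_zero_nat.const_mul 8
        rw [mul_zero] at h0
        have := (ENNReal.continuous_ofReal.tendsto 0).comp h0
        rw [ENNReal.ofReal_zero] at this
        exact this)
      (fun n (b : u n) => closedBall (b : ℝ) (4 * rad n b))
      (by
        filter_upwards with n
        intro b
        have hr0 := (hrad n b b.2).1
        have hr1 := (hrad n b b.2).2.1
        have h1 : (0:ℝ) ≤ 4 * rad n b := by positivity
        calc EMetric.diam (closedBall (b:ℝ) (4 * rad n b))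
            ≤ 2 * ENNReal.ofReal (4 * rad n b) := by
              rw [← Metric.emetric_closedBall (x := (b:ℝ)) h1]
              exact EMetric.diam_closedBall
          _ = ENNReal.ofReal (8 * rad n b) := by
              rw [show (8 : ℝ) * rad n b = 2 * (4 * rad n b) by ring,
                ENNReal.ofReal_mul (p := 2) (by norm_num), ENNReal.ofReal_ofNat]
          _ ≤ ENNReal.ofReal (8 * (1/(n+1))) := by
              apply ENNReal.ofReal_le_ofReal; nlinarith)
      (by
        filter_upwards with n
        intro x hx
        obtain ⟨b, hb, hxb⟩ := Set.mem_iUnion₂.mp (hcov n hx)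
        exact Set.mem_iUnion.mpr ⟨⟨b, hb⟩, hxb⟩)
  refine key.trans (Filter.liminf_le_of_frequently_le' (Frequently.of_forall fun n => ?_))
  calc ∑' (b : u n), EMetric.diam (closedBall (b:ℝ) (4 * rad n b)) ^ α
      ≤ ∑' (b : u n), ENNReal.ofReal (8 ^ α) * ENNReal.ofReal (rad n b ^ α) := by
        apply ENNReal.tsum_le_tsum
        intro b
        have hr0 := (hrad n b b.2).1
        have h1 : (0:ℝ) ≤ 4 * rad n b := by positivity
        have hd : EMetric.diam (closedBall (b:ℝ) (4 * rad n b))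
            ≤ ENNReal.ofReal (8 * rad n b) := by
          calc EMetric.diam (closedBall (b:ℝ) (4 * rad n b))
              ≤ 2 * ENNReal.ofReal (4 * rad n b) := by
                rw [← Metric.emetric_closedBall (x := (b:ℝ)) h1]
                exact EMetric.diam_closedBall
            _ = ENNReal.ofReal (8 * rad n b) := by
                rw [show (8 : ℝ) * rad n b = 2 * (4 * rad n b) by ring,
                  ENNReal.ofReal_mul (p := 2) (by norm_num), ENNReal.ofReal_ofNat]
        calc EMetric.diam (closedBall (b:ℝ) (4 * rad n b)) ^ α
            ≤ ENNReal.ofReal (8 * rad n b) ^ α := ENNReal.rpow_le_rpow hd hα.le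
          _ = ENNReal.ofReal ((8 * rad n b) ^ α) :=
              ENNReal.ofReal_rpow_of_pos (by positivity)
          _ = ENNReal.ofReal (8 ^ α * rad n b ^ α) := by
              rw [Real.mul_rpow (by norm_num) hr0.le]
          _ = ENNReal.ofReal (8 ^ α) * ENNReal.ofReal (rad n b ^ α) := by
              rw [ENNReal.ofReal_mul (by positivity)]
    _ = ENNReal.ofReal (8 ^ α) * ∑' (b : u n), ENNReal.ofReal (rad n b ^ α) :=
        ENNReal.tsum_mul_left
    _ ≤ ENNReal.ofReal (8 ^ α) * μ univ := by
        apply mul_le_mul_right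
        calc ∑' (b : u n), ENNReal.ofReal (rad n b ^ α)
            ≤ ∑' (b : u n), μ (closedBall (b:ℝ) (rad n b)) :=
              ENNReal.tsum_le_tsum fun b => (hrad n b b.2).2.2
          _ = μ (⋃ b : u n, closedBall (b:ℝ) (rad n b)) := by
              have hmu : μ (⋃ b : u n, closedBall (b:ℝ) (rad n b))
                  = ∑' (b : u n), μ (closedBall (b:ℝ) (rad n b)) :=
                measure_iUnion
                  (fun i j hij => (hdisj n) i.2 j.2 (Subtype.coe_injective.ne hij))
                  (fun b => measurableSet_closedBall)
              exact hmu.symm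
          _ ≤ μ univ := measure_mono (subset_univ _)

lemma holderExpOn_le_neg (f : ℝ → ℝ) (s : Set ℝ) (x : ℝ) :
    holderExpOn f s x ≤ holderExpOn (fun y => -f y) s x := by
  refine iSup₂_le fun h' hcond => ?_
  obtain ⟨P, h1, C, hC, hev⟩ := hcond
  refine le_iSup₂ (f := fun (h : ℝ≥0) (_ : ∃ P : Polynomial ℝ,
    (P.natDegree : ℝ) < (h : ℝ) ∧ ∃ C > (0:ℝ), ∀ᶠ y in nhdsWithin x s,
      |(fun y => -f y) y - P.eval (y - x)| ≤ C * |y - x| ^ (h : ℝ)) => (h : ℝ≥0∞)) h' ?_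
  refine ⟨-P, by simpa [Polynomial.natDegree_neg] using h1, C, hC, ?_⟩
  filter_upwards [hev] with y hy
  have heq : -f y - (-P).eval (y - x) = -(f y - P.eval (y - x)) := by
    simp [Polynomial.eval_neg]; ring
  show |-f y - (-P).eval (y - x)| ≤ _
  rw [heq, abs_neg]
  exact hy

lemma holderExpOn_neg (f : ℝ → ℝ) (s : Set ℝ) (x : ℝ) :
    holderExpOn (fun y => -f y) s x = holderExpOn f s x := by
  refine le_antisymm ?_ (holderExpOn_le_neg f s x)
  have := holderExpOn_le_neg (fun y => -f y) s x
  simpa [neg_neg] using this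

lemma main_mono (g : ℝ → ℝ) (hg : MonotoneOn g (Set.Icc (0:ℝ) 1))
    (h : ℝ) (h0 : 0 ≤ h) :
    dimH {x ∈ Set.Icc (0:ℝ) 1 | holderExpOn g (Set.Icc (0:ℝ) 1) x ≤ ENNReal.ofReal h}
      ≤ ENNReal.ofReal h := by
  set E := {x ∈ Set.Icc (0:ℝ) 1 | holderExpOn g (Set.Icc (0:ℝ) 1) x ≤ ENNReal.ofReal h} with hE
  set g1 : ℝ → ℝ := fun y => g (projIcc 0 1 zero_le_one y) with hg1def
  have hg1mem : ∀ y, ((projIcc 0 1 zero_le_one y : ↥(Set.Icc (0:ℝ) 1)) : ℝ) ∈ Set.Icc (0:ℝ) 1 :=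
    fun y => (projIcc 0 1 zero_le_one y).2
  have hg1 : Monotone g1 := fun a b hab =>
    hg (hg1mem a) (hg1mem b) (monotone_projIcc zero_le_one hab)
  have hg1eq : ∀ y ∈ Set.Icc (0:ℝ) 1, g1 y = g y := by
    intro y hy
    simp only [hg1def, projIcc_of_mem zero_le_one hy]
  set F := hg1.stieltjesFunction with hF
  set μ := F.measure with hμ
  have hFeq : ∀ y, F y = Function.rightLim g1 y := fun y => hg1.stieltjesFunction_eq y
  have hg1bot : ∀ y : ℝ, y ≤ 0 → g1 y = g 0 := fun y hy => by
    simp [hg1def, projIcc_of_le_left zero_le_one hy]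
  have hg1top : ∀ y : ℝ, 1 ≤ y → g1 y = g 1 := fun y hy => by
    simp [hg1def, projIcc_of_right_le zero_le_one hy]
  have hbot : Tendsto (F : ℝ → ℝ) atBot (𝓝 (g 0)) := by
    have heq : (fun _ : ℝ => g 0) =ᶠ[atBot] (F : ℝ → ℝ) := by
      filter_upwards [eventually_lt_atBot (0:ℝ)] with y hy
      have h1 : F y ≤ g 0 := by
        rw [hFeq]
        exact (hg1.rightLim_le hy).trans_eq (hg1eq 0 ⟨le_refl 0, zero_le_one⟩)
      have h2 : g 0 ≤ F y := by
        rw [hFeq, ← hg1bot y hy.le]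
        exact hg1.le_rightLim le_rfl
      exact le_antisymm h2 h1
    exact Tendsto.congr' heq tendsto_const_nhds
  have htop : Tendsto (F : ℝ → ℝ) atTop (𝓝 (g 1)) := by
    have heq : (fun _ : ℝ => g 1) =ᶠ[atTop] (F : ℝ → ℝ) := by
      filter_upwards [eventually_ge_atTop (1:ℝ)] with y hy
      have h1 : F y ≤ g 1 := by
        rw [hFeq]
        exact (hg1.rightLim_le (lt_add_one y)).trans_eq (hg1top (y+1) (by linarith))
      have h2 : g 1 ≤ F y := by
        rw [hFeq, ← hg1top y hy]
        exact hg1.le_rightLim le_rfl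
      exact le_antisymm h2 h1
    exact Tendsto.congr' heq tendsto_const_nhds
  have hfin : μ univ ≠ ∞ := by
    rw [hμ, F.measure_univ hbot htop]
    exact ENNReal.ofReal_ne_top
  have hstep : ∀ x y : ℝ, y ≠ x →
      ENNReal.ofReal (|g1 y - g1 x|) ≤ μ (closedBall x (2 * |y - x|)) := by
    intro x y hne
    rcases lt_or_gt_of_ne hne with hlt | hlt
    · -- y < x
      set d := x - y with hd
      have hd0 : 0 < d := by simp [hd]; linarith
      have habs : |y - x| = d := by rw [abs_sub_comm]; exact abs_of_pos hd0
      have h1 : |g1 y - g1 x| = g1 x - g1 y := by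
        rw [abs_sub_comm]; exact abs_of_nonneg (sub_nonneg.2 (hg1 hlt.le))
      have h2 : g1 x - g1 y ≤ F x - F (y - d) := by
        have ha : g1 x ≤ F x := by rw [hFeq]; exact hg1.le_rightLim le_rfl
        have hb : F (y - d) ≤ g1 y := by rw [hFeq]; exact hg1.rightLim_le (by linarith)
        linarith
      calc ENNReal.ofReal (|g1 y - g1 x|) ≤ ENNReal.ofReal (F x - F (y - d)) := by
            rw [h1]; exact ENNReal.ofReal_le_ofReal h2
        _ = μ (Ioc (y - d) x) := (F.measure_Ioc _ _).symm
        _ ≤ μ (closedBall x (2 * |y - x|)) := by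
            apply measure_mono
            intro z hz
            simp only [mem_Ioc] at hz
            rw [mem_closedBall, Real.dist_eq, habs, abs_le]
            constructor <;> [skip; skip] <;> simp [hd] at * <;> linarith
    · -- x < y
      set d := y - x with hd
      have hd0 : 0 < d := by simp [hd]; linarith
      have habs : |y - x| = d := abs_of_pos hd0
      have h1 : |g1 y - g1 x| = g1 y - g1 x := abs_of_nonneg (sub_nonneg.2 (hg1 hlt.le))
      have h2 : g1 y - g1 x ≤ F y - F (x - d) := by
        have ha : g1 y ≤ F y := by rw [hFeq]; exact hg1.le_rightLim le_rfl
        have hb : F (x - d) ≤ g1 x := by rw [hFeq]; exact hg1.rightLim_le (by linarith)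
        linarith
      calc ENNReal.ofReal (|g1 y - g1 x|) ≤ ENNReal.ofReal (F y - F (x - d)) := by
            rw [h1]; exact ENNReal.ofReal_le_ofReal h2
        _ = μ (Ioc (x - d) y) := (F.measure_Ioc _ _).symm
        _ ≤ μ (closedBall x (2 * |y - x|)) := by
            apply measure_mono
            intro z hz
            simp only [mem_Ioc] at hz
            rw [mem_closedBall, Real.dist_eq, habs, abs_le]
            constructor <;> simp [hd] at * <;> linarith
  -- main dimension bound
  apply dimH_le
  intro d' hd'
  by_contra hcon
  push_neg at hcon
  have hd'0 : (0:ℝ) < (d' : ℝ) := by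
    rcases eq_or_lt_of_le d'.2 with h' | h'
    · exfalso
      have hz : d' = 0 := by rw [← NNReal.coe_eq_zero]; exact h'.symm
      rw [hz] at hcon
      simp at hcon
    · exact h'
  have hαh : h < (d' : ℝ) := by
    rw [show ((d' : ℝ≥0∞)) = ENNReal.ofReal (d' : ℝ) by simp [ENNReal.ofReal_coe_nnreal]] at hcon
    exact (ENNReal.ofReal_lt_ofReal_iff hd'0).1 hcon
  set α : ℝ := (d' : ℝ) with hαdef
  have hdens : ∀ x ∈ E, ∀ ε > (0:ℝ), ∃ r, 0 < r ∧ r ≤ ε ∧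
      ENNReal.ofReal (r ^ α) ≤ μ (closedBall x r) := by
    intro x hx ε hε
    obtain ⟨hxI, hxE⟩ := hx
    set C : ℝ := (2:ℝ) ^ α with hC
    have hC0 : 0 < C := by positivity
    have hfail : ∃ᶠ y in 𝓝[Set.Icc (0:ℝ) 1] x, ¬ |g y - g x| ≤ C * |y - x| ^ α := by
      by_contra hev
      rw [Filter.not_frequently] at hev
      simp only [not_not] at hev
      have hcond : ∃ P : Polynomial ℝ, (P.natDegree : ℝ) < (d' : ℝ) ∧
          ∃ C' > (0:ℝ), ∀ᶠ y in 𝓝[Set.Icc (0:ℝ) 1] x,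
            |g y - P.eval (y - x)| ≤ C' * |y - x| ^ (d' : ℝ) :=
        ⟨Polynomial.C (g x), by rw [Polynomial.natDegree_C, Nat.cast_zero]; exact hd'0, C, hC0, by simpa [Polynomial.eval_C] using hev⟩
      have hle : (d' : ℝ≥0∞) ≤ holderExpOn g (Set.Icc (0:ℝ) 1) x :=
        le_iSup₂ (f := fun (h' : ℝ≥0) (_ : ∃ P : Polynomial ℝ,
          (P.natDegree : ℝ) < (h' : ℝ) ∧ ∃ C' > (0:ℝ), ∀ᶠ y in 𝓝[Set.Icc (0:ℝ) 1] x,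
            |g y - P.eval (y - x)| ≤ C' * |y - x| ^ (h' : ℝ)) => ((h' : ℝ≥0) : ℝ≥0∞)) d' hcond
      exact absurd (hle.trans hxE) (not_le.2 hcon)
    have hsmall : ∀ᶠ y in 𝓝[Set.Icc (0:ℝ) 1] x, |y - x| ≤ ε / 2 := by
      have hball : Metric.closedBall x (ε/2) ∈ 𝓝 x := Metric.closedBall_mem_nhds x (half_pos hε)
      apply eventually_nhdsWithin_of_eventually_nhds
      filter_upwards [hball] with y hy
      rwa [mem_closedBall, Real.dist_eq] at hy
    obtain ⟨y, hgt, hy2, hyI⟩ :=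
      (hfail.and_eventually (hsmall.and eventually_mem_nhdsWithin)).exists
    obtain ⟨hy2, hyI⟩ := (⟨hy2, hyI⟩ : _ ∧ _)
    have hyne : y ≠ x := by
      rintro rfl
      apply hgt
      simp [Real.zero_rpow (ne_of_gt (lt_of_le_of_lt h0 hαh))]
    have hyx0 : 0 < |y - x| := abs_pos.2 (sub_ne_zero.2 hyne)
    refine ⟨2 * |y - x|, by positivity, by linarith, ?_⟩
    have hrα : (2 * |y - x|) ^ α = C * |y - x| ^ α := by
      rw [Real.mul_rpow (by norm_num) (abs_nonneg _), hC]
    calc ENNReal.ofReal ((2 * |y - x|) ^ α) ≤ ENNReal.ofReal (|g y - g x|) := by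
          apply ENNReal.ofReal_le_ofReal
          rw [hrα]
          exact (not_le.1 hgt).le
      _ = ENNReal.ofReal (|g1 y - g1 x|) := by rw [hg1eq y hyI, hg1eq x hxI]
      _ ≤ μ (closedBall x (2 * |y - x|)) := hstep x y hyne
  have hbound := frostman (μ := μ) (lt_of_le_of_lt h0 hαh) hdens
  rw [hd'] at hbound
  have hne : ENNReal.ofReal (8 ^ α) * μ univ ≠ ⊤ :=
    ENNReal.mul_ne_top ENNReal.ofReal_ne_top hfin
  exact hne (top_le_iff.1 hbound)

theorem dimH_level_le_of_monotone
    (g : ℝ → ℝ)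
    (hg : MonotoneOn g (Set.Icc (0:ℝ) 1) ∨ AntitoneOn g (Set.Icc (0:ℝ) 1))
    (h : ℝ) (h0 : 0 ≤ h) (h1 : h ≤ 1) :
    dimH {x ∈ Set.Icc (0:ℝ) 1 | holderExpOn g (Set.Icc (0:ℝ) 1) x ≤ ENNReal.ofReal h}
      ≤ ENNReal.ofReal h := by
  rcases hg with hmono | hanti
  · exact main_mono g hmono h h0
  · have hmono : MonotoneOn (fun y => -g y) (Set.Icc (0:ℝ) 1) :=
      fun a ha b hb hab => neg_le_neg (hanti ha hb hab)
    have hmain := main_mono (fun y => -g y) hmono h h0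
    have hset : {x ∈ Set.Icc (0:ℝ) 1 | holderExpOn g (Set.Icc (0:ℝ) 1) x ≤ ENNReal.ofReal h}
        = {x ∈ Set.Icc (0:ℝ) 1 |
            holderExpOn (fun y => -g y) (Set.Icc (0:ℝ) 1) x ≤ ENNReal.ofReal h} := by
      ext x
      simp [holderExpOn_neg]
    rw [hset]
    exact hmain
end

section
/- Suppose f : [0,1]^d → ℝ is convex, continuous, and C¹. For every ε > 0 there exists ϱ > 0 such that for every continuous convex g with ‖g − f‖_∞ < ϱ, every j ∈ {1,…,d}, and every point x with x_j ∈ [ε, 1−ε] and all other coordinates in [0,1], one has |∂_{j,±} g(x) − ∂_j f(x)| < ε, where ∂_{j,±} denote the one-sided partial derivatives in the j-th coordinate. -/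
open Filter Set
open Topology


lemma convex_onesided {φ : ℝ → ℝ} {p q a : ℝ} (hφ : ConvexOn ℝ (Icc p q) φ)
    (hpa : p < a) (haq : a < q) :
    ∃ A B : ℝ, HasDerivWithinAt φ A (Ioi a) a ∧ HasDerivWithinAt φ B (Iio a) a ∧
      (∀ b, a < b → b ≤ q → A ≤ slope φ a b ∧ B ≤ slope φ a b) ∧
      (∀ c, p ≤ c → c < a → slope φ c a ≤ A ∧ slope φ c a ≤ B) := by
  have ha : a ∈ Icc p q := ⟨hpa.le, haq.le⟩
  have hsl : ∀ u v, slope φ u v = (φ v - φ u) / (v - u) := fun u v => slope_def_field φ u v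
  -- secant monotonicity through a
  have sec : ∀ {u v : ℝ}, u ∈ Icc p q → v ∈ Icc p q → u ≠ a → v ≠ a → u ≤ v →
      slope φ a u ≤ slope φ a v := by
    intro u v hu hv hua hva huv
    rw [hsl, hsl]
    have := hφ.secant_mono ha hu hv hua hva huv
    convert this using 2 <;> ring
  have adj : ∀ {u v : ℝ}, u ∈ Icc p q → v ∈ Icc p q → u < a → a < v →
      slope φ u a ≤ slope φ a v := by
    intro u v hu hv hua hav
    rw [hsl, hsl]
    exact hφ.slope_mono_adjacent hu hv hua hav
  have monoR : MonotoneOn (slope φ a) (Ioo a q) := fun u hu v hv huv =>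
    sec ⟨(hpa.trans hu.1).le, hu.2.le⟩ ⟨(hpa.trans hv.1).le, hv.2.le⟩
      (ne_of_gt hu.1) (ne_of_gt hv.1) huv
  have monoL : MonotoneOn (slope φ a) (Ioo p a) := fun u hu v hv huv =>
    sec ⟨hu.1.le, (hu.2.trans haq).le⟩ ⟨hv.1.le, (hv.2.trans haq).le⟩
      (ne_of_lt hu.2) (ne_of_lt hv.2) huv
  have bddR : BddBelow (slope φ a '' Ioo a q) := by
    refine ⟨slope φ a p, ?_⟩
    rintro _ ⟨t, ht, rfl⟩
    exact sec ⟨le_rfl, (hpa.trans haq).le⟩ ⟨(hpa.trans ht.1).le, ht.2.le⟩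
      (ne_of_lt hpa) (ne_of_gt ht.1) ((hpa.trans ht.1).le.trans le_rfl)
  have bddL : BddAbove (slope φ a '' Ioo p a) := by
    refine ⟨slope φ a q, ?_⟩
    rintro _ ⟨t, ht, rfl⟩
    exact sec ⟨ht.1.le, (ht.2.trans haq).le⟩ ⟨(hpa.trans haq).le, le_rfl⟩
      (ne_of_lt ht.2) (ne_of_gt haq) ((ht.2.trans haq).le)
  have neR : (Ioo a q).Nonempty := ⟨(a + q) / 2, by constructor <;> linarith⟩
  have neL : (Ioo p a).Nonempty := ⟨(p + a) / 2, by constructor <;> linarith⟩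
  have tendR : Tendsto (slope φ a) (𝓝[>] a) (𝓝 (sInf (slope φ a '' Ioo a q))) :=
    MonotoneOn.tendsto_nhdsWithin_Ioo_right neR monoR bddR
  have tendL : Tendsto (slope φ a) (𝓝[<] a) (𝓝 (sSup (slope φ a '' Ioo p a))) :=
    MonotoneOn.tendsto_nhdsWithin_Ioo_left neL monoL bddL
  refine ⟨sInf (slope φ a '' Ioo a q), sSup (slope φ a '' Ioo p a), ?_, ?_, ?_, ?_⟩
  · rw [hasDerivWithinAt_iff_tendsto_slope, Set.diff_singleton_eq_self (by simp)]
    exact tendR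
  · rw [hasDerivWithinAt_iff_tendsto_slope, Set.diff_singleton_eq_self (by simp)]
    exact tendL
  · intro b hab hbq
    constructor
    · refine le_of_tendsto tendR ?_
      filter_upwards [Ioo_mem_nhdsGT_of_mem ⟨le_rfl, hab⟩] with t ht
      exact sec ⟨(hpa.trans ht.1).le, (ht.2.le.trans hbq)⟩ ⟨(hpa.trans hab).le, hbq⟩
        (ne_of_gt ht.1) (ne_of_gt hab) ht.2.le
    · refine le_of_tendsto tendL ?_
      filter_upwards [Ioo_mem_nhdsLT_of_mem ⟨hpa, le_rfl⟩] with t ht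
      rw [slope_comm φ a t]
      exact adj ⟨ht.1.le, (ht.2.trans haq).le⟩ ⟨(hpa.trans hab).le, hbq⟩ ht.2 hab
  · intro c hpc hca
    constructor
    · refine ge_of_tendsto tendR ?_
      filter_upwards [Ioo_mem_nhdsGT_of_mem ⟨le_rfl, haq⟩] with t ht
      exact adj ⟨hpc, hca.le.trans haq.le⟩ ⟨(hpa.trans ht.1).le, ht.2.le⟩ hca ht.1
    · refine ge_of_tendsto tendL ?_
      filter_upwards [Ioo_mem_nhdsLT_of_mem ⟨hca, le_rfl⟩] with t ht
      rw [slope_comm φ c a]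
      exact sec ⟨hpc, hca.le.trans haq.le⟩ ⟨(hpc.trans ht.1.le), (ht.2.trans haq).le⟩
        (ne_of_lt hca) (ne_of_lt ht.2) ht.1.le

lemma slope_sup_close {u v : ℝ → ℝ} {a b ϱ' : ℝ} (hab : a < b)
    (h1 : |u a - v a| < ϱ') (h2 : |u b - v b| < ϱ') :
    slope u a b ≤ slope v a b + 2 * ϱ' / (b - a) := by
  have hba : 0 < b - a := sub_pos.2 hab
  rw [slope_def_field, slope_def_field, ← sub_le_iff_le_add', div_sub_div_same,
    div_le_div_iff_of_pos_right hba]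
  have := abs_lt.1 h1
  have := abs_lt.1 h2
  linarith


/-- The partial derivative of `f` in the `j`-th coordinate at `x`. -/
noncomputable def pderiv' {d : ℕ} (f : (Fin d → ℝ) → ℝ) (j : Fin d) (x : Fin d → ℝ) : ℝ :=
  deriv (fun t => f (Function.update x j t)) (x j)

/-- The right partial derivative of `f` in the `j`-th coordinate at `x`. -/
noncomputable def pderivPlus {d : ℕ} (f : (Fin d → ℝ) → ℝ) (j : Fin d) (x : Fin d → ℝ) : ℝ :=
  derivWithin (fun t => f (Function.update x j t)) (Set.Ioi (x j)) (x j)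

/-- The left partial derivative of `f` in the `j`-th coordinate at `x`. -/
noncomputable def pderivMinus {d : ℕ} (f : (Fin d → ℝ) → ℝ) (j : Fin d) (x : Fin d → ℝ) : ℝ :=
  derivWithin (fun t => f (Function.update x j t)) (Set.Iio (x j)) (x j)

theorem oneSided_pderiv_close_of_sup_close
    (d : ℕ) (f : (Fin d → ℝ) → ℝ)
    (hcont : ContinuousOn f (Set.Icc (0 : Fin d → ℝ) 1))
    (hconv : ConvexOn ℝ (Set.Icc (0 : Fin d → ℝ) 1) f)
    (hC1 : ContDiffOn ℝ 1 f (Set.Icc (0 : Fin d → ℝ) 1)) :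
    ∀ ε > (0:ℝ), ∃ ϱ > (0:ℝ), ∀ g : (Fin d → ℝ) → ℝ,
      ContinuousOn g (Set.Icc (0 : Fin d → ℝ) 1) →
      ConvexOn ℝ (Set.Icc (0 : Fin d → ℝ) 1) g →
      (∀ x ∈ Set.Icc (0 : Fin d → ℝ) 1, |g x - f x| < ϱ) →
      ∀ j : Fin d, ∀ x ∈ Set.Icc (0 : Fin d → ℝ) 1, x j ∈ Set.Icc ε (1 - ε) →
        |pderivPlus g j x - pderiv' f j x| < ε ∧
        |pderivMinus g j x - pderiv' f j x| < ε := by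
  classical
  intro ε hε
  set Bx : Set (Fin d → ℝ) := Set.Icc 0 1 with hBxdef
  have hBcompact : IsCompact Bx := isCompact_Icc
  have hupi : Bx = Set.pi univ (fun _ : Fin d => Icc (0:ℝ) 1) := by
    rw [hBxdef, ← Set.pi_univ_Icc]; rfl
  have hu : UniqueDiffOn ℝ Bx := by
    rw [hupi]
    exact UniqueDiffOn.pi (h := fun i _ => uniqueDiffOn_Icc one_pos)
  set D := fderivWithin ℝ f Bx with hDdef
  have hDcont : ContinuousOn D Bx := hC1.continuousOn_fderivWithin hu le_rfl
  have hunif : UniformContinuousOn D Bx := hBcompact.uniformContinuousOn_of_continuous hDcont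
  obtain ⟨δ, hδpos, hδ⟩ := Metric.uniformContinuousOn_iff.mp hunif (ε/4) (by positivity)
  set h : ℝ := min δ ε / 2 with hhdef
  have h0 : 0 < h := by positivity
  have hhδ : h < δ := by
    have : min δ ε ≤ δ := min_le_left _ _
    rw [hhdef]; linarith
  have hhε2 : h ≤ ε / 2 := by
    have : min δ ε ≤ ε := min_le_right _ _
    rw [hhdef]; linarith
  refine ⟨ε * h / 8, by positivity, ?_⟩
  intro g hgc hgconv hng j x hx hxj
  have hε1 : ε ≤ x j := hxj.1
  have hε2 : x j ≤ 1 - ε := hxj.2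
  set a : ℝ := x j with hadef
  have ha0 : 0 < a := lt_of_lt_of_le hε hε1
  have ha1 : a < 1 := by linarith
  have hmem : ∀ (y : Fin d → ℝ), y ∈ Bx → ∀ t : ℝ, 0 ≤ t → t ≤ 1 →
      Function.update y j t ∈ Bx := by
    intro y hy t ht0 ht1
    rw [hBxdef, Set.mem_Icc]
    rw [hBxdef, Set.mem_Icc] at hy
    constructor
    · intro i
      rcases eq_or_ne i j with rfl | hij
      · simpa using ht0
      · simpa [Function.update_apply, hij] using (hy.1 i)
    · intro i
      rcases eq_or_ne i j with rfl | hij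
      · simpa using ht1
      · simpa [Function.update_apply, hij] using (hy.2 i)
  have hline : ∀ (F : (Fin d → ℝ) → ℝ), ConvexOn ℝ Bx F →
      ConvexOn ℝ (Icc (0:ℝ) 1) (fun t => F (Function.update x j t)) := by
    intro F hF
    refine ⟨convex_Icc 0 1, fun s hs t ht α β hα hβ hαβ => ?_⟩
    have key : Function.update x j (α • s + β • t)
        = α • Function.update x j s + β • Function.update x j t := by
      funext i
      rcases eq_or_ne i j with rfl | hij
      · simp
      · simp only [Function.update_apply, if_neg hij, Pi.add_apply, Pi.smul_apply,
          smul_eq_mul]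
        rw [← add_mul, hαβ, one_mul]
    show F (Function.update x j (α • s + β • t)) ≤ _
    rw [key]
    exact hF.2 (hmem x hx s hs.1 hs.2) (hmem x hx t ht.1 ht.2) hα hβ hαβ
  have hderiv : ∀ y ∈ Bx, y j ∈ Ioo (0:ℝ) 1 →
      HasDerivAt (fun t => f (Function.update y j t)) (D y (Pi.single j 1)) (y j) := by
    intro y hy hyj
    have hLfun : (fun t : ℝ => Function.update y j t)
        = fun t : ℝ => y + (t - y j) • (Pi.single j (1:ℝ) : Fin d → ℝ) := by
      funext t; funext i
      rcases eq_or_ne i j with rfl | hij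
      · simp only [Function.update_self, Pi.add_apply, Pi.smul_apply, Pi.single_eq_same,
          smul_eq_mul, mul_one]
        ring
      · simp only [Function.update_apply, if_neg hij, Pi.add_apply, Pi.smul_apply,
          Pi.single_eq_of_ne hij, smul_eq_mul, mul_zero, add_zero]
    have hL : HasDerivAt (fun t : ℝ => Function.update y j t) (Pi.single j 1) (y j) := by
      rw [hLfun]
      simpa using
        (((hasDerivAt_id (y j)).sub_const (y j)).smul_const (Pi.single j (1:ℝ) : Fin d → ℝ)).const_add y
    have hfd : HasFDerivWithinAt f (D y) Bx y :=
      ((hC1.differentiableOn one_ne_zero) y hy).hasFDerivWithinAt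
    have hmap : MapsTo (fun t : ℝ => Function.update y j t) (Ioo 0 1) Bx := fun t ht =>
      hmem y hy t ht.1.le ht.2.le
    have hcomp : HasDerivWithinAt (fun t => f (Function.update y j t))
        (D y (Pi.single j 1)) (Ioo 0 1) (y j) :=
      hfd.comp_hasDerivWithinAt_of_eq (y j) (hL.hasDerivWithinAt) hmap
        (Function.update_eq_self j y).symm
    exact hcomp.hasDerivAt (Ioo_mem_nhds hyj.1 hyj.2)
  set v : Fin d → ℝ := Pi.single j (1:ℝ) with hvdef
  set Df := D x v with hDfdef
  have hxIoo : a ∈ Ioo (0:ℝ) 1 := ⟨ha0, ha1⟩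
  have hpd : pderiv' f j x = Df := by
    unfold pderiv'
    exact (hderiv x hx hxIoo).deriv
  have hvnorm : ‖v‖ ≤ 1 := by
    rw [hvdef, pi_norm_le_iff_of_nonneg zero_le_one]
    intro i
    rcases eq_or_ne i j with rfl | hij
    · simp
    · simp [Pi.single_apply, hij]
  have hclose : ∀ y ∈ Bx, dist y x < δ → |D y v - Df| < ε/4 := by
    intro y hy hd
    have h1 : dist (D y) (D x) < ε/4 := hδ y hy x hx hd
    rw [dist_eq_norm] at h1
    have h2 : |D y v - Df| ≤ ‖D y - D x‖ := by
      rw [hDfdef, ← Real.norm_eq_abs, ← ContinuousLinearMap.sub_apply]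
      calc ‖(D y - D x) v‖ ≤ ‖D y - D x‖ * ‖v‖ := ContinuousLinearMap.le_opNorm _ _
        _ ≤ ‖D y - D x‖ * 1 := by
            exact mul_le_mul_of_nonneg_left hvnorm (norm_nonneg _)
        _ = ‖D y - D x‖ := mul_one _
    linarith
  set b := a + h with hbdef
  set c := a - h with hcdef
  have hab : a < b := by rw [hbdef]; linarith
  have hca : c < a := by rw [hcdef]; linarith
  have hb1 : b < 1 := by rw [hbdef]; linarith
  have hb0 : 0 < b := lt_trans ha0 hab
  have hc0 : 0 < c := by rw [hcdef]; linarith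
  have hc1 : c < 1 := lt_trans hca ha1
  set yb := Function.update x j b with hybdef
  set zc := Function.update x j c with hzcdef
  have hybB : yb ∈ Bx := hmem x hx b hb0.le hb1.le
  have hzcB : zc ∈ Bx := hmem x hx c hc0.le hc1.le
  set ψ := fun t => f (Function.update x j t) with hψdef
  set φ := fun t => g (Function.update x j t) with hφdef
  have hψconv : ConvexOn ℝ (Icc (0:ℝ) 1) ψ := hline f hconv
  have hφconv : ConvexOn ℝ (Icc (0:ℝ) 1) φ := hline g hgconv
  have hψb : HasDerivAt ψ (D yb v) b := by
    have hh := hderiv yb hybB (by rw [hybdef]; simpa using ⟨hb0, hb1⟩)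
    have hfe : (fun t => f (Function.update yb j t)) = ψ := by
      funext t; rw [hψdef]; rw [hybdef, Function.update_idem]
    have hpt : yb j = b := by rw [hybdef]; simp
    rw [hfe, hpt] at hh
    exact hh
  have hψc : HasDerivAt ψ (D zc v) c := by
    have hh := hderiv zc hzcB (by rw [hzcdef]; simpa using ⟨hc0, hc1⟩)
    have hfe : (fun t => f (Function.update zc j t)) = ψ := by
      funext t; rw [hψdef]; rw [hzcdef, Function.update_idem]
    have hpt : zc j = c := by rw [hzcdef]; simp
    rw [hfe, hpt] at hh
    exact hh
  obtain ⟨A, B, hA, hB, hub, hlb⟩ := convex_onesided hφconv ha0 ha1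
  obtain ⟨Aψb, Bψb, hAψb, -, -, hlbψb⟩ := convex_onesided hψconv hb0 hb1
  obtain ⟨Aψc, Bψc, hAψc, -, hubψc, -⟩ := convex_onesided hψconv hc0 hc1
  have hAψbval : Aψb = D yb v := by
    have e1 := hAψb.derivWithin (uniqueDiffWithinAt_Ioi b)
    have e2 := (hψb.hasDerivWithinAt (s := Ioi b)).derivWithin (uniqueDiffWithinAt_Ioi b)
    rw [← e1, ← e2]
  have hAψcval : Aψc = D zc v := by
    have e1 := hAψc.derivWithin (uniqueDiffWithinAt_Ioi c)
    have e2 := (hψc.hasDerivWithinAt (s := Ioi c)).derivWithin (uniqueDiffWithinAt_Ioi c)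
    rw [← e1, ← e2]
  have key1 : slope ψ a b ≤ D yb v := by
    have hh := (hlbψb a ha0.le hab).1
    rwa [hAψbval] at hh
  have key2 : D zc v ≤ slope ψ c a := by
    have hh := (hubψc a hca ha1.le).1
    rwa [hAψcval] at hh
  have hdyb : dist yb x < δ := by
    have hle : dist yb x ≤ h := by
      rw [dist_pi_le_iff h0.le]
      intro i
      rcases eq_or_ne i j with rfl | hij
      · rw [hybdef]
        simp only [Function.update_self]
        have hee : b - x i = h := by rw [hbdef, ← hadef]; ring
        rw [Real.dist_eq, hee, abs_of_nonneg h0.le]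
      · rw [hybdef]
        simp [Function.update_apply, hij, h0.le]
    linarith
  have hdzc : dist zc x < δ := by
    have hle : dist zc x ≤ h := by
      rw [dist_pi_le_iff h0.le]
      intro i
      rcases eq_or_ne i j with rfl | hij
      · rw [hzcdef]
        simp only [Function.update_self]
        have hee : c - x i = -h := by rw [hcdef, ← hadef]; ring
        rw [Real.dist_eq, hee, abs_neg, abs_of_nonneg h0.le]
      · rw [hzcdef]
        simp [Function.update_apply, hij, h0.le]
    linarith
  have key3 : |D yb v - Df| < ε/4 := hclose yb hybB hdyb
  have key4 : |D zc v - Df| < ε/4 := hclose zc hzcB hdzc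
  have heqa : Function.update x j a = x := by
    rw [hadef]; exact Function.update_eq_self j x
  have hφa : φ a = g x := by show g (Function.update x j a) = g x; rw [heqa]
  have hψa : ψ a = f x := by show f (Function.update x j a) = f x; rw [heqa]
  have hnga : |φ a - ψ a| < ε * h / 8 := by rw [hφa, hψa]; exact hng x hx
  have hngb : |φ b - ψ b| < ε * h / 8 := hng yb hybB
  have hngc : |φ c - ψ c| < ε * h / 8 := hng zc hzcB
  have hsb : slope φ a b ≤ slope ψ a b + 2*(ε*h/8)/(b-a) := slope_sup_close hab hnga hngb
  have hsc : slope ψ c a ≤ slope φ c a + 2*(ε*h/8)/(a-c) := by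
    refine slope_sup_close hca ?_ ?_
    · rw [abs_sub_comm]; exact hngc
    · rw [abs_sub_comm]; exact hnga
  have hbah : b - a = h := by rw [hbdef]; ring
  have hach : a - c = h := by rw [hcdef]; ring
  have hquot : 2*(ε*h/8)/h = ε/4 := by field_simp; ring
  rw [hbah, hquot] at hsb
  rw [hach, hquot] at hsc
  have hplus : pderivPlus g j x = A := by
    show derivWithin φ (Ioi a) a = A
    exact hA.derivWithin (uniqueDiffWithinAt_Ioi a)
  have hminus : pderivMinus g j x = B := by
    show derivWithin φ (Iio a) a = B
    exact hB.derivWithin (uniqueDiffWithinAt_Iio a)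
  have u1 := (hub b hab hb1.le).1
  have u2 := (hub b hab hb1.le).2
  have l1 := (hlb c hc0.le hca).1
  have l2 := (hlb c hc0.le hca).2
  have k3 := abs_lt.1 key3
  have k4 := abs_lt.1 key4
  constructor
  · rw [hplus, hpd, abs_lt]
    constructor <;> linarith
  · rw [hminus, hpd, abs_lt]
    constructor <;> linarith
end

section
/- Suppose f : [0,1] → ℝ is convex, continuous and C¹. For every ε > 0 there exists ϱ > 0 such that for all continuous convex g : [0,1] → ℝ with ‖g − f‖_∞ < ϱ and all x ∈ [ε, 1−ε], |g'_±(x) − f'(x)| < ε. -/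
open Filter Set Topology

/-- Existence of one-sided derivatives of a convex function at interior points,
together with the slope bounds. -/
lemma convex_onesided_derivs
    (g : ℝ → ℝ) (hg : ConvexOn ℝ (Set.Icc (0:ℝ) 1) g)
    {x : ℝ} (hx0 : 0 < x) (hx1 : x < 1) :
    ∃ dl dr : ℝ, HasDerivWithinAt g dr (Set.Ioi x) x ∧
      HasDerivWithinAt g dl (Set.Iio x) x ∧ dl ≤ dr ∧
      (∀ y ∈ Set.Icc (0:ℝ) 1, y < x → (g y - g x) / (y - x) ≤ dl) ∧
      (∀ y ∈ Set.Icc (0:ℝ) 1, x < y → dr ≤ (g y - g x) / (y - x)) := by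
  set Q : ℝ → ℝ := fun y => (g y - g x) / (y - x) with hQ
  have hxI : x ∈ Set.Icc (0:ℝ) 1 := ⟨hx0.le, hx1.le⟩
  have qmono : ∀ a ∈ Set.Icc (0:ℝ) 1, ∀ b ∈ Set.Icc (0:ℝ) 1,
      a ≠ x → b ≠ x → a ≤ b → Q a ≤ Q b := fun a ha b hb hax hbx hab =>
    hg.secant_mono hxI ha hb hax hbx hab
  have hsubR : Set.Ioo x 1 ⊆ Set.Icc (0:ℝ) 1 :=
    fun a ha => ⟨(hx0.trans ha.1).le, ha.2.le⟩
  have hsubL : Set.Ioo (0:ℝ) x ⊆ Set.Icc (0:ℝ) 1 :=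
    fun a ha => ⟨ha.1.le, (ha.2.trans hx1).le⟩
  have hneR : (Set.Ioo x 1).Nonempty := nonempty_Ioo.2 hx1
  have hneL : (Set.Ioo (0:ℝ) x).Nonempty := nonempty_Ioo.2 hx0
  have monoR : MonotoneOn Q (Set.Ioo x 1) := fun a ha b hb hab =>
    qmono a (hsubR ha) b (hsubR hb) ha.1.ne' hb.1.ne' hab
  have monoL : MonotoneOn Q (Set.Ioo (0:ℝ) x) := fun a ha b hb hab =>
    qmono a (hsubL ha) b (hsubL hb) ha.2.ne hb.2.ne hab
  have bddR : BddBelow (Q '' Set.Ioo x 1) := by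
    refine ⟨Q (x/2), ?_⟩
    rintro _ ⟨y, hy, rfl⟩
    exact qmono (x/2) ⟨by linarith, by linarith⟩ y (hsubR hy)
      (by intro h; linarith [h ▸ hx0]) hy.1.ne' (by linarith [hy.1])
  have bddL : BddAbove (Q '' Set.Ioo (0:ℝ) x) := by
    refine ⟨Q ((x+1)/2), ?_⟩
    rintro _ ⟨y, hy, rfl⟩
    exact qmono y (hsubL hy) ((x+1)/2) ⟨by linarith, by linarith⟩
      hy.2.ne (by intro h; linarith [h ▸ hx1]) (by linarith [hy.2])
  set dr := sInf (Q '' Set.Ioo x 1) with hdr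
  set dl := sSup (Q '' Set.Ioo (0:ℝ) x) with hdl
  have tendR : Tendsto Q (𝓝[>] x) (𝓝 dr) :=
    MonotoneOn.tendsto_nhdsWithin_Ioo_right hneR monoR bddR
  have tendL : Tendsto Q (𝓝[<] x) (𝓝 dl) :=
    MonotoneOn.tendsto_nhdsWithin_Ioo_left hneL monoL bddL
  have hslope : slope g x = Q := funext fun y => slope_def_field g x y
  refine ⟨dl, dr, ?_, ?_, ?_, ?_, ?_⟩
  · rw [hasDerivWithinAt_iff_tendsto_slope, Set.diff_singleton_eq_self notMem_Ioi_self,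
      hslope]
    exact tendR
  · rw [hasDerivWithinAt_iff_tendsto_slope, Set.diff_singleton_eq_self notMem_Iio_self,
      hslope]
    exact tendL
  · refine csSup_le (hneL.image Q) ?_
    rintro _ ⟨a, ha, rfl⟩
    refine le_csInf (hneR.image Q) ?_
    rintro _ ⟨b, hb, rfl⟩
    exact qmono a (hsubL ha) b (hsubR hb) ha.2.ne hb.1.ne' (ha.2.le.trans hb.1.le)
  · intro y hy hyx
    have hz : (y + x)/2 ∈ Set.Ioo (0:ℝ) x := ⟨by nlinarith [hy.1], by linarith⟩
    have h1 : Q y ≤ Q ((y+x)/2) :=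
      qmono y hy ((y+x)/2) (hsubL hz) hyx.ne hz.2.ne (by linarith)
    exact h1.trans (le_csSup bddL (mem_image_of_mem Q hz))
  · intro y hy hxy
    have hz : (x + y)/2 ∈ Set.Ioo x 1 := ⟨by linarith, by nlinarith [hy.2]⟩
    have h1 : Q ((x+y)/2) ≤ Q y :=
      qmono ((x+y)/2) (hsubR hz) y hy hz.1.ne' hxy.ne' (by linarith)
    exact (csInf_le bddR (mem_image_of_mem Q hz)).trans h1

theorem oneSided_deriv_close_of_sup_close
    (f : ℝ → ℝ)
    (hcont : ContinuousOn f (Set.Icc (0:ℝ) 1))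
    (hconv : ConvexOn ℝ (Set.Icc (0:ℝ) 1) f)
    (hC1 : ContDiffOn ℝ 1 f (Set.Icc (0:ℝ) 1)) :
    ∀ ε > (0:ℝ), ∃ ϱ > (0:ℝ), ∀ g : ℝ → ℝ,
      ContinuousOn g (Set.Icc (0:ℝ) 1) →
      ConvexOn ℝ (Set.Icc (0:ℝ) 1) g →
      (∀ x ∈ Set.Icc (0:ℝ) 1, |g x - f x| < ϱ) →
      ∀ x ∈ Set.Icc ε (1 - ε),
        |derivWithin g (Set.Ioi x) x - deriv f x| < ε ∧
        |derivWithin g (Set.Iio x) x - deriv f x| < ε := by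
  intro ε hε
  -- differentiability of f at interior points
  have hdiff : ∀ y ∈ Set.Ioo (0:ℝ) 1, DifferentiableAt ℝ f y := by
    intro y hy
    have := (hC1.differentiableOn one_ne_zero) y (Set.Ioo_subset_Icc_self hy)
    exact this.differentiableAt (Icc_mem_nhds hy.1 hy.2)
  -- continuity / uniform continuity of the derivative
  set φ : ℝ → ℝ := derivWithin f (Set.Icc (0:ℝ) 1) with hφ
  have hφeq : ∀ y ∈ Set.Ioo (0:ℝ) 1, φ y = deriv f y := by
    intro y hy
    exact derivWithin_of_mem_nhds (Icc_mem_nhds hy.1 hy.2)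
  have hφc : ContinuousOn φ (Set.Icc (0:ℝ) 1) :=
    hC1.continuousOn_derivWithin (uniqueDiffOn_Icc one_pos) le_rfl
  have hUC : UniformContinuousOn φ (Set.Icc (0:ℝ) 1) :=
    isCompact_Icc.uniformContinuousOn_of_continuous hφc
  obtain ⟨δ₀, hδ₀, hδ₀p⟩ := (Metric.uniformContinuousOn_iff).1 hUC (ε/2) (by linarith)
  set δ := min δ₀ ε with hδdef
  have hδpos : 0 < δ := lt_min hδ₀ hε
  have hδε : δ ≤ ε := min_le_right _ _
  refine ⟨δ * ε / 8, by positivity, ?_⟩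
  intro g hgc hgconv hclose x hx
  have hxε : ε ≤ x := hx.1
  have hx1ε : x ≤ 1 - ε := hx.2
  have hx0 : 0 < x := lt_of_lt_of_le hε hxε
  have hx1 : x < 1 := by linarith
  have hxI : x ∈ Set.Icc (0:ℝ) 1 := ⟨hx0.le, hx1.le⟩
  have hxIoo : x ∈ Set.Ioo (0:ℝ) 1 := ⟨hx0, hx1⟩
  obtain ⟨dl, dr, hdR, hdL, hdlr, hPL, hPR⟩ := convex_onesided_derivs g hgconv hx0 hx1
  have hdrw : derivWithin g (Set.Ioi x) x = dr := hdR.derivWithin (uniqueDiffWithinAt_Ioi x)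
  have hdlw : derivWithin g (Set.Iio x) x = dl := hdL.derivWithin (uniqueDiffWithinAt_Iio x)
  rw [hdrw, hdlw]
  -- MVT comparison of slopes of f with deriv f x
  have key : ∀ a b : ℝ, 0 ≤ a → b ≤ 1 → a ≤ x → x ≤ b → a < b → b - a ≤ δ →
      |(f b - f a) / (b - a) - deriv f x| < ε / 2 := by
    intro a b ha hb hax hxb hab hbaδ
    have hsub : Set.Icc a b ⊆ Set.Icc (0:ℝ) 1 :=
      Set.Icc_subset_Icc ha hb
    obtain ⟨c, hc, hceq⟩ := exists_hasDerivAt_eq_slope f (deriv f) hab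
      (hcont.mono hsub)
      (fun y hy => (hdiff y ⟨lt_of_le_of_lt ha hy.1, lt_of_lt_of_le hy.2 hb⟩).hasDerivAt)
    have hcIoo : c ∈ Set.Ioo (0:ℝ) 1 := ⟨lt_of_le_of_lt ha hc.1, lt_of_lt_of_le hc.2 hb⟩
    have hδδ₀ : δ ≤ δ₀ := min_le_left _ _
    have hdist : dist c x < δ₀ := by
      rw [Real.dist_eq, abs_lt]
      constructor <;> [skip; skip] <;>
        · have h1 := hc.1
          have h2 := hc.2
          linarith
    have := hδ₀p c (Set.Ioo_subset_Icc_self hcIoo) x hxI hdist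
    rw [Real.dist_eq, hφeq c hcIoo, hφeq x hxIoo] at this
    rw [← hceq]
    exact this
  -- right derivative bound
  have hbI : x + δ ≤ 1 := by linarith
  have haI : 0 ≤ x - δ := by linarith
  have hR : dr ≤ deriv f x + 3 * ε / 4 := by
    have h1 : dr ≤ (g (x + δ) - g x) / (x + δ - x) :=
      hPR (x + δ) ⟨by linarith, hbI⟩ (by linarith)
    have hgb := hclose (x + δ) ⟨by linarith, hbI⟩
    have hgx := hclose x hxI
    rw [abs_lt] at hgb hgx
    have h2 : g (x + δ) - g x ≤ (f (x + δ) - f x) + 2 * (δ * ε / 8) := by linarith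
    have hpos : (0:ℝ) < x + δ - x := by linarith
    have h3 : (g (x + δ) - g x) / (x + δ - x) ≤
        ((f (x + δ) - f x) + 2 * (δ * ε / 8)) / (x + δ - x) := by gcongr
    have h4 : ((f (x + δ) - f x) + 2 * (δ * ε / 8)) / (x + δ - x) =
        (f (x + δ) - f x) / (x + δ - x) + ε / 4 := by
      rw [show x + δ - x = δ by ring]
      field_simp
      ring
    have h5 := key x (x + δ) hx0.le hbI le_rfl (by linarith) (by linarith) (by linarith)
    rw [abs_lt] at h5
    linarith
  -- left derivative bound
  have hL : deriv f x - 3 * ε / 4 ≤ dl := by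
    have h1 : (g (x - δ) - g x) / (x - δ - x) ≤ dl :=
      hPL (x - δ) ⟨haI, by linarith⟩ (by linarith)
    have hne1 : x - δ - x ≠ 0 := by intro h; simp at h; linarith
    have hne2 : x - (x - δ) ≠ 0 := by intro h; simp at h; linarith
    have heq : (g (x - δ) - g x) / (x - δ - x) = (g x - g (x - δ)) / (x - (x - δ)) := by
      rw [div_eq_div_iff hne1 hne2]; ring
    have hga := hclose (x - δ) ⟨haI, by linarith⟩
    have hgx := hclose x hxI
    rw [abs_lt] at hga hgx
    have h2 : (f x - f (x - δ)) - 2 * (δ * ε / 8) ≤ g x - g (x - δ) := by linarith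
    have hpos : (0:ℝ) < x - (x - δ) := by linarith
    have h3 : ((f x - f (x - δ)) - 2 * (δ * ε / 8)) / (x - (x - δ)) ≤
        (g x - g (x - δ)) / (x - (x - δ)) := by gcongr
    have h4 : ((f x - f (x - δ)) - 2 * (δ * ε / 8)) / (x - (x - δ)) =
        (f x - f (x - δ)) / (x - (x - δ)) - ε / 4 := by
      rw [show x - (x - δ) = δ by ring]
      field_simp
      ring
    have h5 := key (x - δ) x haI hx1.le (by linarith) le_rfl (by linarith) (by linarith)
    rw [abs_lt] at h5
    linarith
  constructor <;> (rw [abs_lt]; constructor <;> linarith)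
end

section
/- There is a dense G_δ set G in the space CC of continuous convex functions on [0,1]^d (with the sup norm) such that every f ∈ G is continuously differentiable on the open cube (0,1)^d. -/
open Filter Set
open scoped ENNReal NNReal

namespace GCD

variable {d : ℕ}

abbrev cube (d : ℕ) : Set (Fin d → ℝ) := Set.Icc 0 1

abbrev opc (d : ℕ) : Set (Fin d → ℝ) := {x : Fin d → ℝ | ∀ i, x i ∈ Set.Ioo (0:ℝ) 1}

noncomputable def al (n : ℕ) : ℝ := 1 / (n + 2)

def Kn (d n : ℕ) : Set (Fin d → ℝ) := Set.Icc (fun _ => al n) (fun _ => 1 - al n)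

def sd (φ : (Fin d → ℝ) → ℝ) (x u : Fin d → ℝ) : ℝ := φ (x + u) + φ (x - u) - 2 * φ x

def clampPt (x : Fin d → ℝ) : Fin d → ℝ := fun i => max 0 (min 1 (x i))

lemma al_pos (n : ℕ) : 0 < al n := by
  have : (0:ℝ) < n + 2 := by positivity
  exact div_pos one_pos this

lemma al_le_half (n : ℕ) : al n ≤ 1 / 2 := by
  rw [al, div_le_div_iff₀ (by positivity) (by norm_num)]
  have : (0:ℝ) ≤ n := Nat.cast_nonneg n
  linarith

lemma al_antitone {n m : ℕ} (h : n ≤ m) : al m ≤ al n := by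
  rw [al, al, div_le_div_iff₀ (by positivity) (by positivity)]
  have : (n:ℝ) ≤ m := Nat.cast_le.mpr h
  linarith

lemma al_strict {n m : ℕ} (h : n < m) : al m < al n := by
  rw [al, al, div_lt_div_iff₀ (by positivity) (by positivity)]
  have : (n:ℝ) < m := Nat.cast_lt.mpr h
  linarith

lemma al_eventually_le {c : ℝ} (hc : 0 < c) : ∀ᶠ n : ℕ in atTop, al n ≤ c := by
  obtain ⟨N, hN⟩ := exists_nat_gt (1 / c)
  filter_upwards [eventually_ge_atTop N] with n hn
  have h2 : (N:ℝ) ≤ n := Nat.cast_le.mpr hn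
  have h1 : 1 < (N:ℝ) * c := (div_lt_iff₀ hc).mp hN
  rw [al, div_le_iff₀ (by positivity)]
  nlinarith

lemma mem_cube_iff {x : Fin d → ℝ} : x ∈ cube d ↔ ∀ i, 0 ≤ x i ∧ x i ≤ 1 := by
  simp [cube, Set.mem_Icc, Pi.le_def, forall_and]

lemma mem_Kn_iff {x : Fin d → ℝ} {n : ℕ} : x ∈ Kn d n ↔ ∀ i, al n ≤ x i ∧ x i ≤ 1 - al n := by
  simp [Kn, Set.mem_Icc, Pi.le_def, forall_and]

lemma Kn_subset_cube {n : ℕ} : Kn d n ⊆ cube d := by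
  intro x hx
  rw [mem_Kn_iff] at hx
  rw [mem_cube_iff]
  intro i
  have := hx i
  have := al_pos n
  constructor <;> linarith

lemma Kn_subset_opc {n : ℕ} : Kn d n ⊆ opc d := by
  intro x hx
  rw [mem_Kn_iff] at hx
  intro i
  have := hx i
  have := al_pos n
  exact ⟨by linarith, by linarith⟩

lemma opc_subset_cube : opc d ⊆ cube d := by
  intro x hx
  rw [mem_cube_iff]
  intro i
  have := hx i
  exact ⟨(this.1).le, (this.2).le⟩

lemma isOpen_opc : IsOpen (opc d) := by
  have : opc d = Set.pi Set.univ (fun _ : Fin d => Set.Ioo (0:ℝ) 1) := by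
    ext x; simp [Set.mem_pi]
  rw [this]
  exact isOpen_set_pi (Set.finite_univ) (fun i _ => isOpen_Ioo)

lemma Kn_margin {x u : Fin d → ℝ} {n : ℕ} (hx : x ∈ Kn d n) (hu : ‖u‖ ≤ al n) :
    x + u ∈ cube d := by
  rw [mem_Kn_iff] at hx
  rw [mem_cube_iff]
  intro i
  have h1 := hx i
  have h2 : |u i| ≤ ‖u‖ := by
    have := norm_le_pi_norm u i
    simpa using this
  have := abs_le.mp (h2.trans hu)
  constructor <;> [skip; skip] <;> simp only [Pi.add_apply] <;> linarith

lemma Kn_margin' {x u : Fin d → ℝ} {n : ℕ} (hx : x ∈ Kn d n) (hu : ‖u‖ ≤ al n) :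
    x - u ∈ cube d := by
  have : x - u = x + (-u) := by ring_nf
  rw [this]
  exact Kn_margin hx (by simpa using hu)

lemma ball_subset_Kn {x y : Fin d → ℝ} {n m : ℕ} (hx : x ∈ Kn d n) (hnm : n ≤ m)
    (hy : ‖y - x‖ ≤ al n - al m) : y ∈ Kn d m := by
  rw [mem_Kn_iff] at hx ⊢
  intro i
  have h1 := hx i
  have h2 : |y i - x i| ≤ ‖y - x‖ := by
    have := norm_le_pi_norm (y - x) i
    simpa using this
  have h3 := abs_le.mp (h2.trans hy)
  have h4 : al m ≤ al n := al_antitone hnm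
  constructor <;> linarith

lemma center_mem_Kn (n : ℕ) : (fun _ => (1:ℝ)/2) ∈ Kn d n := by
  rw [mem_Kn_iff]
  intro i
  have := al_le_half n
  have := al_pos n
  constructor <;> linarith

lemma isCompact_Kn (n : ℕ) : IsCompact (Kn d n) := isCompact_Icc

lemma eventually_mem_Kn {x : Fin d → ℝ} (hx : x ∈ opc d) :
    ∀ᶠ n : ℕ in atTop, x ∈ Kn d n := by
  have : ∀ᶠ n : ℕ in atTop, ∀ i, al n ≤ x i ∧ x i ≤ 1 - al n := by
    rw [Filter.eventually_all]
    intro i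
    have h1 := (hx i).1
    have h2 := (hx i).2
    have hc : 0 < min (x i) (1 - x i) := lt_min h1 (by linarith)
    filter_upwards [al_eventually_le hc] with n hn
    constructor
    · exact hn.trans (min_le_left _ _)
    · have := hn.trans (min_le_right _ _); linarith
  filter_upwards [this] with n hn
  exact mem_Kn_iff.mpr hn

lemma clampPt_mem (x : Fin d → ℝ) : clampPt x ∈ cube d := by
  rw [mem_cube_iff]
  intro i
  constructor
  · exact le_max_left _ _
  · simp only [clampPt, max_le_iff]
    exact ⟨zero_le_one, min_le_left _ _⟩

lemma clampPt_eq {x : Fin d → ℝ} (hx : x ∈ cube d) : clampPt x = x := by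
  rw [mem_cube_iff] at hx
  funext i
  have := hx i
  simp only [clampPt]
  rw [min_eq_right this.2, max_eq_right this.1]

lemma continuous_clampPt : Continuous (clampPt (d := d)) := by
  apply continuous_pi
  intro i
  exact continuous_const.max (continuous_const.min (continuous_apply i))


section Slopes

variable {φ : (Fin d → ℝ) → ℝ} {x u : Fin d → ℝ}

lemma comb_eq (x u : Fin d → ℝ) {s t : ℝ} (ht : t ≠ 0) :
    (1 - s/t) • x + (s/t) • (x + t•u) = x + s•u := by
  funext i
  simp only [Pi.add_apply, Pi.smul_apply, smul_eq_mul]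
  field_simp
  ring

lemma mem_of_seg (hx : x ∈ cube d) {t : ℝ} (ht : 0 < t) (hmem : x + t•u ∈ cube d)
    {s : ℝ} (hs : 0 ≤ s) (hst : s ≤ t) : x + s•u ∈ cube d := by
  have key := (convex_Icc (0 : Fin d → ℝ) 1) hx hmem
    (sub_nonneg.mpr ((div_le_one ht).mpr hst)) (div_nonneg hs ht.le) (by ring)
  rwa [comb_eq x u ht.ne'] at key

lemma slope_mono (hconv : ConvexOn ℝ (cube d) φ) (hx : x ∈ cube d) {s t : ℝ}
    (hs : 0 < s) (hst : s ≤ t) (hmem : x + t•u ∈ cube d) :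
    (φ (x + s•u) - φ x)/s ≤ (φ (x + t•u) - φ x)/t := by
  have ht : 0 < t := hs.trans_le hst
  have key := hconv.2 hx hmem
    (sub_nonneg.mpr ((div_le_one ht).mpr hst)) (div_nonneg hs.le ht.le) (by ring)
  rw [comb_eq x u ht.ne'] at key
  rw [div_le_div_iff₀ hs ht]
  have h2 : t * φ (x + s•u) ≤ t * ((1 - s/t) * φ x + s/t * φ (x + t•u)) :=
    mul_le_mul_of_nonneg_left key ht.le
  have h3 : t * ((1 - s/t) * φ x + s/t * φ (x + t•u)) =
      (t - s) * φ x + s * φ (x + t•u) := by field_simp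
  nlinarith [h2, h3]

lemma slope_neg_le (hconv : ConvexOn ℝ (cube d) φ) {s t : ℝ}
    (hs : s < 0) (ht : 0 < t) (hms : x + s•u ∈ cube d) (hmt : x + t•u ∈ cube d) :
    (φ (x + s•u) - φ x)/s ≤ (φ (x + t•u) - φ x)/t := by
  have hts : 0 < t - s := by linarith
  have ha : 0 ≤ t/(t-s) := div_nonneg ht.le hts.le
  have hb : 0 ≤ (-s)/(t-s) := div_nonneg (by linarith) hts.le
  have hab : t/(t-s) + (-s)/(t-s) = 1 := by field_simp; ring
  have hpt : (t/(t-s)) • (x + s•u) + ((-s)/(t-s)) • (x + t•u) = x := by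
    funext i
    simp only [Pi.add_apply, Pi.smul_apply, smul_eq_mul]
    field_simp
    ring
  have key := hconv.2 hms hmt ha hb hab
  rw [hpt] at key
  set A := φ (x + s•u) with hA
  set B := φ (x + t•u) with hB
  set C := φ x with hC
  have key2 : (t - s) * C ≤ t * A - s * B := by
    have h2 : (t-s) * C ≤ (t-s) * (t/(t-s) * A + (-s)/(t-s) * B) :=
      mul_le_mul_of_nonneg_left key hts.le
    have h3 : (t-s) * (t/(t-s) * A + (-s)/(t-s) * B) = t * A - s * B := by
      field_simp; ring
    linarith
  have hst : s * t < 0 := mul_neg_of_neg_of_pos hs ht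
  have e : (A - C)/s - (B - C)/t = (t*(A - C) - s*(B - C))/(s*t) := by
    have hs0 : s ≠ 0 := hs.ne
    have ht0 : t ≠ 0 := ht.ne'
    field_simp
  have hnum : 0 ≤ t*(A - C) - s*(B - C) := by nlinarith
  have : (t*(A - C) - s*(B - C))/(s*t) ≤ 0 :=
    div_nonpos_iff.mpr (Or.inl ⟨hnum, hst.le⟩)
  linarith [e ▸ this]

lemma exists_tau (hx : x ∈ opc d) (u : Fin d → ℝ) :
    ∃ τ : ℝ, 0 < τ ∧ ∀ t : ℝ, |t| ≤ τ → x + t•u ∈ cube d := by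
  obtain ⟨ε, hε, hball⟩ := Metric.isOpen_iff.mp (isOpen_opc (d := d)) x hx
  refine ⟨ε/(2*(‖u‖+1)), by positivity, fun t ht => ?_⟩
  apply opc_subset_cube
  apply hball
  rw [Metric.mem_ball, dist_eq_norm, add_sub_cancel_left, norm_smul, Real.norm_eq_abs]
  have h1 : ‖u‖ ≤ ‖u‖ + 1 := by linarith
  have h2 : |t| * ‖u‖ ≤ (ε/(2*(‖u‖+1))) * (‖u‖+1) := by
    apply mul_le_mul ht h1 (norm_nonneg u) (by positivity)
  have h3 : (ε/(2*(‖u‖+1))) * (‖u‖+1) = ε/2 := by field_simp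
  linarith

noncomputable def slopeSet (φ : (Fin d → ℝ) → ℝ) (x u : Fin d → ℝ) : Set ℝ :=
  (fun t => (φ (x + t•u) - φ x)/t) '' {t : ℝ | 0 < t ∧ x + t•u ∈ cube d}

noncomputable def Dder (φ : (Fin d → ℝ) → ℝ) (x u : Fin d → ℝ) : ℝ := sInf (slopeSet φ x u)

lemma slopeSet_nonempty (hx : x ∈ opc d) (u : Fin d → ℝ) : (slopeSet φ x u).Nonempty := by
  obtain ⟨τ, hτ, hmem⟩ := exists_tau hx u
  exact ⟨_, ⟨τ, ⟨hτ, hmem τ (by rw [abs_of_pos hτ])⟩, rfl⟩⟩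

lemma bddBelow_slopeSet (hconv : ConvexOn ℝ (cube d) φ) (hx : x ∈ opc d) (u : Fin d → ℝ) :
    BddBelow (slopeSet φ x u) := by
  obtain ⟨τ, hτ, hmem⟩ := exists_tau hx u
  refine ⟨(φ (x + (-τ)•u) - φ x)/(-τ), ?_⟩
  rintro r ⟨t, ⟨ht, hm⟩, rfl⟩
  exact slope_neg_le hconv (by linarith) ht (hmem (-τ) (by rw [abs_neg, abs_of_pos hτ])) hm

lemma Dder_le_slope (hconv : ConvexOn ℝ (cube d) φ) (hx : x ∈ opc d) {t : ℝ}
    (ht : 0 < t) (hmem : x + t•u ∈ cube d) :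
    Dder φ x u ≤ (φ (x + t•u) - φ x)/t :=
  csInf_le (bddBelow_slopeSet hconv hx u) ⟨t, ⟨ht, hmem⟩, rfl⟩

lemma slope_le_Dder (hconv : ConvexOn ℝ (cube d) φ) (hx : x ∈ opc d) {t : ℝ}
    (ht : t < 0) (hmem : x + t•u ∈ cube d) :
    (φ (x + t•u) - φ x)/t ≤ Dder φ x u := by
  apply le_csInf (slopeSet_nonempty hx u)
  rintro r ⟨s, ⟨hs, hm⟩, rfl⟩
  exact slope_neg_le hconv ht hs hmem hm

lemma exists_slope_lt (hx : x ∈ opc d) (u : Fin d → ℝ) {ε : ℝ} (hε : 0 < ε) :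
    ∃ t : ℝ, 0 < t ∧ x + t•u ∈ cube d ∧ (φ (x + t•u) - φ x)/t < Dder φ x u + ε := by
  obtain ⟨r, ⟨t, ⟨ht, hm⟩, rfl⟩, hlt⟩ :=
    exists_lt_of_csInf_lt (slopeSet_nonempty hx u) (lt_add_of_pos_right (Dder φ x u) hε)
  exact ⟨t, ht, hm, hlt⟩

end Slopes


section Linearity

variable {φ : (Fin d → ℝ) → ℝ} {x : Fin d → ℝ}

lemma Dder_add_le (hconv : ConvexOn ℝ (cube d) φ) (hx : x ∈ opc d) (u v : Fin d → ℝ) :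
    Dder φ x (u + v) ≤ Dder φ x u + Dder φ x v := by
  refine le_of_forall_pos_le_add fun ε hε => ?_
  obtain ⟨t₁, ht₁, hm₁, hlt₁⟩ := exists_slope_lt (φ := φ) hx u (half_pos hε)
  obtain ⟨t₂, ht₂, hm₂, hlt₂⟩ := exists_slope_lt (φ := φ) hx v (half_pos hε)
  set t := min t₁ t₂ / 2 with htdef
  have ht : 0 < t := by positivity
  have hxc : x ∈ cube d := opc_subset_cube hx
  have h2t1 : 2 * t ≤ t₁ := by
    have := min_le_left t₁ t₂; rw [htdef]; linarith
  have h2t2 : 2 * t ≤ t₂ := by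
    have := min_le_right t₁ t₂; rw [htdef]; linarith
  have mem1 : x + (2*t)•u ∈ cube d := mem_of_seg hxc ht₁ hm₁ (by linarith) h2t1
  have mem2 : x + (2*t)•v ∈ cube d := mem_of_seg hxc ht₂ hm₂ (by linarith) h2t2
  have hpt : (1/2 : ℝ) • (x + (2*t)•u) + (1/2 : ℝ) • (x + (2*t)•v) = x + t•(u+v) := by
    funext i
    simp only [Pi.add_apply, Pi.smul_apply, smul_eq_mul]
    ring
  have memsum : x + t•(u+v) ∈ cube d := by
    have := (convex_Icc (0 : Fin d → ℝ) 1) mem1 mem2 (by norm_num) (by norm_num)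
      (by norm_num : (1/2 : ℝ) + 1/2 = 1)
    rwa [hpt] at this
  have key := hconv.2 mem1 mem2 (by norm_num) (by norm_num) (by norm_num : (1/2:ℝ)+1/2 = 1)
  rw [hpt] at key
  have hslope : (φ (x + t•(u+v)) - φ x)/t ≤
      (φ (x + (2*t)•u) - φ x)/(2*t) + (φ (x + (2*t)•v) - φ x)/(2*t) := by
    rw [← add_div, div_le_div_iff₀ ht (by linarith)]
    simp only [smul_eq_mul] at key
    nlinarith
  have hm1' : (φ (x + (2*t)•u) - φ x)/(2*t) ≤ (φ (x + t₁•u) - φ x)/t₁ :=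
    slope_mono hconv hxc (by linarith) h2t1 hm₁
  have hm2' : (φ (x + (2*t)•v) - φ x)/(2*t) ≤ (φ (x + t₂•v) - φ x)/t₂ :=
    slope_mono hconv hxc (by linarith) h2t2 hm₂
  have hD := Dder_le_slope hconv hx ht memsum
  linarith

lemma Dder_smul_pos (hconv : ConvexOn ℝ (cube d) φ) (hx : x ∈ opc d) (u : Fin d → ℝ)
    {c : ℝ} (hc : 0 < c) : Dder φ x (c•u) = c * Dder φ x u := by
  apply le_antisymm
  · refine le_of_forall_pos_le_add fun ε hε => ?_
    obtain ⟨t, ht, hm, hlt⟩ := exists_slope_lt (φ := φ) hx u (div_pos hε hc)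
    have harg : (t/c)•(c•u) = t•u := by
      rw [smul_smul, div_mul_cancel₀ _ hc.ne']
    have hmem : x + (t/c)•(c•u) ∈ cube d := by rw [harg]; exact hm
    have hD := Dder_le_slope hconv hx (div_pos ht hc) hmem
    rw [harg] at hD
    have hval : (φ (x + t•u) - φ x)/(t/c) = c * ((φ (x + t•u) - φ x)/t) := by
      field_simp
    rw [hval] at hD
    have : c * ((φ (x + t•u) - φ x)/t) ≤ c * (Dder φ x u + ε/c) :=
      mul_le_mul_of_nonneg_left hlt.le hc.le
    have heq : c * (Dder φ x u + ε/c) = c * Dder φ x u + ε := by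
      field_simp
    linarith
  · refine le_of_forall_pos_le_add fun ε hε => ?_
    obtain ⟨t, ht, hm, hlt⟩ := exists_slope_lt (φ := φ) hx (c•u) hε
    have harg : t•(c•u) = (c*t)•u := by rw [smul_smul, mul_comm]
    have hmem : x + (c*t)•u ∈ cube d := by rw [← harg]; exact hm
    have hD := Dder_le_slope hconv hx (mul_pos hc ht) hmem
    have hval : (φ (x + t•(c•u)) - φ x)/t = c * ((φ (x + (c*t)•u) - φ x)/(c*t)) := by
      rw [harg]
      field_simp
    rw [hval] at hlt
    have : c * Dder φ x u ≤ c * ((φ (x + (c*t)•u) - φ x)/(c*t)) :=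
      mul_le_mul_of_nonneg_left hD hc.le
    linarith

lemma Dder_zero (hconv : ConvexOn ℝ (cube d) φ) (hx : x ∈ opc d) : Dder φ x 0 = 0 := by
  have hxc : x ∈ cube d := opc_subset_cube hx
  apply le_antisymm
  · have hmem : x + (1:ℝ)•(0 : Fin d → ℝ) ∈ cube d := by simpa using hxc
    have := Dder_le_slope hconv hx one_pos hmem
    simpa using this
  · apply le_csInf (slopeSet_nonempty hx 0)
    rintro r ⟨t, ⟨ht, hm⟩, rfl⟩
    simp

lemma neg_Dder_le_Dder_neg (hconv : ConvexOn ℝ (cube d) φ) (hx : x ∈ opc d) (u : Fin d → ℝ) :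
    -Dder φ x u ≤ Dder φ x (-u) := by
  apply le_csInf (slopeSet_nonempty hx (-u))
  rintro r ⟨t, ⟨ht, hm⟩, rfl⟩
  have harg : t•(-u) = (-t)•u := by rw [smul_neg, neg_smul]
  have hmem : x + (-t)•u ∈ cube d := by rw [← harg]; exact hm
  have hD := slope_le_Dder hconv hx (neg_neg_iff_pos.mpr ht) hmem
  have hval : (φ (x + (-t)•u) - φ x)/(-t) = -((φ (x + t•(-u)) - φ x)/t) := by
    rw [harg, div_neg]
  rw [hval] at hD
  linarith

end Linearity


section Core

variable {φ : (Fin d → ℝ) → ℝ}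

lemma sd_smul_le (hconv : ConvexOn ℝ (cube d) φ) {x H : Fin d → ℝ}
    (hp : x + H ∈ cube d) (hm : x - H ∈ cube d) {t : ℝ} (ht : 0 ≤ t) (ht1 : t ≤ 1) :
    sd φ x (t•H) ≤ t * sd φ x H := by
  have h1 : φ (x + t•H) ≤ (1-t) * φ x + t * φ (x + H) := by
    have hxc : x ∈ cube d := by
      have hpt : (1/2 : ℝ) • (x + H) + (1/2 : ℝ) • (x - H) = x := by
        funext i; simp only [Pi.add_apply, Pi.sub_apply, Pi.smul_apply, smul_eq_mul]; ring
      have := (convex_Icc (0 : Fin d → ℝ) 1) hp hm (by norm_num) (by norm_num)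
        (by norm_num : (1/2:ℝ)+1/2 = 1)
      rwa [hpt] at this
    have hpt : (1-t) • x + t • (x + H) = x + t•H := by
      funext i; simp only [Pi.add_apply, Pi.smul_apply, smul_eq_mul]; ring
    have := hconv.2 hxc hp (show (0:ℝ) ≤ 1 - t by linarith) ht (by ring)
    rwa [hpt] at this
  have h2 : φ (x - t•H) ≤ (1-t) * φ x + t * φ (x - H) := by
    have hxc : x ∈ cube d := by
      have hpt : (1/2 : ℝ) • (x + H) + (1/2 : ℝ) • (x - H) = x := by
        funext i; simp only [Pi.add_apply, Pi.sub_apply, Pi.smul_apply, smul_eq_mul]; ring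
      have := (convex_Icc (0 : Fin d → ℝ) 1) hp hm (by norm_num) (by norm_num)
        (by norm_num : (1/2:ℝ)+1/2 = 1)
      rwa [hpt] at this
    have hpt : (1-t) • x + t • (x - H) = x - t•H := by
      funext i; simp only [Pi.add_apply, Pi.sub_apply, Pi.smul_apply, smul_eq_mul]; ring
    have := hconv.2 hxc hm (show (0:ℝ) ≤ 1 - t by linarith) ht (by ring)
    rwa [hpt] at this
  simp only [sd]
  linarith

/-- Key scaling: from the small second difference at scale `δ`, deduce a proportional
bound for all `‖h‖ ≤ δ`. -/
lemma sd_prop (hconv : ConvexOn ℝ (cube d) φ) {n : ℕ} {δ : ℝ} (hδ : 0 < δ) (hδa : δ ≤ al n)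
    (hsd : ∀ x ∈ Kn d n, ∀ u : Fin d → ℝ, ‖u‖ ≤ δ → sd φ x u ≤ δ/(n+1)) :
    ∀ x ∈ Kn d n, ∀ h : Fin d → ℝ, ‖h‖ ≤ δ → sd φ x h ≤ ‖h‖/(n+1) := by
  intro x hx h hh
  rcases eq_or_ne h 0 with rfl | hne
  · simp only [sd, add_zero, sub_zero, norm_zero, zero_div]
    linarith
  · have hn : 0 < ‖h‖ := norm_pos_iff.mpr hne
    set H : Fin d → ℝ := (δ/‖h‖)•h with hHdef
    have hH : ‖H‖ = δ := by
      rw [hHdef, norm_smul, Real.norm_eq_abs, abs_of_pos (by positivity), div_mul_cancel₀ _ hn.ne']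
    have hp : x + H ∈ cube d := Kn_margin hx (hH.le.trans hδa)
    have hm : x - H ∈ cube d := Kn_margin' hx (hH.le.trans hδa)
    have ht0 : 0 ≤ ‖h‖/δ := by positivity
    have ht1 : ‖h‖/δ ≤ 1 := (div_le_one hδ).mpr hh
    have hrec : (‖h‖/δ)•H = h := by
      rw [hHdef, smul_smul, div_mul_div_comm, mul_comm, ← div_mul_div_comm,
        div_self hδ.ne', div_self hn.ne', one_mul, one_smul]
    have := sd_smul_le hconv hp hm ht0 ht1
    rw [hrec] at this
    have hb := hsd x hx H hH.le
    calc sd φ x h ≤ (‖h‖/δ) * sd φ x H := this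
    _ ≤ (‖h‖/δ) * (δ/(n+1)) := by
        apply mul_le_mul_of_nonneg_left hb ht0
    _ = ‖h‖/(n+1) := by field_simp

/-- Two-sided uniform differentiability estimate. -/
lemma est (hconv : ConvexOn ℝ (cube d) φ) {n : ℕ} {δ : ℝ} (hδ : 0 < δ) (hδa : δ ≤ al n)
    (hkey : ∀ x ∈ Kn d n, ∀ h : Fin d → ℝ, ‖h‖ ≤ δ → sd φ x h ≤ ‖h‖/(n+1))
    {z g : Fin d → ℝ} (hz : z ∈ Kn d n) (hg : ‖g‖ ≤ δ) :
    0 ≤ φ (z + g) - φ z - Dder φ z g ∧ φ (z + g) - φ z - Dder φ z g ≤ ‖g‖/(n+1) := by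
  have hzo : z ∈ opc d := Kn_subset_opc hz
  have hga : ‖g‖ ≤ al n := hg.trans hδa
  have hp : z + g ∈ cube d := Kn_margin hz hga
  have hm : z - g ∈ cube d := Kn_margin' hz hga
  have hp1 : z + (1:ℝ)•g ∈ cube d := by simpa using hp
  have hupper := Dder_le_slope hconv hzo one_pos hp1
  simp only [one_smul, div_one] at hupper
  have hm1 : z + (-1:ℝ)•g ∈ cube d := by
    have : z + (-1:ℝ)•g = z - g := by funext i; simp; ring
    rwa [this]
  have hlower := slope_le_Dder hconv hzo (by norm_num : (-1:ℝ) < 0) hm1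
  have harg : z + (-1:ℝ)•g = z - g := by funext i; simp; ring
  rw [harg] at hlower
  have hval : (φ (z - g) - φ z)/(-1 : ℝ) = φ z - φ (z - g) := by ring
  rw [hval] at hlower
  have hsd := hkey z hz g hg
  simp only [sd] at hsd
  constructor
  · linarith
  · linarith

open scoped Classical in
noncomputable def Dlin (φ : (Fin d → ℝ) → ℝ) (x : Fin d → ℝ) : (Fin d → ℝ) →L[ℝ] ℝ :=
  if h : IsLinearMap ℝ (Dder φ x) then
    LinearMap.toContinuousLinearMap (IsLinearMap.mk' (Dder φ x) h) else 0

lemma Dlin_apply {x : Fin d → ℝ} (h : IsLinearMap ℝ (Dder φ x)) (u : Fin d → ℝ) :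
    Dlin φ x u = Dder φ x u := by
  classical
  simp only [Dlin, dif_pos h]
  rfl

/-- Linearity of the directional derivative under the key estimates. -/
lemma Dder_isLinear (hconv : ConvexOn ℝ (cube d) φ) {x : Fin d → ℝ} (hx : x ∈ opc d)
    (hKey : ∀ n : ℕ, ∃ δ : ℝ, 0 < δ ∧ δ ≤ al n ∧
      ∀ z ∈ Kn d n, ∀ h : Fin d → ℝ, ‖h‖ ≤ δ → sd φ z h ≤ ‖h‖/(n+1)) :
    IsLinearMap ℝ (Dder φ x) := by
  -- oddness
  have hodd : ∀ u : Fin d → ℝ, Dder φ x (-u) = -Dder φ x u := by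
    intro u
    have hge := neg_Dder_le_Dder_neg hconv hx u
    have hle : Dder φ x u + Dder φ x (-u) ≤ 0 := by
      by_contra hcon
      push_neg at hcon
      set c := Dder φ x u + Dder φ x (-u) with hc
      obtain ⟨N₁, hN₁⟩ := (eventually_mem_Kn hx).exists_forall_of_atTop
      obtain ⟨N₂, hN₂⟩ := exists_nat_gt (‖u‖/c)
      set n := max N₁ N₂ with hn
      have hxK : x ∈ Kn d n := hN₁ n (le_max_left _ _)
      obtain ⟨δ, hδ, hδa, hkey⟩ := hKey n
      set t := δ/(‖u‖+1) with ht
      have htpos : 0 < t := by positivity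
      have htu : ‖t•u‖ ≤ δ := by
        rw [norm_smul, Real.norm_eq_abs, abs_of_pos htpos]
        rw [ht, div_mul_eq_mul_div, div_le_iff₀ (by positivity)]
        nlinarith [norm_nonneg u]
      have hp : x + t•u ∈ cube d := Kn_margin hxK (htu.trans hδa)
      have hm' : x + t•(-u) ∈ cube d := by
        have harg : x + t•(-u) = x - t•u := by funext i; simp; ring
        rw [harg]
        exact Kn_margin' hxK (htu.trans hδa)
      have h1 := Dder_le_slope hconv hx htpos hp
      have h2 := Dder_le_slope hconv hx htpos hm'
      have harg : x + t•(-u) = x - t•u := by funext i; simp; ring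
      rw [harg] at h2
      have hsum : Dder φ x u + Dder φ x (-u) ≤ sd φ x (t•u)/t := by
        simp only [sd]
        have : (φ (x + t•u) - φ x)/t + (φ (x - t•u) - φ x)/t
            = (φ (x + t•u) + φ (x - t•u) - 2*φ x)/t := by ring
        linarith [this ▸ add_le_add h1 h2]
      have hsd := hkey x hxK (t•u) htu
      have hns : ‖t•u‖ = t * ‖u‖ := by
        rw [norm_smul, Real.norm_eq_abs, abs_of_pos htpos]
      rw [hns, le_div_iff₀ (by positivity)] at hsd
      have hbound : sd φ x (t•u)/t ≤ ‖u‖/(n+1) := by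
        rw [div_le_div_iff₀ htpos (by positivity)]
        nlinarith [hsd, htpos]
      have hcN : ‖u‖/(n+1) < c := by
        have hNc : (N₂:ℝ) ≤ n := Nat.cast_le.mpr (le_max_right _ _)
        rw [div_lt_iff₀ (by positivity)]
        have h3 : ‖u‖/c < N₂ := hN₂
        have h4 : ‖u‖ < c * N₂ := by
          rw [div_lt_iff₀ hcon] at h3
          linarith [h3]
        have : c * (N₂:ℝ) ≤ c * (n+1) := by
          apply mul_le_mul_of_nonneg_left _ hcon.le
          linarith
        linarith
      have : c ≤ ‖u‖/(n+1) := le_trans (le_of_eq hc) (hsum.trans hbound)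
      linarith
    linarith
  have hadd : ∀ u v, Dder φ x (u + v) = Dder φ x u + Dder φ x v := by
    intro u v
    apply le_antisymm (Dder_add_le hconv hx u v)
    have h1 := Dder_add_le hconv hx (-u) (-v)
    have harg : -u + -v = -(u+v) := (neg_add u v).symm
    rw [harg, hodd (u+v), hodd u, hodd v] at h1
    linarith
  have hsmul : ∀ (c : ℝ) (u), Dder φ x (c • u) = c • Dder φ x u := by
    intro c u
    rcases lt_trichotomy c 0 with hc | hc | hc
    · have harg : c • u = (-c) • (-u) := by rw [smul_neg, neg_smul, neg_neg]
      rw [harg, Dder_smul_pos hconv hx (-u) (by linarith), hodd u, smul_eq_mul]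
      ring
    · subst hc
      simp only [zero_smul, smul_eq_mul, zero_mul]
      exact Dder_zero hconv hx
    · rw [Dder_smul_pos hconv hx u hc, smul_eq_mul]
  exact ⟨hadd, hsmul⟩

end Core


section MainCore

variable {φ : (Fin d → ℝ) → ℝ}

set_option maxHeartbeats 1000000 in
/-- The central analytic result: the key second-difference estimates imply that `φ` is
differentiable on the open cube with continuous derivative `Dlin φ`. -/
theorem core (hconv : ConvexOn ℝ (cube d) φ) (hcont : Continuous φ)
    (hKey : ∀ n : ℕ, ∃ δ : ℝ, 0 < δ ∧ δ ≤ al n ∧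
      ∀ z ∈ Kn d n, ∀ h : Fin d → ℝ, ‖h‖ ≤ δ → sd φ z h ≤ ‖h‖/(n+1)) :
    ContinuousOn (Dlin φ) (opc d) ∧ ∀ x ∈ opc d, HasFDerivAt φ (Dlin φ x) x := by
  have hlin : ∀ x ∈ opc d, IsLinearMap ℝ (Dder φ x) :=
    fun x hx => Dder_isLinear hconv hx hKey
  -- uniform continuity of φ on the cube
  have hunif := (isCompact_Icc : IsCompact (cube d)).uniformContinuousOn_of_continuous
    hcont.continuousOn
  rw [Metric.uniformContinuousOn_iff] at hunif
  constructor
  · -- continuity of the derivative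
    rw [Metric.continuousOn_iff]
    intro x hx ε hε
    obtain ⟨N₁, hN₁⟩ := (eventually_mem_Kn hx).exists_forall_of_atTop
    obtain ⟨N₂, hN₂⟩ := exists_nat_gt (4/ε)
    set n0 := max N₁ N₂ with hn0
    set n := n0 + 1 with hn
    have hxK0 : x ∈ Kn d n0 := hN₁ n0 (le_max_left _ _)
    have hxK : x ∈ Kn d n := hN₁ n (le_trans (le_max_left N₁ N₂) (Nat.le_succ n0))
    obtain ⟨δ, hδ, hδa, hkey⟩ := hKey n
    have hεn : 2/(n+1) ≤ ε/2 := by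
      have h1 : 4/ε < N₂ := hN₂
      have h2 : (N₂:ℝ) ≤ n + 1 := by
        have : (N₂ : ℝ) ≤ n0 := Nat.cast_le.mpr (le_max_right _ _)
        rw [hn]; push_cast; linarith
      rw [div_le_div_iff₀ (by positivity) (by norm_num)]
      have h3 : 4 < ε * N₂ := by
        rw [div_lt_iff₀ hε] at h1; linarith
      nlinarith [hε]
    -- radius keeping us inside Kn d n
    have hr : 0 < al n0 - al n := by
      have := al_strict (show n0 < n by omega)
      linarith
    -- uniform continuity radius
    obtain ⟨ρ, hρ, hρval⟩ := hunif (ε * δ / 8) (by positivity)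
    refine ⟨min (al n0 - al n) ρ, lt_min hr hρ, fun y hy hdist => ?_⟩
    have hyK : y ∈ Kn d n := by
      apply ball_subset_Kn hxK0 (by omega)
      rw [← dist_eq_norm]
      exact le_trans hdist.le (min_le_left _ _)
    have hdistρ : dist y x < ρ := lt_of_lt_of_le hdist (min_le_right _ _)
    -- bound ‖Dlin φ y - Dlin φ x‖ ≤ 3ε/4
    have hbound : ∀ h : Fin d → ℝ, ‖(Dlin φ y - Dlin φ x) h‖ ≤ (3*ε/4) * ‖h‖ := by
      intro h
      rcases eq_or_ne h 0 with rfl | hne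
      · simp
      · have hnh : 0 < ‖h‖ := norm_pos_iff.mpr hne
        set g : Fin d → ℝ := (δ/‖h‖)•h with hgdef
        have hg : ‖g‖ = δ := by
          rw [hgdef, norm_smul, Real.norm_eq_abs, abs_of_pos (by positivity),
            div_mul_cancel₀ _ hnh.ne']
        have hrec : h = (‖h‖/δ)•g := by
          rw [hgdef, smul_smul]
          rw [show ‖h‖/δ * (δ/‖h‖) = 1 by field_simp]
          rw [one_smul]
        have hex := est hconv hδ hδa hkey hxK hg.le
        have hey := est hconv hδ hδa hkey hyK hg.le
        have hDx := Dlin_apply (hlin x hx) g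
        have hDy := Dlin_apply (hlin y (Kn_subset_opc hyK)) g
        have hcube : ∀ z ∈ Kn d n, z ∈ cube d := fun z hz => Kn_subset_cube hz
        have h3 : dist (φ (x+g)) (φ (y+g)) < ε * δ / 8 := by
          apply hρval (x+g) (Kn_margin hxK (hg.le.trans hδa)) (y+g)
            (Kn_margin hyK (hg.le.trans hδa))
          rw [dist_eq_norm] at hdistρ ⊢
          rw [show x + g - (y + g) = x - y by abel]
          rw [show y - x = -(x - y) by abel, norm_neg] at hdistρ
          exact hdistρ
        have h4 : dist (φ x) (φ y) < ε * δ / 8 := by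
          apply hρval x (hcube x hxK) y (hcube y hyK)
          rw [dist_comm]
          exact hdistρ
        rw [Real.dist_eq] at h3 h4
        have e1 := hex.1; have e2 := hex.2
        have e3 := hey.1; have e4 := hey.2
        rw [hg] at e2 e4
        set B := δ/((n:ℝ)+1) with hBdef
        have b3 := abs_le.mp (le_of_lt h3)
        have b4 := abs_le.mp (le_of_lt h4)
        have habs : |Dder φ y g - Dder φ x g| ≤ B + B + ε*δ/8 + ε*δ/8 := by
          rw [abs_le]
          constructor
          · linarith [b3.1, b3.2, b4.1, b4.2, e1, e2, e3, e4]
          · linarith [b3.1, b3.2, b4.1, b4.2, e1, e2, e3, e4]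
        have hn1 : (0:ℝ) < (n:ℝ)+1 := by positivity
        have h6 : 1/((n:ℝ)+1) ≤ ε/4 := by
          rw [div_le_iff₀ hn1]
          rw [div_le_div_iff₀ hn1 (by norm_num : (0:ℝ) < 2)] at hεn
          nlinarith
        have hB4 : B ≤ δ * (ε/4) := by
          rw [hBdef, show δ/((n:ℝ)+1) = δ * (1/((n:ℝ)+1)) by ring]
          exact mul_le_mul_of_nonneg_left h6 hδ.le
        have hval : ‖(Dlin φ y - Dlin φ x) g‖ ≤ (3*ε/4) * δ := by
          rw [ContinuousLinearMap.sub_apply, hDx, hDy, Real.norm_eq_abs]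
          calc |Dder φ y g - Dder φ x g| ≤ B + B + ε*δ/8 + ε*δ/8 := habs
          _ ≤ (3*ε/4) * δ := by nlinarith
        have hscale : (Dlin φ y - Dlin φ x) h = (‖h‖/δ) • ((Dlin φ y - Dlin φ x) g) := by
          conv_lhs => rw [hrec]
          rw [map_smul]
        rw [hscale, norm_smul, Real.norm_eq_abs, abs_of_pos (by positivity)]
        calc ‖h‖/δ * ‖(Dlin φ y - Dlin φ x) g‖ ≤ ‖h‖/δ * ((3*ε/4) * δ) :=
              mul_le_mul_of_nonneg_left hval (by positivity)
        _ = (3*ε/4) * ‖h‖ := by field_simp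
    have hnorm : dist (Dlin φ y) (Dlin φ x) ≤ 3*ε/4 := by
      rw [dist_eq_norm]
      exact ContinuousLinearMap.opNorm_le_bound _ (by positivity) hbound
    linarith
  · -- differentiability
    intro x hx
    rw [hasFDerivAt_iff_isLittleO_nhds_zero, Asymptotics.isLittleO_iff]
    intro c hc
    obtain ⟨N₁, hN₁⟩ := (eventually_mem_Kn hx).exists_forall_of_atTop
    obtain ⟨N₂, hN₂⟩ := exists_nat_gt (1/c)
    set n := max N₁ N₂ with hn
    have hxK : x ∈ Kn d n := hN₁ n (le_max_left _ _)
    obtain ⟨δ, hδ, hδa, hkey⟩ := hKey n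
    have hcn : 1/((n:ℝ)+1) ≤ c := by
      have h1 : 1/c < N₂ := hN₂
      have h2 : (N₂:ℝ) ≤ n + 1 := by
        have : (N₂ : ℝ) ≤ n := Nat.cast_le.mpr (le_max_right _ _)
        linarith
      rw [div_le_iff₀ (by positivity)]
      rw [div_lt_iff₀ hc] at h1
      nlinarith [mul_le_mul_of_nonneg_left h2 hc.le]
    filter_upwards [Metric.closedBall_mem_nhds (0 : Fin d → ℝ) hδ] with h hh
    rw [Metric.mem_closedBall, dist_zero_right] at hh
    have he := est hconv hδ hδa hkey hxK hh
    rw [← Dlin_apply (hlin x hx) h] at he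
    rw [Real.norm_eq_abs, abs_le]
    have hb : ‖h‖/(n+1) ≤ c * ‖h‖ := by
      rw [div_eq_mul_one_div]
      rw [mul_comm c ‖h‖]
      exact mul_le_mul_of_nonneg_left hcn (norm_nonneg h)
    constructor
    · have : 0 ≤ c * ‖h‖ := by positivity
      linarith [he.1]
    · linarith [he.2]

end MainCore


section Gsets

/-- The canonical continuous extension of a continuous map on the cube, via clamping. -/
noncomputable def phiExt (f : C(Set.Icc (0 : Fin d → ℝ) 1, ℝ)) : (Fin d → ℝ) → ℝ :=
  fun x => f ⟨clampPt x, clampPt_mem x⟩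

lemma phiExt_eq (f : C(Set.Icc (0 : Fin d → ℝ) 1, ℝ)) {x : Fin d → ℝ} (hx : x ∈ cube d) :
    phiExt f x = f ⟨x, hx⟩ := by
  simp only [phiExt]
  congr 1
  exact Subtype.ext (clampPt_eq hx)

lemma phiExt_continuous (f : C(Set.Icc (0 : Fin d → ℝ) 1, ℝ)) : Continuous (phiExt f) :=
  f.continuous.comp (continuous_clampPt.subtype_mk _)

end Gsets

end GCD

/-- A continuous map `f` on the cube `[0,1]^d` is convex. -/
def IsConvexMapOnCube {d : ℕ} (f : C(Set.Icc (0 : Fin d → ℝ) 1, ℝ)) : Prop :=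
  ∀ (x y z : Set.Icc (0 : Fin d → ℝ) 1) (s t : ℝ), 0 ≤ s → 0 ≤ t → s + t = 1 →
    (z : Fin d → ℝ) = s • (x : Fin d → ℝ) + t • (y : Fin d → ℝ) →
    f z ≤ s * f x + t * f y

/-- The space `CC` of continuous convex functions on `[0,1]^d`, with the sup-norm
(metric) topology inherited from `C([0,1]^d, ℝ)`. -/
abbrev CCSpace (d : ℕ) := {f : C(Set.Icc (0 : Fin d → ℝ) 1, ℝ) // IsConvexMapOnCube f}

namespace GCD

variable {d : ℕ}

lemma phiExt_convexOn {f : C(Set.Icc (0 : Fin d → ℝ) 1, ℝ)} (hf : IsConvexMapOnCube f) :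
    ConvexOn ℝ (cube d) (phiExt f) := by
  constructor
  · exact convex_Icc _ _
  · intro x hx y hy a b ha hb hab
    have hz : a • x + b • y ∈ cube d := (convex_Icc (0 : Fin d → ℝ) 1) hx hy ha hb hab
    rw [phiExt_eq f hx, phiExt_eq f hy, phiExt_eq f hz]
    exact hf ⟨x, hx⟩ ⟨y, hy⟩ ⟨a • x + b • y, hz⟩ a b ha hb hab rfl

lemma convexMap_of_convexOn {h : (Fin d → ℝ) → ℝ} (hcv : ConvexOn ℝ Set.univ h)
    (f : C(Set.Icc (0 : Fin d → ℝ) 1, ℝ)) (hfh : ∀ p : Set.Icc (0 : Fin d → ℝ) 1, f p = h p.1) :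
    IsConvexMapOnCube f := by
  intro x y z s t hs ht hst hz
  rw [hfh x, hfh y, hfh z, hz]
  have := hcv.2 (Set.mem_univ (x : Fin d → ℝ)) (Set.mem_univ (y : Fin d → ℝ)) hs ht hst
  simpa using this

/-- The open sets whose intersection is the generic set. -/
noncomputable def Gset (d n : ℕ) : Set (CCSpace d) :=
  {f | ∃ δ : ℝ, 0 < δ ∧ δ ≤ al n ∧ ∀ x ∈ Kn d n, ∀ u : Fin d → ℝ, ‖u‖ ≤ δ →
    sd (phiExt f.1) x u < δ/(n+1)}

lemma phiExt_dist_le {f g : CCSpace d} (z : Fin d → ℝ) :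
    |phiExt f.1 z - phiExt g.1 z| ≤ dist f g := by
  have h1 : dist (f.1 ⟨clampPt z, clampPt_mem z⟩) (g.1 ⟨clampPt z, clampPt_mem z⟩)
      ≤ dist f.1 g.1 := ContinuousMap.dist_apply_le_dist _
  rw [Subtype.dist_eq] at *
  rw [Real.dist_eq] at h1
  exact h1

lemma isOpen_Gset (d n : ℕ) : IsOpen (Gset d n) := by
  rw [Metric.isOpen_iff]
  rintro f ⟨δ, hδ, hδa, hf⟩
  set S : Set ((Fin d → ℝ) × (Fin d → ℝ)) := (Kn d n) ×ˢ (Metric.closedBall 0 δ) with hS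
  have hScomp : IsCompact S := (isCompact_Kn n).prod (isCompact_closedBall 0 δ)
  have hSne : S.Nonempty := ⟨((fun _ => 1/2), 0), center_mem_Kn n, Metric.mem_closedBall_self hδ.le⟩
  have hcont : Continuous fun p : (Fin d → ℝ) × (Fin d → ℝ) => sd (phiExt f.1) p.1 p.2 := by
    unfold sd
    have hc := phiExt_continuous f.1
    exact ((hc.comp (continuous_fst.add continuous_snd)).add
      (hc.comp (continuous_fst.sub continuous_snd))).sub
      ((continuous_const).mul (hc.comp continuous_fst))
  obtain ⟨⟨x₀, u₀⟩, hmem, hmax⟩ := hScomp.exists_isMaxOn hSne hcont.continuousOn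
  have hx₀ : x₀ ∈ Kn d n := hmem.1
  have hu₀ : ‖u₀‖ ≤ δ := by
    have := hmem.2
    rwa [Metric.mem_closedBall, dist_zero_right] at this
  set M := sd (phiExt f.1) x₀ u₀ with hM
  have hMlt : M < δ/(n+1) := hf x₀ hx₀ u₀ hu₀
  refine ⟨(δ/(n+1) - M)/5, by linarith, ?_⟩
  intro g hg
  rw [Metric.mem_ball] at hg
  refine ⟨δ, hδ, hδa, fun x hx u hu => ?_⟩
  have hmemS : (x, u) ∈ S := ⟨hx, by rwa [Metric.mem_closedBall, dist_zero_right]⟩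
  have hle : sd (phiExt f.1) x u ≤ M := hmax hmemS
  have hd := phiExt_dist_le (f := g) (g := f) (x + u)
  have hd2 := phiExt_dist_le (f := g) (g := f) (x - u)
  have hd3 := phiExt_dist_le (f := g) (g := f) x
  have b1 := abs_le.mp hd
  have b2 := abs_le.mp hd2
  have b3 := abs_le.mp hd3
  have hdist : dist g f < (δ/(n+1) - M)/5 := hg
  simp only [sd] at hle ⊢
  nlinarith [b1.1, b1.2, b2.1, b2.2, b3.1, b3.2]


section Approx

variable {d : ℕ}

def Qd (v : Fin d → ℝ) : ℝ := ∑ i, (v i)^2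

lemma Qd_nonneg (v : Fin d → ℝ) : 0 ≤ Qd v :=
  Finset.sum_nonneg fun i _ => sq_nonneg _

lemma Qd_zero : Qd (0 : Fin d → ℝ) = 0 := by simp [Qd]

lemma Qd_par (a u : Fin d → ℝ) : Qd (a + u) + Qd (a - u) = 2*Qd a + 2*Qd u := by
  simp only [Qd]
  rw [← Finset.sum_add_distrib, Finset.mul_sum, Finset.mul_sum, ← Finset.sum_add_distrib]
  apply Finset.sum_congr rfl
  intro i _
  simp only [Pi.add_apply, Pi.sub_apply]
  ring

lemma Qd_le (v : Fin d → ℝ) : Qd v ≤ d * ‖v‖^2 := by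
  have h : ∀ i, (v i)^2 ≤ ‖v‖^2 := by
    intro i
    have h1 : |v i| ≤ ‖v‖ := by
      have := norm_le_pi_norm v i; simpa using this
    nlinarith [abs_nonneg (v i), sq_abs (v i)]
  calc Qd v ≤ ∑ _i : Fin d, ‖v‖^2 := Finset.sum_le_sum fun i _ => h i
  _ = d * ‖v‖^2 := by rw [Finset.sum_const, Finset.card_univ, Fintype.card_fin, nsmul_eq_mul]

lemma sq_norm_le_Qd (v : Fin d → ℝ) : ‖v‖^2 ≤ Qd v := by
  have h1 : ‖v‖ ≤ Real.sqrt (Qd v) := by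
    rw [pi_norm_le_iff_of_nonneg (Real.sqrt_nonneg _)]
    intro i
    rw [Real.norm_eq_abs, ← Real.sqrt_sq_eq_abs]
    apply Real.sqrt_le_sqrt
    exact Finset.single_le_sum (fun j _ => sq_nonneg (v j)) (Finset.mem_univ i)
  calc ‖v‖^2 ≤ (Real.sqrt (Qd v))^2 := by nlinarith [norm_nonneg v, Real.sqrt_nonneg (Qd v)]
  _ = Qd v := Real.sq_sqrt (Qd_nonneg v)

lemma Qd_comb {a b : ℝ} (ha : 0 ≤ a) (hb : 0 ≤ b) (hab : a + b = 1) (p q : Fin d → ℝ) :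
    Qd (a•p + b•q) ≤ a*Qd p + b*Qd q := by
  simp only [Qd, Finset.mul_sum, ← Finset.sum_add_distrib]
  apply Finset.sum_le_sum
  intro i _
  simp only [Pi.add_apply, Pi.smul_apply, smul_eq_mul]
  nlinarith [sq_nonneg (p i - q i), mul_nonneg ha hb]

/-- Convex functions with a margin are Lipschitz. -/
lemma convex_lipschitz {ψ : (Fin d → ℝ) → ℝ} {s K : Set (Fin d → ℝ)}
    (hconv : ConvexOn ℝ s ψ) {M m : ℝ} (hm : 0 < m) (hM : ∀ z ∈ s, |ψ z| ≤ M)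
    (hK : ∀ y ∈ K, ∀ z : Fin d → ℝ, ‖z - y‖ ≤ m → z ∈ s) :
    ∀ x ∈ K, ∀ y ∈ K, ψ y - ψ x ≤ (4*M/m) * ‖y - x‖ := by
  intro x hx y hy
  rcases eq_or_ne y x with rfl | hne
  · have hxs : y ∈ s := hK y hx y (by simp [hm.le])
    have hM0 : 0 ≤ M := le_trans (abs_nonneg _) (hM y hxs)
    simp only [sub_self, norm_zero, mul_zero]
    linarith
  · have hxs : x ∈ s := hK x hx x (by simp [hm.le])
    have hys : y ∈ s := hK y hy y (by simp [hm.le])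
    have hM0 : 0 ≤ M := le_trans (abs_nonneg _) (hM x hxs)
    have hnyx : 0 < ‖y - x‖ := by
      rw [norm_pos_iff]
      intro hc
      exact hne (by rwa [sub_eq_zero] at hc)
    set ρ := m/(2*‖y - x‖) with hρdef
    have hρ : 0 < ρ := by positivity
    set z := y + ρ•(y - x) with hzdef
    have hzs : z ∈ s := by
      apply hK y hy
      rw [hzdef, add_sub_cancel_left, norm_smul, Real.norm_eq_abs, abs_of_pos hρ]
      have hne' : ‖y - x‖ ≠ 0 := hnyx.ne'
      have he : ρ * ‖y - x‖ = m / 2 := by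
        rw [hρdef]
        field_simp
      rw [he]
      linarith
    have hpt : (1/(1+ρ)) • z + (ρ/(1+ρ)) • x = y := by
      funext i
      rw [hzdef]
      simp only [Pi.add_apply, Pi.smul_apply, Pi.sub_apply, smul_eq_mul]
      field_simp
      ring
    have hkey := hconv.2 hzs hxs (show (0:ℝ) ≤ 1/(1+ρ) by positivity)
      (show (0:ℝ) ≤ ρ/(1+ρ) by positivity) (by field_simp)
    rw [hpt] at hkey
    simp only [smul_eq_mul] at hkey
    have hzb := hM z hzs
    have hxb := hM x hxs
    have b1 := abs_le.mp hzb
    have b2 := abs_le.mp hxb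
    have h2 : ψ y - ψ x ≤ (1/(1+ρ)) * (ψ z - ψ x) := by
      have : (1/(1+ρ)) * (ψ z) + (ρ/(1+ρ)) * (ψ x) - ψ x = (1/(1+ρ)) * (ψ z - ψ x) := by
        field_simp
        ring
      linarith [hkey, this]
    have h3 : (1/(1+ρ)) * (ψ z - ψ x) ≤ (1/ρ) * (2*M) := by
      rcases le_or_gt (ψ z - ψ x) 0 with hc | hc
      · have hl : (1/(1+ρ)) * (ψ z - ψ x) ≤ 0 :=
          mul_nonpos_iff.mpr (Or.inl ⟨by positivity, hc⟩)
        have hr : 0 ≤ (1/ρ) * (2*M) := by positivity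
        linarith
      · apply mul_le_mul
        · rw [div_le_div_iff₀ (by positivity) hρ]
          linarith
        · linarith
        · linarith
        · positivity
    have h4 : (1/ρ) * (2*M) = (4*M/m) * ‖y - x‖ := by
      rw [hρdef]
      field_simp
      ring
    linarith

/-- Lipschitz convex extension by inf-convolution. -/
noncomputable def extF (ψ : (Fin d → ℝ) → ℝ) (L : ℝ) (y : Fin d → ℝ) : ℝ :=
  sInf ((fun z => ψ z + L * ‖y - z‖) '' cube d)

variable {ψ : (Fin d → ℝ) → ℝ} {L M : ℝ}

lemma cube_nonempty : (cube d).Nonempty :=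
  ⟨0, by rw [mem_cube_iff]; intro i; norm_num⟩

lemma extF_img_nonempty (y : Fin d → ℝ) :
    ((fun z => ψ z + L * ‖y - z‖) '' cube d).Nonempty :=
  cube_nonempty.image _

lemma extF_img_bdd (hM : ∀ z ∈ cube d, |ψ z| ≤ M) (hL : 0 ≤ L) (y : Fin d → ℝ) :
    BddBelow ((fun z => ψ z + L * ‖y - z‖) '' cube d) := by
  refine ⟨-M, ?_⟩
  rintro r ⟨z, hz, rfl⟩
  dsimp only
  have h1 := (abs_le.mp (hM z hz)).1
  have h2 : 0 ≤ L * ‖y - z‖ := mul_nonneg hL (norm_nonneg _)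
  linarith

lemma extF_le (hM : ∀ z ∈ cube d, |ψ z| ≤ M) (hL : 0 ≤ L) {z : Fin d → ℝ} (hz : z ∈ cube d)
    (y : Fin d → ℝ) : extF ψ L y ≤ ψ z + L * ‖y - z‖ :=
  csInf_le (extF_img_bdd hM hL y) ⟨z, hz, rfl⟩

lemma extF_lb (hM : ∀ z ∈ cube d, |ψ z| ≤ M) (hL : 0 ≤ L) (y : Fin d → ℝ) :
    -M ≤ extF ψ L y := by
  apply le_csInf (extF_img_nonempty y)
  rintro r ⟨z, hz, rfl⟩
  dsimp only
  have h1 := (abs_le.mp (hM z hz)).1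
  have h2 : 0 ≤ L * ‖y - z‖ := mul_nonneg hL (norm_nonneg _)
  linarith

lemma extF_eq (hM : ∀ z ∈ cube d, |ψ z| ≤ M) (hL : 0 ≤ L)
    (hlip : ∀ x ∈ cube d, ∀ y ∈ cube d, |ψ y - ψ x| ≤ L * ‖y - x‖)
    {y : Fin d → ℝ} (hy : y ∈ cube d) : extF ψ L y = ψ y := by
  apply le_antisymm
  · have := extF_le hM hL hy y
    simpa using this
  · apply le_csInf (extF_img_nonempty y)
    rintro r ⟨z, hz, rfl⟩
    dsimp only
    have := (abs_le.mp (hlip z hz y hy)).2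
    linarith

lemma extF_lip (hM : ∀ z ∈ cube d, |ψ z| ≤ M) (hL : 0 ≤ L) (y y' : Fin d → ℝ) :
    extF ψ L y ≤ extF ψ L y' + L * ‖y - y'‖ := by
  rw [← sub_le_iff_le_add]
  apply le_csInf (extF_img_nonempty y')
  rintro r ⟨z, hz, rfl⟩
  dsimp only
  rw [sub_le_iff_le_add]
  have h1 := extF_le hM hL hz y
  have h2 : ‖y - z‖ ≤ ‖y' - z‖ + ‖y - y'‖ := by
    calc ‖y - z‖ ≤ ‖y - y'‖ + ‖y' - z‖ := norm_sub_le_norm_sub_add_norm_sub _ _ _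
    _ = ‖y' - z‖ + ‖y - y'‖ := by ring
  have h3 : L * ‖y - z‖ ≤ L * (‖y' - z‖ + ‖y - y'‖) := mul_le_mul_of_nonneg_left h2 hL
  have h4 : L * (‖y' - z‖ + ‖y - y'‖) = L * ‖y' - z‖ + L * ‖y - y'‖ := by ring
  linarith

lemma extF_convexOn (hM : ∀ z ∈ cube d, |ψ z| ≤ M) (hL : 0 ≤ L)
    (hcv : ConvexOn ℝ (cube d) ψ) : ConvexOn ℝ Set.univ (extF ψ L) := by
  refine ⟨convex_univ, ?_⟩
  intro y₁ _ y₂ _ a b ha hb hab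
  refine le_of_forall_pos_le_add fun ε hε => ?_
  obtain ⟨r₁, ⟨z₁, hz₁, hr₁⟩, hlt₁⟩ := exists_lt_of_csInf_lt (extF_img_nonempty y₁)
    (lt_add_of_pos_right (extF ψ L y₁) (half_pos hε))
  obtain ⟨r₂, ⟨z₂, hz₂, hr₂⟩, hlt₂⟩ := exists_lt_of_csInf_lt (extF_img_nonempty y₂)
    (lt_add_of_pos_right (extF ψ L y₂) (half_pos hε))
  have hzc : a•z₁ + b•z₂ ∈ cube d := (convex_Icc (0 : Fin d → ℝ) 1) hz₁ hz₂ ha hb hab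
  have h1 : extF ψ L (a•y₁ + b•y₂) ≤ ψ (a•z₁ + b•z₂) + L * ‖(a•y₁ + b•y₂) - (a•z₁ + b•z₂)‖ :=
    extF_le hM hL hzc _
  have h2 : ψ (a•z₁ + b•z₂) ≤ a * ψ z₁ + b * ψ z₂ := by
    have := hcv.2 hz₁ hz₂ ha hb hab
    simpa using this
  have harg : (a•y₁ + b•y₂) - (a•z₁ + b•z₂) = a•(y₁ - z₁) + b•(y₂ - z₂) := by
    funext i
    simp only [Pi.add_apply, Pi.sub_apply, Pi.smul_apply, smul_eq_mul]
    ring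
  have h3 : ‖(a•y₁ + b•y₂) - (a•z₁ + b•z₂)‖ ≤ a * ‖y₁ - z₁‖ + b * ‖y₂ - z₂‖ := by
    rw [harg]
    calc ‖a•(y₁ - z₁) + b•(y₂ - z₂)‖ ≤ ‖a•(y₁ - z₁)‖ + ‖b•(y₂ - z₂)‖ := norm_add_le _ _
    _ = a * ‖y₁ - z₁‖ + b * ‖y₂ - z₂‖ := by
        rw [norm_smul, norm_smul, Real.norm_eq_abs, Real.norm_eq_abs, abs_of_nonneg ha,
          abs_of_nonneg hb]
  have h4 : L * ‖(a•y₁ + b•y₂) - (a•z₁ + b•z₂)‖ ≤ L * (a * ‖y₁ - z₁‖ + b * ‖y₂ - z₂‖) :=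
    mul_le_mul_of_nonneg_left h3 hL
  have h5 : a * r₁ + b * r₂ ≤ a * (extF ψ L y₁ + ε/2) + b * (extF ψ L y₂ + ε/2) := by
    apply add_le_add
    · exact mul_le_mul_of_nonneg_left hlt₁.le ha
    · exact mul_le_mul_of_nonneg_left hlt₂.le hb
  rw [← hr₁, ← hr₂] at h5
  have h6 : a * (extF ψ L y₁ + ε/2) + b * (extF ψ L y₂ + ε/2)
      = a * extF ψ L y₁ + b * extF ψ L y₂ + ε/2 := by
    have : a + b = 1 := hab
    nlinarith [this]
  calc extF ψ L (a•y₁ + b•y₂) ≤ ψ (a•z₁ + b•z₂) + L * ‖(a•y₁ + b•y₂) - (a•z₁ + b•z₂)‖ := h1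
  _ ≤ a * ψ z₁ + b * ψ z₂ + L * (a * ‖y₁ - z₁‖ + b * ‖y₂ - z₂‖) := by linarith
  _ = a * (ψ z₁ + L * ‖y₁ - z₁‖) + b * (ψ z₂ + L * ‖y₂ - z₂‖) := by ring
  _ ≤ a * extF ψ L y₁ + b * extF ψ L y₂ + ε/2 := by linarith
  _ ≤ a * extF ψ L y₁ + b * extF ψ L y₂ + ε := by linarith

end Approx


section Moreau

variable {d : ℕ} {F : (Fin d → ℝ) → ℝ} {L M lam : ℝ}

/-- Moreau–Yosida envelope (with the coordinate quadratic `Qd`). -/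
noncomputable def mor (F : (Fin d → ℝ) → ℝ) (lam : ℝ) (x : Fin d → ℝ) : ℝ :=
  sInf (Set.range fun y => F y + Qd (y - x)/(2*lam))

lemma mor_bdd (hlb : ∀ y, -M ≤ F y) (hlam : 0 < lam) (x : Fin d → ℝ) :
    BddBelow (Set.range fun y => F y + Qd (y - x)/(2*lam)) := by
  refine ⟨-M, ?_⟩
  rintro r ⟨y, rfl⟩
  dsimp only
  have h1 := hlb y
  have h2 : 0 ≤ Qd (y - x)/(2*lam) := div_nonneg (Qd_nonneg _) (by linarith)
  linarith

lemma mor_le (hlb : ∀ y, -M ≤ F y) (hlam : 0 < lam) (x y : Fin d → ℝ) :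
    mor F lam x ≤ F y + Qd (y - x)/(2*lam) :=
  csInf_le (mor_bdd hlb hlam x) ⟨y, rfl⟩

lemma mor_le_self (hlb : ∀ y, -M ≤ F y) (hlam : 0 < lam) (x : Fin d → ℝ) :
    mor F lam x ≤ F x := by
  have := mor_le hlb hlam x x
  simpa [Qd_zero] using this

lemma mor_lb (hlb : ∀ y, -M ≤ F y) (hlam : 0 < lam) (hL : 0 ≤ L)
    (hFlip : ∀ y y', F y ≤ F y' + L * ‖y - y'‖) (x : Fin d → ℝ) :
    F x - L^2*lam/2 ≤ mor F lam x := by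
  apply le_csInf (Set.range_nonempty _)
  rintro r ⟨y, rfl⟩
  dsimp only
  set r' := ‖x - y‖ with hr'
  have hr0 : 0 ≤ r' := norm_nonneg _
  have h1 : F x ≤ F y + L * r' := hFlip x y
  have h2 : r'^2 ≤ Qd (y - x) := by
    rw [hr', ← norm_neg (x - y), neg_sub]
    exact sq_norm_le_Qd (y - x)
  have h3 : r'^2/(2*lam) ≤ Qd (y - x)/(2*lam) :=
    (div_le_div_iff_of_pos_right (show (0:ℝ) < 2*lam by linarith)).mpr h2
  have e : -(L*r') + r'^2/(2*lam) - (-(L^2*lam)/2) = (r' - L*lam)^2/(2*lam) := by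
    field_simp
    ring
  have h4 : 0 ≤ (r' - L*lam)^2/(2*lam) := div_nonneg (sq_nonneg _) (by linarith)
  have h5 : -(L^2*lam)/2 ≤ -(L*r') + r'^2/(2*lam) := by linarith
  have h6 : F x - L^2*lam/2 ≤ F y + r'^2/(2*lam) := by
    have : -(L^2*lam)/2 = -(L^2*lam/2) := by ring
    linarith [this ▸ h5]
  linarith

lemma mor_lip (hlb : ∀ y, -M ≤ F y) (hlam : 0 < lam) (hL : 0 ≤ L)
    (hFlip : ∀ y y', F y ≤ F y' + L * ‖y - y'‖) (x x' : Fin d → ℝ) :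
    mor F lam x ≤ mor F lam x' + L * ‖x - x'‖ := by
  rw [← sub_le_iff_le_add]
  apply le_csInf (Set.range_nonempty _)
  rintro r ⟨y, rfl⟩
  dsimp only
  rw [sub_le_iff_le_add]
  have h1 : mor F lam x ≤ F (y + (x - x')) + Qd ((y + (x - x')) - x)/(2*lam) :=
    mor_le hlb hlam x _
  have harg : (y + (x - x')) - x = y - x' := by abel
  rw [harg] at h1
  have h2 : F (y + (x - x')) ≤ F y + L * ‖x - x'‖ := by
    have := hFlip (y + (x - x')) y
    rwa [add_sub_cancel_left] at this
  linarith

lemma mor_convexOn (hlb : ∀ y, -M ≤ F y) (hlam : 0 < lam)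
    (hFcv : ConvexOn ℝ Set.univ F) : ConvexOn ℝ Set.univ (mor F lam) := by
  refine ⟨convex_univ, ?_⟩
  intro x₁ _ x₂ _ a b ha hb hab
  refine le_of_forall_pos_le_add fun ε hε => ?_
  obtain ⟨r₁, ⟨y₁, hr₁⟩, hlt₁⟩ := exists_lt_of_csInf_lt (Set.range_nonempty _)
    (lt_add_of_pos_right (mor F lam x₁) (half_pos hε))
  obtain ⟨r₂, ⟨y₂, hr₂⟩, hlt₂⟩ := exists_lt_of_csInf_lt (Set.range_nonempty _)
    (lt_add_of_pos_right (mor F lam x₂) (half_pos hε))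
  dsimp only at hr₁ hr₂
  rw [← hr₁] at hlt₁
  rw [← hr₂] at hlt₂
  have h1 : mor F lam (a•x₁ + b•x₂) ≤ F (a•y₁ + b•y₂)
      + Qd ((a•y₁ + b•y₂) - (a•x₁ + b•x₂))/(2*lam) := mor_le hlb hlam _ _
  have h2 : F (a•y₁ + b•y₂) ≤ a * F y₁ + b * F y₂ := by
    have := hFcv.2 (Set.mem_univ y₁) (Set.mem_univ y₂) ha hb hab
    simpa using this
  have harg : (a•y₁ + b•y₂) - (a•x₁ + b•x₂) = a•(y₁ - x₁) + b•(y₂ - x₂) := by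
    funext i
    simp only [Pi.add_apply, Pi.sub_apply, Pi.smul_apply, smul_eq_mul]
    ring
  have h3 : Qd ((a•y₁ + b•y₂) - (a•x₁ + b•x₂)) ≤ a * Qd (y₁ - x₁) + b * Qd (y₂ - x₂) := by
    rw [harg]
    exact Qd_comb ha hb hab _ _
  have h4 : Qd ((a•y₁ + b•y₂) - (a•x₁ + b•x₂))/(2*lam)
      ≤ (a * Qd (y₁ - x₁) + b * Qd (y₂ - x₂))/(2*lam) :=
    (div_le_div_iff_of_pos_right (show (0:ℝ) < 2*lam by linarith)).mpr h3
  have h5 : (a * Qd (y₁ - x₁) + b * Qd (y₂ - x₂))/(2*lam)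
      = a * (Qd (y₁ - x₁)/(2*lam)) + b * (Qd (y₂ - x₂)/(2*lam)) := by
    field_simp
  have h6 : a * (F y₁ + Qd (y₁ - x₁)/(2*lam)) ≤ a * (mor F lam x₁ + ε/2) :=
    mul_le_mul_of_nonneg_left hlt₁.le ha
  have h7 : b * (F y₂ + Qd (y₂ - x₂)/(2*lam)) ≤ b * (mor F lam x₂ + ε/2) :=
    mul_le_mul_of_nonneg_left hlt₂.le hb
  have h8 : a * (mor F lam x₁ + ε/2) + b * (mor F lam x₂ + ε/2)
      = a * mor F lam x₁ + b * mor F lam x₂ + ε/2 := by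
    nlinarith [hab]
  simp only [smul_eq_mul]
  nlinarith [h1, h2, h4, h5, h6, h7, h8]

lemma mor_sd (hlb : ∀ y, -M ≤ F y) (hlam : 0 < lam) (x u : Fin d → ℝ) :
    sd (mor F lam) x u ≤ Qd u / lam := by
  simp only [sd]
  rw [show mor F lam (x + u) + mor F lam (x - u) - 2 * mor F lam x ≤ Qd u / lam ↔
    (mor F lam (x + u) + mor F lam (x - u) - Qd u / lam)/2 ≤ mor F lam x by constructor <;>
      (intro h; linarith)]
  apply le_csInf (Set.range_nonempty _)
  rintro r ⟨y, rfl⟩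
  dsimp only
  have h1 : mor F lam (x + u) ≤ F y + Qd ((y - x) - u)/(2*lam) := by
    have := mor_le hlb hlam (x + u) y
    have harg : y - (x + u) = (y - x) - u := by abel
    rwa [harg] at this
  have h2 : mor F lam (x - u) ≤ F y + Qd ((y - x) + u)/(2*lam) := by
    have := mor_le hlb hlam (x - u) y
    have harg : y - (x - u) = (y - x) + u := by abel
    rwa [harg] at this
  have hpar := Qd_par (y - x) u
  have hlam' : lam ≠ 0 := hlam.ne'
  have e : Qd ((y - x) + u)/(2*lam) + Qd ((y - x) - u)/(2*lam)
      = 2*(Qd (y - x)/(2*lam)) + Qd u/lam := by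
    rw [← add_div, hpar]
    field_simp
  linarith

lemma mor_continuous (hlb : ∀ y, -M ≤ F y) (hlam : 0 < lam) (hL : 0 ≤ L)
    (hFlip : ∀ y y', F y ≤ F y' + L * ‖y - y'‖) : Continuous (mor F lam) := by
  have hlip : LipschitzWith (Real.toNNReal L) (mor F lam) := by
    apply LipschitzWith.of_dist_le_mul
    intro x y
    rw [Real.dist_eq, abs_le]
    have h1 := mor_lip hlb hlam hL hFlip x y
    have h2 := mor_lip hlb hlam hL hFlip y x
    rw [Real.coe_toNNReal L hL]
    rw [dist_eq_norm]
    constructor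
    · have : ‖y - x‖ = ‖x - y‖ := norm_sub_rev y x
      rw [this] at h2
      linarith
    · linarith
  exact hlip.continuous

end Moreau


section Density

variable {d : ℕ}

set_option maxHeartbeats 1000000 in
lemma dense_Gset (d n : ℕ) : Dense (Gset d n) := by
  rw [Metric.dense_iff]
  intro f r hr
  set φ := phiExt f.1 with hφdef
  have hφc : Continuous φ := phiExt_continuous f.1
  have hφcv : ConvexOn ℝ (cube d) φ := phiExt_convexOn f.2
  set M := ‖f.1‖ + 1 with hMdef
  have hMpos : 0 < M := by
    have := norm_nonneg f.1; rw [hMdef]; linarith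
  have hφM : ∀ z : Fin d → ℝ, |φ z| ≤ M := by
    intro z
    have h1 : ‖f.1 ⟨clampPt z, clampPt_mem z⟩‖ ≤ ‖f.1‖ := f.1.norm_coe_le_norm _
    rw [Real.norm_eq_abs] at h1
    rw [hφdef]
    simp only [phiExt]
    rw [hMdef]
    linarith
  -- uniform continuity of φ on the cube
  have hunif := (isCompact_Icc : IsCompact (cube d)).uniformContinuousOn_of_continuous
    hφc.continuousOn
  rw [Metric.uniformContinuousOn_iff] at hunif
  obtain ⟨ρ, hρ, hρval⟩ := hunif (r/4) (by linarith)
  set b := (min ρ 1)/8 with hbdef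
  have hb : 0 < b := by
    rw [hbdef]; have := lt_min hρ one_pos; positivity
  have hb1 : b ≤ 1/8 := by
    rw [hbdef]
    have : min ρ 1 ≤ 1 := min_le_right _ _
    linarith
  have hbρ : b < ρ := by
    rw [hbdef]
    have : min ρ 1 ≤ ρ := min_le_left _ _
    linarith
  set θ := 1 - 2*b with hθdef
  have hθ0 : 0 < θ := by rw [hθdef]; linarith
  have hθ1 : θ < 1 := by rw [hθdef]; linarith
  set cc : Fin d → ℝ := fun _ => 1/2 with hccdef
  set A : (Fin d → ℝ) → (Fin d → ℝ) := fun x => cc + θ•(x - cc) with hAdef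
  set Big : Set (Fin d → ℝ) := Set.Icc (fun _ => -b) (fun _ => 1+b) with hBigdef
  have hmem_Big : ∀ x : Fin d → ℝ, x ∈ Big ↔ ∀ i, -b ≤ x i ∧ x i ≤ 1+b := by
    intro x
    rw [hBigdef]
    simp [Set.mem_Icc, Pi.le_def, forall_and]
  have hcube_Big : cube d ⊆ Big := by
    intro x hx
    rw [mem_cube_iff] at hx
    rw [hmem_Big]
    intro i
    have := hx i
    constructor <;> linarith
  have hmap : ∀ x ∈ Big, A x ∈ cube d := by
    intro x hx
    rw [hmem_Big] at hx
    rw [mem_cube_iff]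
    intro i
    have h1 := (hx i).1
    have h2 := (hx i).2
    rw [hAdef]
    simp only [Pi.add_apply, Pi.smul_apply, Pi.sub_apply, smul_eq_mul, hccdef, hθdef]
    constructor <;> nlinarith
  set ψ : (Fin d → ℝ) → ℝ := fun x => φ (A x) with hψdef
  have hψcv : ConvexOn ℝ Big ψ := by
    refine ⟨convex_Icc _ _, ?_⟩
    intro x hx y hy a a' ha ha' haa
    have hptA : A (a•x + a'•y) = a•(A x) + a'•(A y) := by
      funext i
      rw [hAdef]
      simp only [Pi.add_apply, Pi.smul_apply, Pi.sub_apply, smul_eq_mul, hccdef]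
      nlinarith [haa]
    rw [hψdef]
    simp only
    rw [hptA]
    exact hφcv.2 (hmap x hx) (hmap y hy) ha ha' haa
  have hψM : ∀ z ∈ Big, |ψ z| ≤ M := fun z _ => hφM _
  have hψMc : ∀ z ∈ cube d, |ψ z| ≤ M := fun z _ => hφM _
  -- ψ is close to φ on the cube
  have hψφ : ∀ x ∈ cube d, |ψ x - φ x| ≤ r/4 := by
    intro x hx
    have hAx : A x ∈ cube d := hmap x (hcube_Big hx)
    have hdistA : dist (A x) x < ρ := by
      rw [dist_eq_norm]
      have harg : A x - x = (θ - 1)•(x - cc) := by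
        funext i
        rw [hAdef]
        simp only [Pi.add_apply, Pi.smul_apply, Pi.sub_apply, smul_eq_mul, hccdef]
        ring
      rw [harg, norm_smul, Real.norm_eq_abs]
      have habs : |θ - 1| = 1 - θ := by rw [abs_of_neg (by linarith)]; ring
      have hnxc : ‖x - cc‖ ≤ 1/2 := by
        rw [pi_norm_le_iff_of_nonneg (by norm_num)]
        intro i
        rw [mem_cube_iff] at hx
        have := hx i
        rw [Real.norm_eq_abs, Pi.sub_apply, hccdef, abs_le]
        constructor <;> simp <;> linarith [(hx i).1, (hx i).2]
      rw [habs, hθdef]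
      calc (1 - (1 - 2*b)) * ‖x - cc‖ ≤ 2*b * (1/2) := by
            nlinarith [norm_nonneg (x - cc)]
      _ < ρ := by linarith
    have := hρval (A x) hAx x hx hdistA
    rw [Real.dist_eq] at this
    rw [hψdef]
    simp only
    linarith [abs_le.mp this.le]
  -- Lipschitz constant for ψ on the cube
  set L := 4*M/b with hLdef
  have hL0 : 0 ≤ L := by rw [hLdef]; positivity
  have hψlip : ∀ x ∈ cube d, ∀ y ∈ cube d, |ψ y - ψ x| ≤ L * ‖y - x‖ := by
    have hK : ∀ y ∈ cube d, ∀ z : Fin d → ℝ, ‖z - y‖ ≤ b → z ∈ Big := by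
      intro y hy z hz
      rw [mem_cube_iff] at hy
      rw [hmem_Big]
      intro i
      have h1 := hy i
      have h2 : |z i - y i| ≤ ‖z - y‖ := by
        have := norm_le_pi_norm (z - y) i; simpa using this
      have := abs_le.mp (h2.trans hz)
      constructor <;> linarith
    have hlips := convex_lipschitz hψcv hb hψM hK
    intro x hx y hy
    rw [abs_le]
    constructor
    · have := hlips y hy x hx
      rw [show ‖x - y‖ = ‖y - x‖ from norm_sub_rev x y] at this
      rw [hLdef]
      linarith
    · exact hLdef ▸ hlips x hx y hy
  -- the extension and its Moreau envelope
  set Ψ := extF ψ L with hΨdef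
  have hΨlb : ∀ y, -M ≤ Ψ y := fun y => extF_lb hψMc hL0 y
  have hΨlip : ∀ y y', Ψ y ≤ Ψ y' + L * ‖y - y'‖ := fun y y' => extF_lip hψMc hL0 y y'
  have hΨcv : ConvexOn ℝ Set.univ Ψ :=
    extF_convexOn hψMc hL0 (hψcv.subset hcube_Big (convex_Icc _ _))
  have hΨeq : ∀ y ∈ cube d, Ψ y = ψ y := fun y hy => extF_eq hψMc hL0 hψlip hy
  set lam := r/(2*(L^2+1)) with hlamdef
  have hlam : 0 < lam := by rw [hlamdef]; positivity
  set h := mor Ψ lam with hhdef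
  have hub : ∀ x, h x ≤ Ψ x := fun x => mor_le_self hΨlb hlam x
  have hlb : ∀ x, Ψ x - L^2*lam/2 ≤ h x := fun x => mor_lb hΨlb hlam hL0 hΨlip x
  have hcvh : ConvexOn ℝ Set.univ h := mor_convexOn hΨlb hlam hΨcv
  have hsdh : ∀ x u, sd h x u ≤ Qd u / lam := fun x u => mor_sd hΨlb hlam x u
  have hconth : Continuous h := mor_continuous hΨlb hlam hL0 hΨlip
  have hlamr : L^2*lam/2 ≤ r/4 := by
    have hpos : (0:ℝ) < L^2+1 := by positivity
    have e : L^2*lam/2 = (L^2/(L^2+1)) * (r/4) := by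
      rw [hlamdef]; field_simp; ring
    have h1 : L^2/(L^2+1) ≤ 1 := by
      rw [div_le_one hpos]; linarith [sq_nonneg L]
    rw [e]
    calc (L^2/(L^2+1)) * (r/4) ≤ 1 * (r/4) := mul_le_mul_of_nonneg_right h1 (by linarith)
    _ = r/4 := one_mul _
  -- the approximating element of CCSpace
  set g : CCSpace d := ⟨⟨fun p => h p.1, hconth.comp continuous_subtype_val⟩,
    convexMap_of_convexOn hcvh _ (fun p => rfl)⟩ with hgdef
  have hclose : ∀ z ∈ cube d, |h z - φ z| ≤ r/2 := by
    intro z hz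
    have h1 := hub z
    have h2 := hlb z
    have h3 := hΨeq z hz
    have h4 := abs_le.mp (hψφ z hz)
    rw [h3] at h1 h2
    rw [abs_le]
    constructor <;> linarith [h4.1, h4.2]
  have hdistgf : dist g f < r := by
    rw [Subtype.dist_eq]
    have hle : dist g.1 f.1 ≤ r/2 := by
      rw [ContinuousMap.dist_le (by linarith)]
      intro p
      have hp : (p : Fin d → ℝ) ∈ cube d := p.2
      have := hclose p hp
      rw [Real.dist_eq]
      have hfp : φ p = f.1 p := by
        rw [hφdef, phiExt_eq f.1 hp]
      rw [hgdef]
      simp only [ContinuousMap.coe_mk]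
      rw [← hfp]
      exact this
    linarith
  refine ⟨g, Metric.mem_ball.mpr hdistgf, ?_⟩
  -- membership in Gset d n
  set δ := min (al n) (lam/((n+1)*(d+1))) with hδdef
  have hδ : 0 < δ := by
    rw [hδdef]
    apply lt_min (al_pos n)
    positivity
  have hδa : δ ≤ al n := min_le_left _ _
  refine ⟨δ, hδ, hδa, ?_⟩
  intro x hx u hu
  have hxc : x ∈ cube d := Kn_subset_cube hx
  have hpu : x + u ∈ cube d := Kn_margin hx (hu.trans hδa)
  have hmu : x - u ∈ cube d := Kn_margin' hx (hu.trans hδa)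
  have hext : ∀ z ∈ cube d, phiExt g.1 z = h z := by
    intro z hz
    rw [phiExt_eq g.1 hz, hgdef]
    rfl
  have hsd_eq : sd (phiExt g.1) x u = sd h x u := by
    simp only [sd]
    rw [hext _ hpu, hext _ hmu, hext _ hxc]
  rw [hsd_eq]
  have h1 : sd h x u ≤ Qd u / lam := hsdh x u
  have h2 : Qd u ≤ d * ‖u‖^2 := Qd_le u
  have h3 : d * ‖u‖^2 ≤ d * δ^2 := by
    apply mul_le_mul_of_nonneg_left _ (Nat.cast_nonneg d)
    nlinarith [norm_nonneg u]
  have hδlam : δ ≤ lam/((n+1)*(d+1)) := min_le_right _ _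
  have hfin : (d:ℝ) * δ^2 / lam < δ/(n+1) := by
    rw [div_lt_div_iff₀ hlam (by positivity)]
    have hd1 : (d:ℝ) * (n+1) < (n+1)*(d+1) := by
      push_cast
      nlinarith [Nat.cast_nonneg (α := ℝ) d, Nat.cast_nonneg (α := ℝ) n]
    have h5 : δ * ((n+1)*(d+1)) ≤ lam := by
      rw [← le_div_iff₀ (by positivity)]
      exact hδlam
    nlinarith [hδ, hlam, Nat.cast_nonneg (α := ℝ) d, Nat.cast_nonneg (α := ℝ) n]
  calc sd h x u ≤ Qd u / lam := h1
  _ ≤ (d:ℝ) * δ^2 / lam := by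
      apply (div_le_div_iff_of_pos_right hlam).mpr
      linarith
  _ < δ/(n+1) := hfin

end Density


section Final

variable {d : ℕ}

lemma isClosed_CC (d : ℕ) :
    IsClosed {f : C(Set.Icc (0 : Fin d → ℝ) 1, ℝ) | IsConvexMapOnCube f} := by
  have heq : {f : C(Set.Icc (0 : Fin d → ℝ) 1, ℝ) | IsConvexMapOnCube f} =
      ⋂ (x : Set.Icc (0 : Fin d → ℝ) 1), ⋂ (y : Set.Icc (0 : Fin d → ℝ) 1),
      ⋂ (z : Set.Icc (0 : Fin d → ℝ) 1), ⋂ (s : ℝ), ⋂ (t : ℝ),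
      {f : C(Set.Icc (0 : Fin d → ℝ) 1, ℝ) | 0 ≤ s → 0 ≤ t → s + t = 1 →
        (z : Fin d → ℝ) = s • (x : Fin d → ℝ) + t • (y : Fin d → ℝ) →
        f z ≤ s * f x + t * f y} := by
    ext f
    simp only [Set.mem_setOf_eq, Set.mem_iInter, IsConvexMapOnCube]
  rw [heq]
  refine isClosed_iInter fun x => isClosed_iInter fun y => isClosed_iInter fun z =>
    isClosed_iInter fun s => isClosed_iInter fun t => ?_
  by_cases hs : (0:ℝ) ≤ s
  swap
  · convert isClosed_univ
    ext f; simp [hs]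
  by_cases ht : (0:ℝ) ≤ t
  swap
  · convert isClosed_univ
    ext f; simp [hs, ht]
  by_cases hst : s + t = 1
  swap
  · convert isClosed_univ
    ext f; simp [hs, ht, hst]
  by_cases hz : (z : Fin d → ℝ) = s • (x : Fin d → ℝ) + t • (y : Fin d → ℝ)
  swap
  · convert isClosed_univ
    ext f; simp [hs, ht, hst, hz]
  have heq2 : {f : C(Set.Icc (0 : Fin d → ℝ) 1, ℝ) | 0 ≤ s → 0 ≤ t → s + t = 1 →
      (z : Fin d → ℝ) = s • (x : Fin d → ℝ) + t • (y : Fin d → ℝ) →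
      f z ≤ s * f x + t * f y} =
      {f : C(Set.Icc (0 : Fin d → ℝ) 1, ℝ) | f z ≤ s * f x + t * f y} := by
    ext f; simp [hs, ht, hst, hz]
  rw [heq2]
  apply isClosed_le
  · exact continuous_eval_const z
  · exact (continuous_const.mul (continuous_eval_const x)).add
      (continuous_const.mul (continuous_eval_const y))

instance : CompleteSpace (CCSpace d) := (isClosed_CC d).completeSpace_coe

end Final

end GCD

open GCD

theorem generic_convex_continuously_differentiable (d : ℕ) :
    ∃ G : Set (CCSpace d), Dense G ∧ IsGδ G ∧
      ∀ f ∈ G, ∀ F : (Fin d → ℝ) → ℝ,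
        (∀ x : Set.Icc (0 : Fin d → ℝ) 1, F x = f.1 x) →
        ContDiffOn ℝ 1 F {x : Fin d → ℝ | ∀ i, x i ∈ Set.Ioo (0:ℝ) 1} := by
  refine ⟨⋂ n, Gset d n, ?_, ?_, ?_⟩
  · exact dense_iInter_of_isOpen (fun n => isOpen_Gset d n) (fun n => dense_Gset d n)
  · exact IsGδ.iInter fun n => (isOpen_Gset d n).isGδ
  · intro f hf F hF
    rw [Set.mem_iInter] at hf
    set φ := phiExt f.1 with hφdef
    have hφc : Continuous φ := phiExt_continuous f.1
    have hφcv : ConvexOn ℝ (cube d) φ := phiExt_convexOn f.2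
    have hKey : ∀ n : ℕ, ∃ δ : ℝ, 0 < δ ∧ δ ≤ al n ∧
        ∀ z ∈ Kn d n, ∀ h : Fin d → ℝ, ‖h‖ ≤ δ → sd φ z h ≤ ‖h‖/(n+1) := by
      intro n
      obtain ⟨δ, hδ, hδa, hsd⟩ := hf n
      exact ⟨δ, hδ, hδa, sd_prop hφcv hδ hδa (fun x hx u hu => (hsd x hx u hu).le)⟩
    obtain ⟨hLcont, hLderiv⟩ := core hφcv hφc hKey
    intro x hx
    have hx' : x ∈ opc d := hx
    apply ContDiffWithinAt.mono_of_mem_nhdsWithin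
      (s := {x : Fin d → ℝ | ∀ i, x i ∈ Set.Ioo (0:ℝ) 1})
    swap
    · exact self_mem_nhdsWithin
    apply ContDiffAt.contDiffWithinAt
    rw [contDiffAt_one_iff]
    refine ⟨Dlin φ, opc d, (isOpen_opc (d := d)).mem_nhds hx', hLcont, ?_⟩
    intro y hy
    have hD := hLderiv y hy
    apply hD.congr_of_eventuallyEq
    apply Filter.eventuallyEq_of_mem ((isOpen_opc (d := d)).mem_nhds hy)
    intro z hz
    have hzc : z ∈ cube d := opc_subset_cube hz
    rw [hF ⟨z, hzc⟩, hφdef, phiExt_eq f.1 hzc]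
end
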